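/- arXiv:1304.5404 — 12 statements merged into one kernel-verified Lean document; each statement's English description precedes it below -/
import Mathlib

section
/- Let A be a d×d real Metzler matrix (all off-diagonal entries nonnegative). Then A is Hurwitz-stable if and only if there exist a real number z > 0 and a vector v ∈ ℝ^d with v_i > 0 for every i such that ((z·I + A) v)_i ≤ 0 for every i, where I is the d×d identity matrix. -/
/-- A real square matrix is Metzler if all its off-diagonal entries are nonnegative. -/
def Matrix.Metzler {d : ℕ} (A : Matrix (Fin d) (Fin d) ℝ) : Prop :=
  ∀ i j, i ≠ j → 0 ≤ A i j

/-- A real square matrix is Hurwitz-stable if all its complex eigenvalues have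
strictly negative real part. -/
def Matrix.HurwitzStable {d : ℕ} (A : Matrix (Fin d) (Fin d) ℝ) : Prop :=
  ∀ μ ∈ spectrum ℂ (A.map (Complex.ofReal)), μ.re < 0


set_option maxHeartbeats 1000000

open Matrix Finset

attribute [local instance] Matrix.linftyOpNormedRing Matrix.linftyOpNormedAlgebra

namespace MetzlerHurwitzAux

variable {d : ℕ}

/-- Entrywise nonnegativity of a matrix. -/
def Nonneg (M : Matrix (Fin d) (Fin d) ℝ) : Prop := ∀ i j, 0 ≤ M i j

theorem Nonneg.mul {M N : Matrix (Fin d) (Fin d) ℝ} (hM : Nonneg M) (hN : Nonneg N) :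
    Nonneg (M * N) := fun i j => by
  rw [Matrix.mul_apply]
  exact Finset.sum_nonneg fun k _ => mul_nonneg (hM i k) (hN k j)

theorem Nonneg.pow {M : Matrix (Fin d) (Fin d) ℝ} (hM : Nonneg M) : ∀ n, Nonneg (M ^ n)
  | 0 => fun i j => by
      rw [pow_zero, Matrix.one_apply]
      split <;> norm_num
  | (n + 1) => by
      rw [pow_succ]
      exact (Nonneg.pow hM n).mul hM

theorem entry_norm_le (M : Matrix (Fin d) (Fin d) ℝ) (i j : Fin d) : ‖M i j‖ ≤ ‖M‖ := by
  have h1 : ‖M i j‖₊ ≤ ∑ j' : Fin d, ‖M i j'‖₊ :=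
    Finset.single_le_sum (f := fun j' => ‖M i j'‖₊) (fun _ _ => zero_le) (Finset.mem_univ j)
  have h2 : (∑ j' : Fin d, ‖M i j'‖₊) ≤ Finset.univ.sup fun i => ∑ j' : Fin d, ‖M i j'‖₊ :=
    Finset.le_sup (f := fun i => ∑ j' : Fin d, ‖M i j'‖₊) (Finset.mem_univ i)
  have := h1.trans h2
  rw [← Matrix.linfty_opNNNorm_def] at this
  exact_mod_cast this

/-- Evaluation of an entry, as a continuous linear map. -/
noncomputable def entryCLM (i j : Fin d) : Matrix (Fin d) (Fin d) ℝ →L[ℝ] ℝ :=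
  LinearMap.mkContinuous
    { toFun := fun M => M i j
      map_add' := fun _ _ => rfl
      map_smul' := fun _ _ => rfl } 1
    (fun M => by show ‖M i j‖ ≤ 1 * ‖M‖; rw [one_mul]; exact entry_norm_le M i j)

theorem geom_nonneg {M : Matrix (Fin d) (Fin d) ℝ} (hM : Nonneg M) (h : ‖M‖ < 1) :
    Nonneg (∑' n : ℕ, M ^ n) := fun i j => by
  have hs : Summable (fun n : ℕ => M ^ n) := summable_geometric_of_norm_lt_one h
  have hmap : entryCLM i j (∑' n : ℕ, M ^ n) = ∑' n : ℕ, entryCLM i j (M ^ n) :=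
    (entryCLM i j).map_tsum hs
  have : (∑' n : ℕ, M ^ n) i j = ∑' n : ℕ, (M ^ n) i j := hmap
  rw [this]
  exact tsum_nonneg fun n => hM.pow n i j

/-- Neumann series: a nonnegative right inverse of `1 - M` when `‖M‖ < 1`. -/
theorem neumann {M : Matrix (Fin d) (Fin d) ℝ} (hM : Nonneg M) (h : ‖M‖ < 1) :
    ∃ G : Matrix (Fin d) (Fin d) ℝ, Nonneg G ∧ (1 - M) * G = 1 :=
  ⟨∑' n : ℕ, M ^ n, geom_nonneg hM h, mul_neg_geom_series M h⟩


variable {d : ℕ}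

theorem hurwitz_resolvent_det_ne {A : Matrix (Fin d) (Fin d) ℝ}
    (hH : A.HurwitzStable) {s t : ℝ} (hst : s ≤ t) :
    (t • (1 : Matrix (Fin d) (Fin d) ℝ) - (A + s • 1)).det ≠ 0 := by
  intro h0
  set B : Matrix (Fin d) (Fin d) ℝ := A + s • 1 with hB
  have hdetC : ((t • (1 : Matrix (Fin d) (Fin d) ℝ) - B).map (Complex.ofReal)).det = 0 := by
    have : (t • (1 : Matrix (Fin d) (Fin d) ℝ) - B).map (Complex.ofReal)
        = Complex.ofRealHom.mapMatrix (t • (1 : Matrix (Fin d) (Fin d) ℝ) - B) := rfl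
    rw [this, ← RingHom.map_det, h0, map_zero]
  have hC : (t • (1 : Matrix (Fin d) (Fin d) ℝ) - B).map (Complex.ofReal)
      = algebraMap ℂ (Matrix (Fin d) (Fin d) ℂ) (((t - s : ℝ) : ℂ)) - A.map Complex.ofReal := by
    ext i j
    simp only [Matrix.map_apply, Matrix.sub_apply, Matrix.smul_apply, Matrix.one_apply, hB,
      Matrix.add_apply, Algebra.algebraMap_eq_smul_one, smul_eq_mul]
    split_ifs <;> push_cast <;> ring
  have hmem : (((t - s : ℝ)) : ℂ) ∈ spectrum ℂ (A.map Complex.ofReal) := by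
    rw [spectrum.mem_iff, ← hC]
    intro hu
    rw [Matrix.isUnit_iff_isUnit_det, isUnit_iff_ne_zero] at hu
    exact hu hdetC
  have := hH _ hmem
  simp at this
  linarith

/-- The main construction: for a Hurwitz-stable Metzler matrix there is a positive vector `v`
with `A v = -1`. -/
theorem main_mp {A : Matrix (Fin d) (Fin d) ℝ} (hA : A.Metzler) (hH : A.HurwitzStable) :
    ∃ v : Fin d → ℝ, (∀ i, 0 ≤ v i) ∧ ∀ i, (A.mulVec v) i = -1 := by
  classical
  set s : ℝ := 1 + ∑ i, |A i i| with hs_def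
  set B : Matrix (Fin d) (Fin d) ℝ := A + s • 1 with hB_def
  have hBnn : Nonneg B := by
    intro i j
    by_cases h : i = j
    · subst h
      have h1 : |A i i| ≤ ∑ k, |A k k| :=
        Finset.single_le_sum (f := fun k => |A k k|) (fun _ _ => abs_nonneg _) (Finset.mem_univ i)
      have h2 : -A i i ≤ |A i i| := neg_le_abs _
      simp only [hB_def, Matrix.add_apply, Matrix.smul_apply, Matrix.one_apply_eq, smul_eq_mul,
        mul_one]
      linarith
    · simp only [hB_def, Matrix.add_apply, Matrix.smul_apply, Matrix.one_apply_ne h, smul_eq_mul,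
        mul_zero, add_zero]
      exact hA i j h
  have hdet : ∀ t : ℝ, s ≤ t → (t • (1 : Matrix (Fin d) (Fin d) ℝ) - B).det ≠ 0 :=
    fun t ht => hurwitz_resolvent_det_ne hH ht
  set R : ℝ → Matrix (Fin d) (Fin d) ℝ := fun t => (t • (1 : Matrix (Fin d) (Fin d) ℝ) - B)⁻¹
    with hR_def
  have hR : ∀ t : ℝ, s ≤ t → (t • (1 : Matrix (Fin d) (Fin d) ℝ) - B) * R t = 1 :=
    fun t ht => Matrix.mul_nonsing_inv _ (isUnit_iff_ne_zero.mpr (hdet t ht))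
  set T : ℝ := max s (‖B‖ + 1) with hT_def
  have hsT : s ≤ T := le_max_left _ _
  have hBT : ‖B‖ + 1 ≤ T := le_max_right _ _
  have hT0 : 0 < T := lt_of_lt_of_le (by positivity) hBT
  -- R T is nonnegative via Neumann series
  have hRT : Nonneg (R T) := by
    set M : Matrix (Fin d) (Fin d) ℝ := T⁻¹ • B with hM_def
    have hMnn : Nonneg M := fun i j => by
      simpa [hM_def] using mul_nonneg (inv_nonneg.mpr hT0.le) (hBnn i j)
    have hMlt : ‖M‖ < 1 := by
      rw [hM_def, norm_smul]
      have : ‖(T⁻¹ : ℝ)‖ = T⁻¹ := by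
        rw [Real.norm_eq_abs, abs_of_pos (inv_pos.mpr hT0)]
      rw [this]
      rw [inv_mul_lt_iff₀ hT0, mul_one]
      linarith
    obtain ⟨G, hGnn, hG⟩ := neumann hMnn hMlt
    have hfact : T • (1 : Matrix (Fin d) (Fin d) ℝ) - B = T • (1 - M) := by
      rw [smul_sub, hM_def, smul_smul, mul_inv_cancel₀ hT0.ne', one_smul]
    have key : (T • (1 : Matrix (Fin d) (Fin d) ℝ) - B) * (T⁻¹ • G) = 1 := by
      rw [hfact, Matrix.smul_mul, Matrix.mul_smul, smul_smul, mul_inv_cancel₀ hT0.ne', one_smul,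
        hG]
    have : R T = T⁻¹ • G := Matrix.inv_eq_right_inv key
    rw [this]
    intro i j
    simpa using mul_nonneg (inv_nonneg.mpr hT0.le) (hGnn i j)
  -- continuity of the resolvent on [s, T]
  have hcont1 : Continuous fun t : ℝ => t • (1 : Matrix (Fin d) (Fin d) ℝ) - B :=
    (continuous_id.smul continuous_const).sub continuous_const
  have hcontR : ContinuousOn R (Set.Icc s T) := by
    have hRe : ∀ t : ℝ, R t
        = ((t • (1 : Matrix (Fin d) (Fin d) ℝ) - B).det)⁻¹
          • (t • (1 : Matrix (Fin d) (Fin d) ℝ) - B).adjugate := by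
      intro t
      show (t • (1 : Matrix (Fin d) (Fin d) ℝ) - B)⁻¹ = _
      rw [Matrix.inv_def, Ring.inverse_eq_inv]
    have hc : ContinuousOn (fun t : ℝ =>
        ((t • (1 : Matrix (Fin d) (Fin d) ℝ) - B).det)⁻¹
          • (t • (1 : Matrix (Fin d) (Fin d) ℝ) - B).adjugate) (Set.Icc s T) := by
      refine ContinuousOn.smul (f := fun t : ℝ => ((t • (1 : Matrix (Fin d) (Fin d) ℝ) - B).det)⁻¹)
        (g := fun t : ℝ => (t • (1 : Matrix (Fin d) (Fin d) ℝ) - B).adjugate) ?_ ?_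
      · exact ContinuousOn.inv₀ hcont1.matrix_det.continuousOn fun t ht => hdet t ht.1
      · exact hcont1.matrix_adjugate.continuousOn
    exact hc.congr fun t _ => hRe t
  -- the closed set where the resolvent is nonnegative
  set K : Set (Matrix (Fin d) (Fin d) ℝ) := {M | ∀ i j, 0 ≤ M i j} with hK_def
  have hKclosed : IsClosed K := by
    have : K = ⋂ (i : Fin d) (j : Fin d), {M : Matrix (Fin d) (Fin d) ℝ | 0 ≤ M i j} := by
      ext M; simp [hK_def, Set.mem_iInter]
    rw [this]
    exact isClosed_iInter fun i => isClosed_iInter fun j =>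
      isClosed_le continuous_const ((continuous_apply j).comp (continuous_apply i))
  set S : Set ℝ := Set.Icc s T ∩ R ⁻¹' K with hS_def
  have hSclosed : IsClosed S := hcontR.preimage_isClosed_of_isClosed isClosed_Icc hKclosed
  have hTS : T ∈ S := ⟨⟨hsT, le_refl T⟩, hRT⟩
  have hbdd : BddBelow S := ⟨s, fun x hx => hx.1.1⟩
  set c : ℝ := sInf S with hc_def
  have hcS : c ∈ S := hSclosed.csInf_mem ⟨T, hTS⟩ hbdd
  have hsc : s ≤ c := hcS.1.1
  have hcT : c ≤ T := hcS.1.2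
  have hcle : ∀ x ∈ S, c ≤ x := fun x hx => csInf_le hbdd hx
  clear_value c
  have hcs_eq : c = s := by
    rcases eq_or_lt_of_le hsc with h | h
    · exact h.symm
    · exfalso
      set ε : ℝ := min ((c - s) / 2) (1 / (2 * (‖R c‖ + 1))) with hε_def
      have hRc0 : (0 : ℝ) ≤ ‖R c‖ := norm_nonneg _
      have hε0 : 0 < ε := lt_min (by linarith) (by positivity)
      set t : ℝ := c - ε with ht_def
      have hεle : ε ≤ (c - s) / 2 := min_le_left _ _
      have hts : s ≤ t := by rw [ht_def]; linarith
      have htc : t < c := by rw [ht_def]; linarith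
      have htT : t ≤ T := le_of_lt (lt_of_lt_of_le htc hcT)
      have hct : c - t = ε := by rw [ht_def]; ring
      clear_value t
      set M : Matrix (Fin d) (Fin d) ℝ := ε • R c with hM_def
      have hMnn : Nonneg M := fun i j => by
        simp only [hM_def, Matrix.smul_apply, smul_eq_mul]
        exact mul_nonneg hε0.le (hcS.2 i j)
      have hMlt : ‖M‖ < 1 := by
        rw [hM_def, norm_smul, Real.norm_eq_abs, abs_of_pos hε0]
        have h1 : ε ≤ 1 / (2 * (‖R c‖ + 1)) := min_le_right _ _
        have h2 : ε * ‖R c‖ ≤ 1 / (2 * (‖R c‖ + 1)) * ‖R c‖ :=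
          mul_le_mul_of_nonneg_right h1 hRc0
        have h3 : 1 / (2 * (‖R c‖ + 1)) * ‖R c‖ < 1 := by
          rw [div_mul_eq_mul_div, one_mul, div_lt_one (by positivity)]
          nlinarith
        linarith
      obtain ⟨G, hGnn, hG⟩ := neumann hMnn hMlt
      have h1 : (c • (1 : Matrix (Fin d) (Fin d) ℝ) - B) * R c = 1 := hR c hsc
      have h2 : t • (1 : Matrix (Fin d) (Fin d) ℝ) - B
          = (c • (1 : Matrix (Fin d) (Fin d) ℝ) - B) * (1 - M) := by
        rw [Matrix.mul_sub, Matrix.mul_one, hM_def, Matrix.mul_smul, h1, ← hct, sub_smul]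
        abel
      have key : (t • (1 : Matrix (Fin d) (Fin d) ℝ) - B) * (G * R c) = 1 := by
        rw [h2, Matrix.mul_assoc, ← Matrix.mul_assoc (1 - M) G (R c), hG, Matrix.one_mul, h1]
      have hRt : R t = G * R c := Matrix.inv_eq_right_inv key
      have htS : t ∈ S := by
        refine ⟨⟨hts, htT⟩, ?_⟩
        show R t ∈ K
        rw [hRt]
        exact hGnn.mul fun i j => hcS.2 i j
      have := hcle t htS
      linarith
  have hsS : s ∈ S := hcs_eq ▸ hcS
  have hRs : ∀ i j, 0 ≤ R s i j := hsS.2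
  refine ⟨(R s).mulVec (fun _ => 1), ?_, ?_⟩
  · intro i
    simp only [Matrix.mulVec, dotProduct, mul_one]
    exact Finset.sum_nonneg fun j _ => hRs i j
  · have hmv : (s • (1 : Matrix (Fin d) (Fin d) ℝ) - B).mulVec ((R s).mulVec (fun _ => 1))
        = fun _ => 1 := by
      rw [Matrix.mulVec_mulVec, hR s le_rfl, Matrix.one_mulVec]
    have hneg : -(s • (1 : Matrix (Fin d) (Fin d) ℝ) - B) = A := by
      rw [hB_def]
      abel
    have hAB : A.mulVec ((R s).mulVec (fun _ => 1))
        = -((s • (1 : Matrix (Fin d) (Fin d) ℝ) - B).mulVec ((R s).mulVec (fun _ => 1))) := by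
      conv_lhs => rw [← hneg]
      rw [Matrix.neg_mulVec]
    intro i
    rw [hAB, hmv]
    rfl


theorem main_mpr {A : Matrix (Fin d) (Fin d) ℝ} (hA : A.Metzler)
    (h : ∃ z : ℝ, 0 < z ∧ ∃ v : Fin d → ℝ, (∀ i, 0 < v i) ∧
      ∀ i, ((z • (1 : Matrix (Fin d) (Fin d) ℝ) + A).mulVec v) i ≤ 0) :
    A.HurwitzStable := by
  classical
  obtain ⟨z, hz, v, hv, hineq⟩ := h
  intro μ hμ
  -- rewrite the hypothesis componentwise
  have hAv : ∀ i, (A.mulVec v) i ≤ -(z * v i) := by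
    intro i
    have := hineq i
    rw [Matrix.add_mulVec, Matrix.smul_mulVec, Matrix.one_mulVec] at this
    simp only [Pi.add_apply, Pi.smul_apply, smul_eq_mul] at this
    linarith
  -- get an eigenvector
  have hdet0 : (algebraMap ℂ (Matrix (Fin d) (Fin d) ℂ) μ - A.map Complex.ofReal).det = 0 := by
    by_contra hne
    exact (spectrum.mem_iff.mp hμ)
      ((Matrix.isUnit_iff_isUnit_det _).mpr (isUnit_iff_ne_zero.mpr hne))
  obtain ⟨x, hx0, hxe⟩ := (Matrix.exists_mulVec_eq_zero_iff).mpr hdet0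
  have heig : ∀ i, μ * x i = ∑ j, (A i j : ℂ) * x j := by
    intro i
    have := congrFun hxe i
    rw [Matrix.sub_mulVec] at this
    simp only [Pi.sub_apply, Pi.zero_apply, sub_eq_zero] at this
    have h1 : ((algebraMap ℂ (Matrix (Fin d) (Fin d) ℂ) μ).mulVec x) i = μ * x i := by
      rw [Algebra.algebraMap_eq_smul_one, Matrix.smul_mulVec, Matrix.one_mulVec]
      simp
    have h2 : ((A.map Complex.ofReal).mulVec x) i = ∑ j, (A i j : ℂ) * x j := by
      simp [Matrix.mulVec, dotProduct, Matrix.map_apply]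
    rw [h1, h2] at this
    exact this
  -- pick the index maximizing |x j| / v j
  obtain ⟨j₀, hj₀⟩ := Function.ne_iff.mp hx0
  have huniv : (Finset.univ : Finset (Fin d)).Nonempty := ⟨j₀, Finset.mem_univ _⟩
  obtain ⟨i, -, hmax⟩ := Finset.exists_max_image Finset.univ
    (fun j => ‖x j‖ / v j) huniv
  set c : ℝ := ‖x i‖ / v i with hc_def
  have hc0 : 0 < c := by
    have h1 : ‖x j₀‖ / v j₀ ≤ c := hmax j₀ (Finset.mem_univ _)
    have h2 : 0 < ‖x j₀‖ / v j₀ :=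
      div_pos (norm_pos_iff.mpr (by simpa using hj₀)) (hv j₀)
    linarith
  have hcb : ∀ j, ‖x j‖ ≤ c * v j := by
    intro j
    have h1 : ‖x j‖ / v j ≤ c := hmax j (Finset.mem_univ _)
    rwa [div_le_iff₀ (hv j)] at h1
  have hxi : ‖x i‖ = c * v i := by
    rw [hc_def, div_mul_cancel₀ _ (hv i).ne']
  -- Gershgorin estimate
  have hsplit : (μ - (A i i : ℂ)) * x i = ∑ j ∈ Finset.univ.erase i, (A i j : ℂ) * x j := by
    have := heig i
    rw [← Finset.add_sum_erase _ _ (Finset.mem_univ i)] at this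
    rw [sub_mul]
    rw [this]
    ring
  have habs : ‖(μ - (A i i : ℂ)) * x i‖
      ≤ c * ∑ j ∈ Finset.univ.erase i, A i j * v j := by
    rw [hsplit]
    calc ‖∑ j ∈ Finset.univ.erase i, (A i j : ℂ) * x j‖
        ≤ ∑ j ∈ Finset.univ.erase i, ‖(A i j : ℂ) * x j‖ :=
          norm_sum_le _ _
      _ ≤ ∑ j ∈ Finset.univ.erase i, A i j * (c * v j) := by
          apply Finset.sum_le_sum
          intro j hj
          rw [norm_mul, Complex.norm_real, Real.norm_eq_abs,
            abs_of_nonneg (hA i j (Finset.ne_of_mem_erase hj).symm)]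
          exact mul_le_mul_of_nonneg_left (hcb j)
            (hA i j (Finset.ne_of_mem_erase hj).symm)
      _ = c * ∑ j ∈ Finset.univ.erase i, A i j * v j := by
          rw [Finset.mul_sum]; congr 1; ext j; ring
  have hsum : ∑ j ∈ Finset.univ.erase i, A i j * v j ≤ -(z * v i) - A i i * v i := by
    have h1 : (A.mulVec v) i = A i i * v i + ∑ j ∈ Finset.univ.erase i, A i j * v j := by
      simp only [Matrix.mulVec, dotProduct]
      rw [← Finset.add_sum_erase _ _ (Finset.mem_univ i)]
    have := hAv i
    rw [h1] at this
    linarith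
  have hfinal : ‖μ - (A i i : ℂ)‖ * ‖x i‖
      ≤ (c * v i) * (-z - A i i) := by
    rw [← norm_mul]
    calc ‖(μ - (A i i : ℂ)) * x i‖
        ≤ c * ∑ j ∈ Finset.univ.erase i, A i j * v j := habs
      _ ≤ c * (-(z * v i) - A i i * v i) :=
          mul_le_mul_of_nonneg_left hsum hc0.le
      _ = (c * v i) * (-z - A i i) := by ring
  rw [hxi] at hfinal
  have hcv : 0 < c * v i := mul_pos hc0 (hv i)
  have habs2 : ‖μ - (A i i : ℂ)‖ ≤ -z - A i i := by
    have := hfinal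
    rw [mul_comm (c * v i) (-z - A i i)] at this
    exact le_of_mul_le_mul_right this hcv
  have hre : (μ - (A i i : ℂ)).re ≤ ‖μ - (A i i : ℂ)‖ := Complex.re_le_norm _
  have : μ.re - A i i ≤ -z - A i i := by
    simpa using le_trans hre habs2
  linarith

end MetzlerHurwitzAux

theorem metzler_hurwitz_iff_exists_shifted_pos_vec {d : ℕ} (A : Matrix (Fin d) (Fin d) ℝ)
    (hA : A.Metzler) :
    A.HurwitzStable ↔
      ∃ z : ℝ, 0 < z ∧ ∃ v : Fin d → ℝ, (∀ i, 0 < v i) ∧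
        ∀ i, ((z • (1 : Matrix (Fin d) (Fin d) ℝ) + A).mulVec v) i ≤ 0 := by
  constructor
  · intro hH
    obtain ⟨v, hv0, hAv⟩ := MetzlerHurwitzAux.main_mp hA hH
    have hvpos : ∀ i, 0 < v i := by
      intro i
      rcases (hv0 i).eq_or_lt with h | h
      · exfalso
        have h1 : (A.mulVec v) i = ∑ j, A i j * v j := by
          simp [Matrix.mulVec, dotProduct]
        have h2 : 0 ≤ ∑ j, A i j * v j := by
          apply Finset.sum_nonneg
          intro j _
          by_cases hj : j = i
          · rw [hj, ← h]
            simp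
          · exact mul_nonneg (hA i j (Ne.symm hj)) (hv0 j)
        have h3 := hAv i
        rw [h1] at h3
        linarith
      · exact h
    have hS0 : (0 : ℝ) ≤ ∑ j, v j := Finset.sum_nonneg fun j _ => hv0 j
    have hS1 : (0 : ℝ) < 1 + ∑ j, v j := by linarith
    refine ⟨(1 + ∑ j, v j)⁻¹, inv_pos.mpr hS1, v, hvpos, ?_⟩
    intro i
    have hc : (((1 + ∑ j, v j)⁻¹ • (1 : Matrix (Fin d) (Fin d) ℝ) + A).mulVec v) i
        = (1 + ∑ j, v j)⁻¹ * v i + (A.mulVec v) i := by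
      rw [Matrix.add_mulVec, Matrix.smul_mulVec, Matrix.one_mulVec]
      simp
    rw [hc, hAv i]
    have hle : v i ≤ 1 + ∑ j, v j := by
      have := Finset.single_le_sum (f := fun j => v j) (fun j _ => (hv0 j)) (Finset.mem_univ i)
      linarith
    have hmul : (1 + ∑ j, v j)⁻¹ * v i ≤ 1 := by
      rw [inv_mul_le_iff₀ hS1, mul_one]
      exact hle
    linarith
  · exact MetzlerHurwitzAux.main_mpr hA
end

section
/- Let A and B be d×d real Metzler matrices (all off-diagonal entries nonnegative) such that A_{ij} ≤ B_{ij} for all i, j. If B is Hurwitz-stable, then A is Hurwitz-stable. -/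
attribute [local instance] Matrix.linftyOpNormedRing Matrix.linftyOpNormedAlgebra

open scoped ENNReal NNReal

namespace MetzlerProofAux

variable {d : ℕ}

lemma pow_entry_nonneg (M : Matrix (Fin d) (Fin d) ℝ) (hM : ∀ i j, 0 ≤ M i j) (n : ℕ) :
    ∀ i j, 0 ≤ (M ^ n) i j := by
  induction n with
  | zero =>
    intro i j
    simp only [pow_zero, Matrix.one_apply]
    split <;> norm_num
  | succ n ih =>
    intro i j
    rw [pow_succ, Matrix.mul_apply]
    exact Finset.sum_nonneg fun k _ => mul_nonneg (ih i k) (hM k j)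

lemma pow_entry_le (M N : Matrix (Fin d) (Fin d) ℝ)
    (hM : ∀ i j, 0 ≤ M i j) (hN : ∀ i j, 0 ≤ N i j)
    (hMN : ∀ i j, M i j ≤ N i j) (n : ℕ) :
    ∀ i j, (M ^ n) i j ≤ (N ^ n) i j := by
  induction n with
  | zero => intro i j; simp
  | succ n ih =>
    intro i j
    rw [pow_succ, pow_succ, Matrix.mul_apply, Matrix.mul_apply]
    refine Finset.sum_le_sum fun k _ => ?_
    exact mul_le_mul (ih i k) (hMN k j) (hM k j) (pow_entry_nonneg N hN n i k)

lemma nnnorm_le_of_le {M N : Matrix (Fin d) (Fin d) ℝ}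
    (h0 : ∀ i j, 0 ≤ M i j) (h : ∀ i j, M i j ≤ N i j) : ‖M‖₊ ≤ ‖N‖₊ := by
  rw [Matrix.linfty_opNNNorm_def, Matrix.linfty_opNNNorm_def]
  refine Finset.sup_mono_fun fun i _ => Finset.sum_le_sum fun j _ => ?_
  rw [← NNReal.coe_le_coe]
  simp only [coe_nnnorm, Real.norm_eq_abs]
  rw [abs_of_nonneg (h0 i j), abs_of_nonneg ((h0 i j).trans (h i j))]
  exact h i j

lemma nnnorm_map (M : Matrix (Fin d) (Fin d) ℝ) :
    ‖M.map (Complex.ofReal)‖₊ = ‖M‖₊ := by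
  rw [Matrix.linfty_opNNNorm_def, Matrix.linfty_opNNNorm_def]
  congr 1
  funext i
  congr 1
  funext j
  simp [Matrix.map_apply]

lemma map_pow_comm (M : Matrix (Fin d) (Fin d) ℝ) (n : ℕ) :
    (M.map (Complex.ofReal)) ^ n = (M ^ n).map (Complex.ofReal) := by
  have h := map_pow (Complex.ofRealHom.mapMatrix (m := Fin d)) M n
  simp only [RingHom.mapMatrix_apply] at h
  exact h.symm

end MetzlerProofAux

open MetzlerProofAux

theorem metzler_hurwitz_of_le_hurwitz {d : ℕ} (A B : Matrix (Fin d) (Fin d) ℝ)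
    (hA : A.Metzler) (hB : B.Metzler) (hAB : ∀ i j, A i j ≤ B i j)
    (hBstab : B.HurwitzStable) : A.HurwitzStable := by
  classical
  intro μ hμ
  rcases Nat.eq_zero_or_pos d with hd | hd
  · exfalso
    subst hd
    haveI : Subsingleton (Matrix (Fin 0) (Fin 0) ℂ) :=
      ⟨fun a b => by ext i j; exact i.elim0⟩
    exact (spectrum.mem_iff.mp hμ) (isUnit_of_subsingleton _)
  haveI : Nonempty (Fin d) := ⟨⟨0, hd⟩⟩
  haveI : CompleteSpace (Matrix (Fin d) (Fin d) ℂ) := FiniteDimensional.complete ℂ _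
  set A' := A.map (Complex.ofReal) with hA'def
  set B' := B.map (Complex.ofReal) with hB'def
  have hcpt : IsCompact (spectrum ℂ B') := spectrum.isCompact B'
  have hne : (spectrum ℂ B').Nonempty := spectrum.nonempty B'
  -- bound on the spectrum of B'
  obtain ⟨z₀, hz₀mem, hz₀⟩ :=
    hcpt.exists_isMaxOn hne (Complex.continuous_re.continuousOn)
  have hm : z₀.re < 0 := hBstab z₀ hz₀mem
  obtain ⟨R, hR⟩ : ∃ R : ℝ, ∀ z ∈ spectrum ℂ B', ‖z‖ ≤ R := by
    obtain ⟨R, hR⟩ := hcpt.isBounded.subset_closedBall 0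
    exact ⟨R, fun z hz => by simpa using hR hz⟩
  have hR0 : 0 ≤ R := (norm_nonneg z₀).trans (hR z₀ hz₀mem)
  -- choose the shift constant c
  obtain ⟨c, hc0, hcR, hcA, hcB⟩ :
      ∃ c : ℝ, 0 < c ∧ R ^ 2 / (2 * -z₀.re) < c ∧ (∀ i, -A i i ≤ c) ∧ (∀ i, -B i i ≤ c) := by
    have hc₁ : ∀ i : Fin d, max (-A i i) (-B i i) ≤
        Finset.univ.sup' Finset.univ_nonempty (fun i => max (-A i i) (-B i i)) := fun i =>
      Finset.le_sup' (fun i => max (-A i i) (-B i i)) (Finset.mem_univ i)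
    refine ⟨1 + max (Finset.univ.sup' Finset.univ_nonempty (fun i => max (-A i i) (-B i i)))
      (max R (R ^ 2 / (2 * -z₀.re))), ?_, ?_, fun i => ?_, fun i => ?_⟩
    · have h1 : R ≤ max (Finset.univ.sup' Finset.univ_nonempty
          (fun i => max (-A i i) (-B i i))) (max R (R ^ 2 / (2 * -z₀.re))) :=
        le_trans (le_max_left _ _) (le_max_right _ _)
      linarith
    · have h1 : R ^ 2 / (2 * -z₀.re) ≤ max (Finset.univ.sup' Finset.univ_nonempty
          (fun i => max (-A i i) (-B i i))) (max R (R ^ 2 / (2 * -z₀.re))) :=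
        le_trans (le_max_right _ _) (le_max_right _ _)
      linarith
    · have h1 := le_trans (le_trans (le_max_left (-A i i) (-B i i)) (hc₁ i)) (le_max_left _ (max R (R ^ 2 / (2 * -z₀.re))))
      linarith
    · have h1 := le_trans (le_trans (le_max_right (-A i i) (-B i i)) (hc₁ i)) (le_max_left _ (max R (R ^ 2 / (2 * -z₀.re))))
      linarith
  -- key strict bound on shifted spectrum of B'
  have hkey : ∀ z ∈ spectrum ℂ B', ‖(c : ℂ) + z‖ < c := by
    intro z hz
    have hzre : z.re ≤ z₀.re := hz₀ hz
    have hznorm : ‖z‖ ≤ R := hR z hz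
    have e1 : ‖(c : ℂ) + z‖ ^ 2 = (z.re + c) ^ 2 + z.im ^ 2 := by
      rw [Complex.sq_norm, Complex.normSq_apply]
      simp only [Complex.add_re, Complex.add_im, Complex.ofReal_re, Complex.ofReal_im]
      ring
    have e2 : ‖z‖ ^ 2 = z.re ^ 2 + z.im ^ 2 := by
      rw [Complex.sq_norm, Complex.normSq_apply]
      ring
    have hdenom : 0 < 2 * -z₀.re := by linarith
    have hmul : R ^ 2 < c * (2 * -z₀.re) := by
      rw [div_lt_iff₀ hdenom] at hcR
      exact hcR
    have hsq : ‖(c : ℂ) + z‖ ^ 2 < c ^ 2 := by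
      have h2 : z.re ^ 2 + z.im ^ 2 ≤ R ^ 2 := by
        rw [← e2]
        exact pow_le_pow_left₀ (norm_nonneg z) hznorm 2
      nlinarith
    nlinarith [norm_nonneg ((c : ℂ) + z)]
  -- shifted matrices
  set Ac : Matrix (Fin d) (Fin d) ℝ := A + c • (1 : Matrix (Fin d) (Fin d) ℝ) with hAcdef
  set Bc : Matrix (Fin d) (Fin d) ℝ := B + c • (1 : Matrix (Fin d) (Fin d) ℝ) with hBcdef
  have hAcmap : Ac.map Complex.ofReal = algebraMap ℂ _ (c : ℂ) + A' := by
    ext i j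
    by_cases h : i = j <;>
      simp [hAcdef, Matrix.map_apply, Matrix.one_apply, Matrix.algebraMap_matrix_apply, h,
        hA'def] <;> push_cast <;> ring
  have hBcmap : Bc.map Complex.ofReal = algebraMap ℂ _ (c : ℂ) + B' := by
    ext i j
    by_cases h : i = j <;>
      simp [hBcdef, Matrix.map_apply, Matrix.one_apply, Matrix.algebraMap_matrix_apply, h,
        hB'def] <;> push_cast <;> ring
  have hAc0 : ∀ i j, 0 ≤ Ac i j := by
    intro i j
    by_cases h : i = j
    · subst h
      simp only [hAcdef, Matrix.add_apply, Matrix.smul_apply, Matrix.one_apply_eq, smul_eq_mul,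
        mul_one]
      linarith [hcA i]
    · simp only [hAcdef, Matrix.add_apply, Matrix.smul_apply, Matrix.one_apply_ne h,
        smul_eq_mul, mul_zero, add_zero]
      exact hA i j h
  have hBc0 : ∀ i j, 0 ≤ Bc i j := by
    intro i j
    by_cases h : i = j
    · subst h
      simp only [hBcdef, Matrix.add_apply, Matrix.smul_apply, Matrix.one_apply_eq, smul_eq_mul,
        mul_one]
      linarith [hcB i]
    · simp only [hBcdef, Matrix.add_apply, Matrix.smul_apply, Matrix.one_apply_ne h,
        smul_eq_mul, mul_zero, add_zero]
      exact hB i j h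
  have hAcBc : ∀ i j, Ac i j ≤ Bc i j := by
    intro i j
    simp only [hAcdef, hBcdef, Matrix.add_apply]
    linarith [hAB i j]
  -- membership of the shifted eigenvalue
  have hν : (c : ℂ) + μ ∈ spectrum ℂ (Ac.map Complex.ofReal) := by
    rw [hAcmap, ← spectrum.singleton_add_eq]
    exact Set.add_mem_add rfl hμ
  set ν : ℂ := (c : ℂ) + μ with hνdef
  -- power bounds
  have key : ∀ n : ℕ, ‖ν‖₊ ^ n ≤ ‖(Bc.map Complex.ofReal) ^ n‖₊ := by
    intro n
    have h1 : ν ^ n ∈ spectrum ℂ ((Ac.map Complex.ofReal) ^ n) :=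
      spectrum.pow_image_subset _ n ⟨ν, hν, rfl⟩
    have h2 : ‖ν ^ n‖ ≤ ‖(Ac.map Complex.ofReal) ^ n‖ := spectrum.norm_le_norm_of_mem h1
    have h3 : ‖ν‖₊ ^ n ≤ ‖(Ac.map Complex.ofReal) ^ n‖₊ := by
      rw [← nnnorm_pow, ← NNReal.coe_le_coe]
      simpa using h2
    calc ‖ν‖₊ ^ n ≤ ‖(Ac.map Complex.ofReal) ^ n‖₊ := h3
      _ = ‖(Ac ^ n).map Complex.ofReal‖₊ := by rw [map_pow_comm]
      _ = ‖Ac ^ n‖₊ := nnnorm_map _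
      _ ≤ ‖Bc ^ n‖₊ := nnnorm_le_of_le (pow_entry_nonneg Ac hAc0 n)
            (pow_entry_le Ac Bc hAc0 hBc0 hAcBc n)
      _ = ‖(Bc ^ n).map Complex.ofReal‖₊ := (MetzlerProofAux.nnnorm_map _).symm
      _ = ‖(Bc.map Complex.ofReal) ^ n‖₊ := by rw [map_pow_comm]
  -- spectral radius bound via Gelfand limsup
  have hlim : (‖ν‖₊ : ℝ≥0∞) ≤ spectralRadius ℂ (Bc.map Complex.ofReal) := by
    refine le_trans ?_ (spectrum.limsup_pow_nnnorm_pow_one_div_le_spectralRadius _)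
    refine Filter.le_limsup_of_frequently_le ?_
    refine (Filter.eventually_atTop.mpr ⟨1, fun n hn => ?_⟩).frequently
    have hn0 : (n : ℝ) ≠ 0 := Nat.cast_ne_zero.mpr (by omega)
    have h5 : ((‖ν‖₊ : ℝ≥0∞) ^ n) ≤ (‖(Bc.map Complex.ofReal) ^ n‖₊ : ℝ≥0∞) := by
      exact_mod_cast key n
    have h6 := ENNReal.rpow_le_rpow h5 (by positivity : (0 : ℝ) ≤ 1 / n)
    rwa [← ENNReal.rpow_natCast (‖ν‖₊ : ℝ≥0∞) n, ← ENNReal.rpow_mul, mul_one_div,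
      div_self hn0, ENNReal.rpow_one] at h6
  -- bound the spectral radius strictly below c
  obtain ⟨w, hwmem, hw⟩ := hcpt.exists_isMaxOn hne
    ((continuous_const.add continuous_id).norm.continuousOn :
      ContinuousOn (fun z : ℂ => ‖(c : ℂ) + z‖) _)
  have hwlt : ‖(c : ℂ) + w‖ < c := hkey w hwmem
  have hsr : spectralRadius ℂ (Bc.map Complex.ofReal) ≤ (‖(c : ℂ) + w‖₊ : ℝ≥0∞) := by
    rw [spectralRadius]
    refine iSup₂_le fun k hk => ?_
    rw [hBcmap, ← spectrum.singleton_add_eq] at hk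
    obtain ⟨x, hx, y, hy, rfl⟩ := Set.mem_add.mp hk
    obtain rfl : x = (c : ℂ) := Set.mem_singleton_iff.mp hx
    have : ‖(c : ℂ) + y‖ ≤ ‖(c : ℂ) + w‖ := hw hy
    exact_mod_cast ENNReal.coe_le_coe.mpr (by exact_mod_cast this)
  have hfin : ‖ν‖ < c := by
    have h7 : (‖ν‖₊ : ℝ≥0∞) ≤ (‖(c : ℂ) + w‖₊ : ℝ≥0∞) := hlim.trans hsr
    have h8 : ‖ν‖ ≤ ‖(c : ℂ) + w‖ := by exact_mod_cast ENNReal.coe_le_coe.mp h7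
    exact lt_of_le_of_lt h8 hwlt
  -- conclude
  have e1 : ‖ν‖ ^ 2 = (μ.re + c) ^ 2 + μ.im ^ 2 := by
    rw [hνdef, Complex.sq_norm, Complex.normSq_apply]
    simp only [Complex.add_re, Complex.add_im, Complex.ofReal_re, Complex.ofReal_im]
    ring
  nlinarith [norm_nonneg ν, hfin, hc0]
end

section
/- Let Δ = [-1,1]^η and let A : Δ → ℝ^{d×d} be a family of Metzler matrices (each A(δ) has all off-diagonal entries nonnegative). Suppose there is a matrix A₊ ∈ ℝ^{d×d} such that A(δ)_{ij} ≤ (A₊)_{ij} for all δ ∈ Δ and all i, j, and A₊ = A(δ*) for some δ* ∈ Δ. Then the following three statements are equivalent: (1) A(δ) is Hurwitz-stable for every δ ∈ Δ; (2) A₊ is Hurwitz-stable; (3) there exists a vector v ∈ ℝ^d with v_i > 0 for all i and (A₊ v)_i < 0 for all i. -/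
/-- The uncertainty set Δ = [-1,1]^η. -/
def UncertaintyBox (η : ℕ) : Set (Fin η → ℝ) :=
  {δ | ∀ i, δ i ∈ Set.Icc (-1 : ℝ) 1}

/-- eigenvector from spectrum membership -/
lemma spec_eigen {d : ℕ} (M : Matrix (Fin d) (Fin d) ℂ) {μ : ℂ} (h : μ ∈ spectrum ℂ M) :
    ∃ x : Fin d → ℂ, x ≠ 0 ∧ M.mulVec x = μ • x := by
  rw [spectrum.mem_iff] at h
  have hdet : (algebraMap ℂ (Matrix (Fin d) (Fin d) ℂ) μ - M).det = 0 := by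
    by_contra hd
    exact h ((Matrix.isUnit_iff_isUnit_det _).2 (isUnit_iff_ne_zero.2 hd))
  obtain ⟨x, hx0, hx⟩ := (Matrix.exists_mulVec_eq_zero_iff).2 hdet
  refine ⟨x, hx0, ?_⟩
  rw [Matrix.sub_mulVec, Algebra.algebraMap_eq_smul_one, Matrix.smul_mulVec,
    Matrix.one_mulVec, sub_eq_zero] at hx
  exact hx.symm

/-- spectrum membership from eigenvector -/
lemma eigen_spec {d : ℕ} (M : Matrix (Fin d) (Fin d) ℂ) {μ : ℂ} {x : Fin d → ℂ}
    (hx0 : x ≠ 0) (hx : M.mulVec x = μ • x) : μ ∈ spectrum ℂ M := by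
  rw [spectrum.mem_iff]
  intro hu
  have hdet := (Matrix.isUnit_iff_isUnit_det _).1 hu
  rw [isUnit_iff_ne_zero] at hdet
  apply hdet
  rw [← Matrix.exists_mulVec_eq_zero_iff]
  refine ⟨x, hx0, ?_⟩
  rw [Matrix.sub_mulVec, Algebra.algebraMap_eq_smul_one, Matrix.smul_mulVec,
    Matrix.one_mulVec, hx, sub_self]

/-- Metzler matrix with a positive vector mapped to negative vector is Hurwitz. -/
lemma metzler_hurwitz_of_vec {d : ℕ} {M : Matrix (Fin d) (Fin d) ℝ} (hM : M.Metzler)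
    {v : Fin d → ℝ} (hv : ∀ i, 0 < v i) (hMv : ∀ i, M.mulVec v i < 0) :
    M.HurwitzStable := by
  intro μ hμ
  obtain ⟨x, hx0, hx⟩ := spec_eigen _ hμ
  obtain ⟨j0, hj0⟩ := Function.ne_iff.1 hx0
  have hd : (Finset.univ : Finset (Fin d)).Nonempty := ⟨j0, Finset.mem_univ j0⟩
  obtain ⟨i, -, hi⟩ := Finset.exists_max_image Finset.univ
    (fun j => ‖x j‖ / v j) hd
  set c : ℝ := ‖x i‖ / v i with hc
  -- abs x j ≤ c * v j
  have habs : ∀ j, ‖x j‖ ≤ c * v j := fun j => by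
    have := hi j (Finset.mem_univ j)
    calc ‖x j‖ = ‖x j‖ / v j * v j := by
          rw [div_mul_cancel₀ _ (hv j).ne']
      _ ≤ c * v j := by
          apply mul_le_mul_of_nonneg_right this (hv j).le
  -- c > 0
  have hcpos : 0 < c := by
    have h1 : 0 < ‖x j0‖ := by
      simpa using (norm_pos_iff.2 hj0)
    have h2 : 0 < ‖x j0‖ / v j0 := div_pos h1 (hv j0)
    exact lt_of_lt_of_le h2 (hi j0 (Finset.mem_univ j0))
  have hxi : ‖x i‖ = c * v i := by
    rw [hc, div_mul_cancel₀ _ (hv i).ne']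
  have hxipos : 0 < ‖x i‖ := by
    rw [hxi]; exact mul_pos hcpos (hv i)
  -- eigen equation at i
  have heq : (μ - (M i i : ℂ)) * x i = ∑ j ∈ Finset.univ.erase i, (M i j : ℂ) * x j := by
    have h1 : (M.map Complex.ofReal).mulVec x i = μ * x i := by
      rw [hx]; simp
    have h2 : (M.map Complex.ofReal).mulVec x i = ∑ j, (M i j : ℂ) * x j := by
      simp [Matrix.mulVec, Matrix.map_apply, dotProduct]
    rw [h2] at h1
    rw [sub_mul, ← h1, Finset.sum_erase_eq_sub (Finset.mem_univ i)]
  -- Gershgorin estimate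
  have hkey : ‖μ - (M i i : ℂ)‖ * ‖x i‖ < -(M i i) * ‖x i‖ := by
    have h3 : ‖μ - (M i i : ℂ)‖ * ‖x i‖
        ≤ ∑ j ∈ Finset.univ.erase i, M i j * (c * v j) := by
      rw [← norm_mul, heq]
      refine (norm_sum_le _ _).trans ?_
      apply Finset.sum_le_sum
      intro j hj
      rw [norm_mul, Complex.norm_real, Real.norm_eq_abs, abs_of_nonneg (hM i j (Finset.ne_of_mem_erase hj).symm)]
      exact mul_le_mul_of_nonneg_left (habs j) (hM i j (Finset.ne_of_mem_erase hj).symm)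
    have h4 : ∑ j ∈ Finset.univ.erase i, M i j * (c * v j)
        = c * (M.mulVec v i - M i i * v i) := by
      have hsum : M.mulVec v i = ∑ j, M i j * v j := by
        simp [Matrix.mulVec, dotProduct]
      rw [hsum, ← Finset.sum_erase_eq_sub (Finset.mem_univ i), Finset.mul_sum]
      exact Finset.sum_congr rfl fun j _ => by ring
    have h5 : c * (M.mulVec v i - M i i * v i) < c * (0 - M i i * v i) :=
      mul_lt_mul_of_pos_left (by linarith [hMv i]) hcpos
    calc ‖μ - (M i i : ℂ)‖ * ‖x i‖
        ≤ c * (M.mulVec v i - M i i * v i) := h3.trans_eq h4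
      _ < c * (0 - M i i * v i) := h5
      _ = -(M i i) * ‖x i‖ := by rw [hxi]; ring
  have h6 : ‖μ - (M i i : ℂ)‖ < -(M i i) :=
    lt_of_mul_lt_mul_right (by simpa [mul_comm] using hkey) (le_of_lt hxipos) |>.trans_le le_rfl
  have h7 : μ.re - M i i ≤ ‖μ - (M i i : ℂ)‖ := by
    have := Complex.re_le_norm (μ - (M i i : ℂ))
    simpa using this
  linarith

/-- If M is Metzler, v ≥ 0 and (Mv)_i < 0 for all i, then v > 0. -/
lemma pos_of_nonneg {d : ℕ} {M : Matrix (Fin d) (Fin d) ℝ} (hM : M.Metzler)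
    {v : Fin d → ℝ} (hv : ∀ j, 0 ≤ v j) (hMv : ∀ i, M.mulVec v i < 0) :
    ∀ i, 0 < v i := by
  intro i
  rcases lt_or_eq_of_le (hv i) with h | h
  · exact h
  · exfalso
    have : 0 ≤ M.mulVec v i := by
      have hsum : M.mulVec v i = ∑ j, M i j * v j := by
        simp [Matrix.mulVec, dotProduct]
      rw [hsum]
      apply Finset.sum_nonneg
      intro j _
      rcases eq_or_ne j i with rfl | hj
      · rw [← h]; ring_nf; exact le_rfl
      · exact mul_nonneg (hM i j hj.symm) (hv j)
    linarith [hMv i]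

/-- Metzler + Hurwitz implies existence of positive v with Mv < 0. -/
lemma hurwitz_vec {d : ℕ} {M : Matrix (Fin d) (Fin d) ℝ} (hM : M.Metzler)
    (hH : M.HurwitzStable) :
    ∃ v : Fin d → ℝ, (∀ i, 0 < v i) ∧ ∀ i, M.mulVec v i < 0 := by
  set B : ℝ → Matrix (Fin d) (Fin d) ℝ := fun t => t • M - (1 - t) • 1 with hB
  -- B t Metzler for t ≥ 0
  have hBMetz : ∀ t, 0 ≤ t → (B t).Metzler := by
    intro t ht i j hij
    simp only [hB, Matrix.sub_apply, Matrix.smul_apply, Matrix.one_apply_ne hij, smul_eq_mul,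
      mul_zero, sub_zero]
    exact mul_nonneg ht (hM i j hij)
  -- determinant nonzero on [0,1]
  have hdet : ∀ t ∈ Set.Icc (0:ℝ) 1, (B t).det ≠ 0 := by
    rintro t ⟨ht0, ht1⟩ hd0
    rcases eq_or_lt_of_le ht0 with rfl | htpos
    · have : (B 0) = -1 := by
        ext i j; simp [hB]
      rw [this, Matrix.det_neg, Matrix.det_one, mul_one] at hd0
      exact (pow_ne_zero _ (by norm_num : (-1:ℝ) ≠ 0)) hd0
    · -- complexify
      have hdC : ((B t).map Complex.ofReal).det = 0 := by
        have h := RingHom.map_det Complex.ofRealHom (B t)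
        rw [RingHom.mapMatrix_apply] at h
        rw [show ((B t).map Complex.ofReal) = ((B t).map Complex.ofRealHom) from rfl, ← h, hd0]
        simp
      obtain ⟨x, hx0, hx⟩ := Matrix.exists_mulVec_eq_zero_iff.2 hdC
      -- (B t).map ofReal = (t:ℂ) • M' - ((1-t):ℂ) • 1
      have hmap : (B t).map Complex.ofReal
          = (t : ℂ) • (M.map Complex.ofReal) - ((1 - t : ℝ) : ℂ) • 1 := by
        ext i j
        rcases eq_or_ne i j with rfl | hij
        · simp [hB, Matrix.map_apply, Matrix.one_apply]
        · simp [hB, Matrix.map_apply, Matrix.one_apply_ne hij]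
      -- eigen equation
      have heig : (M.map Complex.ofReal).mulVec x = (((1 - t) / t : ℝ) : ℂ) • x := by
        rw [hmap, Matrix.sub_mulVec, Matrix.smul_mulVec, Matrix.smul_mulVec,
          Matrix.one_mulVec, sub_eq_zero] at hx
        have htC : (t : ℂ) ≠ 0 := by
          exact_mod_cast htpos.ne'
        have := congrArg (fun y => (t : ℂ)⁻¹ • y) hx
        simp only [smul_smul, inv_mul_cancel₀ htC, one_smul] at this
        rw [this]
        congr 1
        push_cast
        field_simp
      have hspec := hH _ (eigen_spec _ hx0 heig)
      have : ((1 - t) / t : ℝ) < 0 := by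
        simpa using hspec
      have h2 : 0 ≤ ((1 - t) / t : ℝ) := div_nonneg (by linarith) (le_of_lt htpos)
      linarith
  -- the candidate vector
  set b : Fin d → ℝ := fun _ => (-1 : ℝ) with hb
  set v : ℝ → (Fin d → ℝ) := fun t => ((B t).det)⁻¹ • ((B t).adjugate.mulVec b) with hv
  have hBv : ∀ t ∈ Set.Icc (0:ℝ) 1, (B t).mulVec (v t) = b := by
    intro t ht
    rw [hv]
    simp only
    rw [Matrix.mulVec_smul, Matrix.mulVec_mulVec, Matrix.mul_adjugate,
      Matrix.smul_mulVec, Matrix.one_mulVec, smul_smul,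
      inv_mul_cancel₀ (hdet t ht), one_smul]
  -- continuity
  have hBcont : Continuous B := by
    rw [hB]
    exact (continuous_id.smul continuous_const).sub
      ((continuous_const.sub continuous_id).smul continuous_const)
  have hvcont : ContinuousOn v (Set.Icc (0:ℝ) 1) := by
    apply ContinuousOn.fun_smul
    · exact ContinuousOn.inv₀ (hBcont.matrix_det.continuousOn) hdet
    · exact ((hBcont.matrix_adjugate.matrix_mulVec continuous_const)).continuousOn
  -- clopen argument on the subtype
  haveI : PreconnectedSpace (Set.Icc (0:ℝ) 1) := Subtype.preconnectedSpace isPreconnected_Icc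
  set w : (Set.Icc (0:ℝ) 1) → (Fin d → ℝ) := fun τ => v τ.1 with hw
  have hwcont : Continuous w := by
    rw [hw]
    exact hvcont.restrict
  -- on S, strict positivity holds
  have hstrict : ∀ τ : Set.Icc (0:ℝ) 1, (∀ i, 0 ≤ w τ i) → ∀ i, 0 < w τ i := by
    intro τ hτ
    apply pos_of_nonneg (hBMetz τ.1 τ.2.1) hτ
    intro i
    rw [hBv τ.1 τ.2]
    norm_num [hb]
  set S : Set (Set.Icc (0:ℝ) 1) := {τ | ∀ i, 0 ≤ w τ i} with hS
  have hSeq : S = {τ | ∀ i, 0 < w τ i} := by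
    ext τ
    constructor
    · exact hstrict τ
    · intro h i; exact (h i).le
  have hclosed : IsClosed S := by
    rw [hS]
    have : S = ⋂ i, (fun τ => w τ i) ⁻¹' Set.Ici 0 := by
      ext τ; simp [hS]
    rw [← hS, this]
    exact isClosed_iInter fun i => IsClosed.preimage ((continuous_apply i).comp hwcont) isClosed_Ici
  have hopen : IsOpen S := by
    rw [hSeq]
    have : {τ : Set.Icc (0:ℝ) 1 | ∀ i, 0 < w τ i} = ⋂ i, (fun τ => w τ i) ⁻¹' Set.Ioi 0 := by
      ext τ; simp
    rw [this]
    exact isOpen_iInter_of_finite fun i =>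
      IsOpen.preimage ((continuous_apply i).comp hwcont) isOpen_Ioi
  have h0mem : (⟨0, by norm_num⟩ : Set.Icc (0:ℝ) 1) ∈ S := by
    intro i
    have h1 : (B 0).mulVec (v 0) = b := hBv 0 (by norm_num)
    have h2 : (B 0) = -1 := by ext i j; simp [hB]
    rw [h2, Matrix.neg_mulVec, Matrix.one_mulVec] at h1
    have : v 0 = fun _ => (1:ℝ) := by
      have := congrArg Neg.neg h1
      simpa [hb, funext_iff] using this
    simp [hw, this]
  have hSuniv : S = Set.univ := IsClopen.eq_univ ⟨hclosed, hopen⟩ ⟨_, h0mem⟩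
  -- conclude at t = 1
  have h1mem : (⟨1, by norm_num⟩ : Set.Icc (0:ℝ) 1) ∈ S := by rw [hSuniv]; trivial
  refine ⟨v 1, hstrict _ h1mem, ?_⟩
  intro i
  have hB1 : B 1 = M := by ext i j; simp [hB]
  have := hBv 1 (by norm_num)
  rw [hB1] at this
  rw [this]
  norm_num [hb]

theorem robust_ergodicity_tfae {d η : ℕ}
    (A : (Fin η → ℝ) → Matrix (Fin d) (Fin d) ℝ)
    (hMetzler : ∀ δ ∈ UncertaintyBox η, (A δ).Metzler)
    (Aplus : Matrix (Fin d) (Fin d) ℝ)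
    (hBound : ∀ δ ∈ UncertaintyBox η, ∀ i j, A δ i j ≤ Aplus i j)
    (hAttained : ∃ δstar ∈ UncertaintyBox η, Aplus = A δstar) :
    ((∀ δ ∈ UncertaintyBox η, (A δ).HurwitzStable) ↔ Aplus.HurwitzStable) ∧
    (Aplus.HurwitzStable ↔
      ∃ v : Fin d → ℝ, (∀ i, 0 < v i) ∧ ∀ i, Aplus.mulVec v i < 0) := by
  obtain ⟨δs, hδs, hAeq⟩ := hAttained
  have hAplusMetz : Aplus.Metzler := hAeq ▸ hMetzler δs hδs
  have hmain : Aplus.HurwitzStable →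
      ∃ v : Fin d → ℝ, (∀ i, 0 < v i) ∧ ∀ i, Aplus.mulVec v i < 0 :=
    fun h => hurwitz_vec hAplusMetz h
  constructor
  · constructor
    · intro h1
      rw [hAeq]
      exact h1 δs hδs
    · intro h2 δ hδ
      obtain ⟨v, hvpos, hvneg⟩ := hmain h2
      apply metzler_hurwitz_of_vec (hMetzler δ hδ) hvpos
      intro i
      calc (A δ).mulVec v i = ∑ j, A δ i j * v j := by
            simp [Matrix.mulVec, dotProduct]
        _ ≤ ∑ j, Aplus i j * v j :=
            Finset.sum_le_sum fun j _ =>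
              mul_le_mul_of_nonneg_right (hBound δ hδ i j) (hvpos j).le
        _ = Aplus.mulVec v i := by simp [Matrix.mulVec, dotProduct]
        _ < 0 := hvneg i
  · constructor
    · exact hmain
    · rintro ⟨v, hvpos, hvneg⟩
      exact metzler_hurwitz_of_vec hAplusMetz hvpos hvneg
end

section
/- Let A be a d×d real Metzler matrix (all off-diagonal entries nonnegative) that is Hurwitz-stable, and let b ∈ ℝ^d satisfy b_i ≥ 0 for all i with b ≠ 0. Then there exist a vector v ∈ ℝ^d with v_i > 0 for all i and constants c₁ > 0, c₂ > 0 such that for every x ∈ ℝ^d with x_i ≥ 0 for all i, xᵀ A v + bᵀ v ≤ c₁ − c₂ ⟨v, x⟩, where ⟨v, x⟩ = Σ_i v_i x_i. (This establishes the drift condition DD1 for any unimolecular reaction network whose drift has the affine form xᵀAv + bᵀv with A Hurwitz-stable.) -/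
open Matrix

attribute [local instance] Matrix.linftyOpNormedRing Matrix.linftyOpNormedAlgebra
  Matrix.linftyOpNormedSpace Matrix.linftyOpNormedAddCommGroup

namespace DriftAux

open Filter Topology ENNReal

/-- Entries of powers of an entrywise-nonnegative matrix are nonnegative. -/
lemma pow_entries_nonneg {d : ℕ} {M : Matrix (Fin d) (Fin d) ℝ}
    (h : ∀ i j, 0 ≤ M i j) : ∀ (n : ℕ) (i j : Fin d), 0 ≤ (M ^ n) i j := by
  intro n
  induction n with
  | zero =>
      intro i j
      rw [pow_zero]
      by_cases hij : i = j <;> simp [Matrix.one_apply, hij]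
  | succ n ih =>
      intro i j
      rw [pow_succ, Matrix.mul_apply]
      exact Finset.sum_nonneg fun k _ => mul_nonneg (ih i k) (h k j)

/-- Geometric series inverse from summability of powers. -/
lemma one_sub_mul_tsum_pow {R : Type*} [NormedRing R] [CompleteSpace R] {x : R}
    (hx : Summable fun n => x ^ n) : (1 - x) * ∑' n, x ^ n = 1 := by
  have h2 : x * ∑' n, x ^ n = ∑' n, x ^ (n + 1) := by
    rw [← hx.tsum_mul_left x]
    exact tsum_congr fun n => (pow_succ' x n).symm
  have h1 : (∑' n, x ^ n) = 1 + ∑' n, x ^ (n + 1) := by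
    simpa using Summable.tsum_eq_zero_add hx
  rw [sub_mul, one_mul, h2, h1, add_sub_cancel_right]

/-- If the spectral radius of an element of a complex Banach algebra is less than 1,
its powers are eventually exponentially small. -/
lemma eventually_norm_pow_le {A : Type*} [NormedRing A] [NormedAlgebra ℂ A]
    [CompleteSpace A] (a : A) (h : spectralRadius ℂ a < 1) :
    ∃ r : ℝ, 0 ≤ r ∧ r < 1 ∧ ∀ᶠ n : ℕ in atTop, ‖a ^ n‖ ≤ r ^ n := by
  obtain ⟨r, hr, hr1⟩ := ENNReal.lt_iff_exists_nnreal_btwn.mp h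
  have hgel := spectrum.pow_nnnorm_pow_one_div_tendsto_nhds_spectralRadius a
  have hev : ∀ᶠ n : ℕ in atTop, (‖a ^ n‖₊ : ℝ≥0∞) ^ (1 / (n : ℝ)) < (r : ℝ≥0∞) :=
    hgel.eventually_lt_const hr
  refine ⟨r, r.coe_nonneg, by exact_mod_cast hr1, ?_⟩
  filter_upwards [hev, Filter.eventually_gt_atTop 0] with n hn hn0
  have hne : (n : ℝ) ≠ 0 := Nat.cast_ne_zero.mpr hn0.ne'
  have key : (‖a ^ n‖₊ : ℝ≥0∞) ≤ (r : ℝ≥0∞) ^ (n : ℝ) := by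
    calc (‖a ^ n‖₊ : ℝ≥0∞) = ((‖a ^ n‖₊ : ℝ≥0∞) ^ (1 / (n : ℝ))) ^ (n : ℝ) := by
          rw [← ENNReal.rpow_mul, one_div, inv_mul_cancel₀ hne, ENNReal.rpow_one]
      _ ≤ (r : ℝ≥0∞) ^ (n : ℝ) := ENNReal.rpow_le_rpow hn.le (Nat.cast_nonneg n)
  have h3 : ‖a ^ n‖₊ ≤ r ^ n := by
    rw [ENNReal.rpow_natCast, ← ENNReal.coe_pow] at key
    exact_mod_cast key
  have h4 := NNReal.coe_le_coe.mpr h3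
  simpa using h4

/-- The `L∞`-operator norm is preserved by mapping a real matrix to a complex one. -/
lemma norm_map_ofReal {d : ℕ} (M : Matrix (Fin d) (Fin d) ℝ) :
    ‖M.map (Complex.ofReal)‖ = ‖M‖ := by
  rw [Matrix.linfty_opNorm_def, Matrix.linfty_opNorm_def]
  congr 1
  ext i
  congr 1
  ext j
  simp [Matrix.map_apply, Complex.norm_real]

end DriftAux

open DriftAux Filter Topology NNReal ENNReal in
/-- The key construction: for a Metzler, Hurwitz-stable matrix there is an entrywise
positive vector `v` with `A *ᵥ v` constant negative. -/
lemma exists_pos_vec {d : ℕ} (hd : 0 < d) (A : Matrix (Fin d) (Fin d) ℝ)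
    (hA : A.Metzler) (hstab : A.HurwitzStable) :
    ∃ (v : Fin d → ℝ) (s : ℝ), 0 < s ∧ (∀ i, 1 ≤ v i) ∧ A.mulVec v = fun _ => -s := by
  classical
  haveI : Nonempty (Fin d) := ⟨⟨0, hd⟩⟩
  haveI : CompleteSpace (Matrix (Fin d) (Fin d) ℂ) :=
    FiniteDimensional.complete ℂ (Matrix (Fin d) (Fin d) ℂ)
  haveI : CompleteSpace (Matrix (Fin d) (Fin d) ℝ) :=
    FiniteDimensional.complete ℝ (Matrix (Fin d) (Fin d) ℝ)
  haveI : Nontrivial (Matrix (Fin d) (Fin d) ℂ) := by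
    refine ⟨0, 1, fun h => ?_⟩
    have := congrFun (congrFun h (Classical.arbitrary (Fin d))) (Classical.arbitrary (Fin d))
    simp [Matrix.zero_apply, Matrix.one_apply] at this
  set Aℂ : Matrix (Fin d) (Fin d) ℂ := A.map (Complex.ofReal) with hAℂ
  -- choose s large
  have hKne : (spectrum ℂ Aℂ).Nonempty := spectrum.nonempty Aℂ
  have hKc : IsCompact (spectrum ℂ Aℂ) := spectrum.isCompact Aℂ
  have hg : ContinuousOn (fun μ : ℂ => ‖μ‖ ^ 2 / (-(2 * μ.re))) (spectrum ℂ Aℂ) := by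
    apply ContinuousOn.div
    · exact (continuous_norm.pow 2).continuousOn
    · exact ((continuous_const.mul Complex.continuous_re).neg).continuousOn
    · intro μ hμ
      have := hstab μ hμ
      simp only [neg_ne_zero]
      nlinarith
  obtain ⟨μ₀, hμ₀, hmax⟩ := hKc.exists_isMaxOn hKne hg
  obtain ⟨iD, -, hiD⟩ := Finset.exists_max_image (Finset.univ : Finset (Fin d))
    (fun i => -A i i) ⟨Classical.arbitrary (Fin d), Finset.mem_univ _⟩
  set M₀ : ℝ := max (‖μ₀‖ ^ 2 / (-(2 * μ₀.re))) (max (-A iD iD) 0) with hM₀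
  set s : ℝ := M₀ + 1 with hs
  have hM₀0 : (0:ℝ) ≤ M₀ := le_max_of_le_right (le_max_right _ _)
  have hs0 : 0 < s := by rw [hs]; linarith
  -- B = A + s • 1 has nonnegative entries
  set B : Matrix (Fin d) (Fin d) ℝ := A + s • (1 : Matrix (Fin d) (Fin d) ℝ) with hB
  have hBnn : ∀ i j, 0 ≤ B i j := by
    intro i j
    by_cases hij : i = j
    · subst hij
      have h1 : -A i i ≤ M₀ :=
        le_trans (le_trans (hiD i (Finset.mem_univ i)) (le_max_left _ _)) (le_max_right _ _)
      simp only [hB, Matrix.add_apply, Matrix.smul_apply, Matrix.one_apply_eq, smul_eq_mul,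
        mul_one]
      linarith
    · have := hA i j hij
      simp only [hB, Matrix.add_apply, Matrix.smul_apply, Matrix.one_apply_ne hij, smul_eq_mul,
        mul_zero, add_zero]
      exact this
  -- spectrum bound for B over ℂ
  have hBmap : B.map (Complex.ofReal) = algebraMap ℂ (Matrix (Fin d) (Fin d) ℂ) (s : ℂ) + Aℂ := by
    ext i j
    by_cases hij : i = j
    · subst hij
      simp only [hB, hAℂ, Matrix.map_apply, Matrix.add_apply, Matrix.smul_apply,
        Matrix.one_apply_eq, smul_eq_mul, mul_one, Matrix.algebraMap_matrix_apply, if_pos rfl,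
        Algebra.algebraMap_self_apply]
      push_cast
      ring
    · simp only [hB, hAℂ, Matrix.map_apply, Matrix.add_apply, Matrix.smul_apply,
        Matrix.one_apply_ne hij, smul_eq_mul, mul_zero, add_zero,
        Matrix.algebraMap_matrix_apply, if_neg hij, zero_add]
  have hspecB : ∀ ν ∈ spectrum ℂ (B.map (Complex.ofReal)), ‖ν‖ < s := by
    intro ν hν
    rw [hBmap, ← spectrum.singleton_add_eq] at hν
    rw [Set.singleton_add] at hν
    obtain ⟨μ, hμ, rfl⟩ := hν
    have hre : μ.re < 0 := hstab μ hμ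
    have hgb : ‖μ‖ ^ 2 / (-(2 * μ.re)) ≤ M₀ := le_trans (hmax hμ) (le_max_left _ _)
    have hsq : ∀ z : ℂ, ‖z‖ ^ 2 = z.re ^ 2 + z.im ^ 2 := by
      intro z
      rw [Complex.sq_norm, Complex.normSq_apply]
      ring
    have hnormsq : ‖(s : ℂ) + μ‖ ^ 2 = s ^ 2 + 2 * s * μ.re + ‖μ‖ ^ 2 := by
      rw [hsq ((s : ℂ) + μ), hsq μ]
      simp only [Complex.add_re, Complex.add_im, Complex.ofReal_re, Complex.ofReal_im, zero_add]
      ring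
    have hμsq : ‖μ‖ ^ 2 ≤ M₀ * (-(2 * μ.re)) := by
      rw [div_le_iff₀ (by nlinarith)] at hgb
      linarith
    have hsM : M₀ + 1 ≤ s := le_of_eq hs.symm
    have hlt : ‖(s : ℂ) + μ‖ ^ 2 < s ^ 2 := by nlinarith
    nlinarith [norm_nonneg ((s : ℂ) + μ)]
  -- spectral radius of C = s⁻¹ • B is < 1
  set C : Matrix (Fin d) (Fin d) ℝ := s⁻¹ • B with hC
  set Cℂ : Matrix (Fin d) (Fin d) ℂ := C.map (Complex.ofReal) with hCℂ
  have hCmap : Cℂ = (Units.mk0 ((s : ℂ)⁻¹) (by simp [hs0.ne'])) • (B.map (Complex.ofReal)) := by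
    ext i j
    simp only [hCℂ, hC, Matrix.map_apply, Matrix.smul_apply, Units.smul_def, Units.val_mk0,
      smul_eq_mul]
    push_cast
    ring
  have hrad : spectralRadius ℂ Cℂ < (1 : ℝ≥0∞) := by
    have h1 : spectralRadius ℂ Cℂ < ((1 : ℝ≥0) : ℝ≥0∞) := by
      apply spectrum.spectralRadius_lt_of_forall_lt
      intro z hz
      rw [hCmap, spectrum.unit_smul_eq_smul] at hz
      obtain ⟨ν, hν, rfl⟩ := hz
      have hb := hspecB ν hν
      have h1 : ‖(Units.mk0 ((s : ℂ)⁻¹) (by simp [hs0.ne'])) • ν‖ < 1 := by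
        rw [Units.smul_def, smul_eq_mul, norm_mul, Units.val_mk0, norm_inv,
          Complex.norm_real, Real.norm_of_nonneg hs0.le]
        have h2 : s⁻¹ * ‖ν‖ < s⁻¹ * s := mul_lt_mul_of_pos_left hb (inv_pos.mpr hs0)
        simpa [inv_mul_cancel₀ hs0.ne'] using h2
      exact_mod_cast h1
    simpa using h1
  -- summability of powers of C (real)
  obtain ⟨r, hr0, hr1, hev⟩ := eventually_norm_pow_le Cℂ hrad
  have hnorm_pow : ∀ n : ℕ, ‖Cℂ ^ n‖ = ‖C ^ n‖ := by
    intro n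
    have hpow : Cℂ ^ n = (C ^ n).map (Complex.ofReal) := by
      calc Cℂ ^ n = ((Complex.ofRealHom.mapMatrix : Matrix (Fin d) (Fin d) ℝ →+* Matrix (Fin d) (Fin d) ℂ) C) ^ n := rfl
        _ = (Complex.ofRealHom.mapMatrix : Matrix (Fin d) (Fin d) ℝ →+* Matrix (Fin d) (Fin d) ℂ) (C ^ n) :=
            (map_pow _ C n).symm
        _ = (C ^ n).map (Complex.ofReal) := rfl
    rw [hpow, norm_map_ofReal]
  have hsum : Summable fun n => C ^ n := by
    apply Summable.of_norm_bounded_eventually_nat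
      (summable_geometric_of_lt_one hr0 hr1)
    filter_upwards [hev] with n hn
    rw [← hnorm_pow]; exact hn
  set T : Matrix (Fin d) (Fin d) ℝ := ∑' n, C ^ n with hT
  have hTinv : (1 - C) * T = 1 := one_sub_mul_tsum_pow hsum
  -- entrywise facts about T
  have hentry : ∀ i j, HasSum (fun n => (C ^ n) i j) (T i j) := by
    intro i j
    have hE := LinearMap.toContinuousLinearMap (Matrix.entryLinearMap ℝ ℝ i j)
    have := hsum.hasSum.mapL (LinearMap.toContinuousLinearMap (Matrix.entryLinearMap ℝ ℝ i j))
    exact this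
  have hCnn : ∀ i j, 0 ≤ C i j := fun i j =>
    mul_nonneg (inv_nonneg.mpr hs0.le) (hBnn i j) |>.trans_eq (by simp [hC, Matrix.smul_apply, smul_eq_mul])
  have hCnn' : ∀ i j, 0 ≤ C i j := by
    intro i j
    have := hBnn i j
    have h2 : C i j = s⁻¹ * B i j := by simp [hC, Matrix.smul_apply, smul_eq_mul]
    rw [h2]
    positivity
  have hTnn : ∀ i j, 0 ≤ T i j := fun i j =>
    (hentry i j).tsum_eq ▸ tsum_nonneg fun n => pow_entries_nonneg hCnn' n i j
  have hTdiag : ∀ i, 1 ≤ T i i := by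
    intro i
    have h0 : ((C ^ 0) i i) = 1 := by simp [Matrix.one_apply]
    have := (hentry i i).summable
    calc (1 : ℝ) = (C ^ 0) i i := h0.symm
      _ ≤ T i i := by
          rw [← (hentry i i).tsum_eq]
          exact Summable.le_tsum this 0 fun n _ => pow_entries_nonneg hCnn' n i i
  -- define v
  set v : Fin d → ℝ := T.mulVec (fun _ => 1) with hv
  have hv1 : ∀ i, 1 ≤ v i := by
    intro i
    have : v i = ∑ j, T i j := by
      simp [hv, Matrix.mulVec, dotProduct]
    rw [this]
    calc (1:ℝ) ≤ T i i := hTdiag i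
      _ ≤ ∑ j, T i j := Finset.single_le_sum (fun j _ => hTnn i j) (Finset.mem_univ i)
  have hveq : (1 - C).mulVec v = fun _ => 1 := by
    rw [hv, Matrix.mulVec_mulVec, hTinv, Matrix.one_mulVec]
  -- compute A.mulVec v
  refine ⟨v, s, hs0, hv1, ?_⟩
  funext i
  have h1 : ((1 - C).mulVec v) i = 1 := congrFun hveq i
  have h2 : ((1 - C).mulVec v) i = v i - s⁻¹ * ((A.mulVec v) i + s * v i) := by
    rw [Matrix.sub_mulVec]
    simp only [Pi.sub_apply, Matrix.one_mulVec]
    congr 1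
    have : C.mulVec v = s⁻¹ • (B.mulVec v) := by
      rw [hC, Matrix.smul_mulVec]
    rw [this, hB, Matrix.add_mulVec, Matrix.smul_mulVec, Matrix.one_mulVec]
    simp [smul_eq_mul]
  rw [h2]  at h1
  have hs' : s ≠ 0 := hs0.ne'
  field_simp at h1
  linarith

open DriftAux in
/-- Drift condition **DD1** for unimolecular networks whose drift has the affine form
`xᵀ A v + bᵀ v`, when `A` is a Hurwitz-stable Metzler matrix and `b ≥ 0`, `b ≠ 0`. -/
theorem unimolecular_drift_condition {d : ℕ} (A : Matrix (Fin d) (Fin d) ℝ)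
    (hA : A.Metzler) (hstab : A.HurwitzStable)
    (b : Fin d → ℝ) (hb : ∀ i, 0 ≤ b i) (hbne : b ≠ 0) :
    ∃ v : Fin d → ℝ, (∀ i, 0 < v i) ∧ ∃ c₁ > (0 : ℝ), ∃ c₂ > (0 : ℝ),
      ∀ x : Fin d → ℝ, (∀ i, 0 ≤ x i) →
        x ⬝ᵥ A.mulVec v + b ⬝ᵥ v ≤ c₁ - c₂ * (v ⬝ᵥ x) := by
  rcases Nat.eq_zero_or_pos d with hd | hd
  · subst hd
    exact absurd (Subsingleton.elim b 0) hbne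
  obtain ⟨v, s, hs0, hv1, hAv⟩ := exists_pos_vec hd A hA hstab
  set S : ℝ := ∑ i, v i with hS
  have hvpos : ∀ i, 0 < v i := fun i => lt_of_lt_of_le one_pos (hv1 i)
  have hSpos : 0 < S := by
    have : Nonempty (Fin d) := ⟨⟨0, hd⟩⟩
    exact Finset.sum_pos (fun i _ => hvpos i) Finset.univ_nonempty
  have hvleS : ∀ i, v i ≤ S :=
    fun i => Finset.single_le_sum (fun j _ => (hvpos j).le) (Finset.mem_univ i)
  refine ⟨v, hvpos, b ⬝ᵥ v + 1, ?_, s / S, div_pos hs0 hSpos, ?_⟩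
  · have hbv : 0 ≤ b ⬝ᵥ v :=
      Finset.sum_nonneg fun i _ => mul_nonneg (hb i) (hvpos i).le
    linarith
  · intro x hx
    have hxAv : x ⬝ᵥ A.mulVec v = -s * ∑ i, x i := by
      rw [hAv]
      simp [dotProduct, Finset.mul_sum]
      ring_nf
      exact Finset.sum_congr rfl fun i _ => by ring
    have hkey : (s / S) * (v ⬝ᵥ x) ≤ s * ∑ i, x i := by
      have : (s / S) * (v ⬝ᵥ x) = ∑ i, (s / S) * (v i * x i) := by
        simp [dotProduct, Finset.mul_sum]
      rw [this, Finset.mul_sum]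
      apply Finset.sum_le_sum
      intro i _
      have h1 : (s / S) * v i ≤ s := by
        rw [div_mul_eq_mul_div, div_le_iff₀ hSpos]
        nlinarith [hvleS i, hvpos i]
      calc (s / S) * (v i * x i) = ((s / S) * v i) * x i := by ring
        _ ≤ s * x i := mul_le_mul_of_nonneg_right h1 (hx i)
    rw [hxAv]
    linarith
end

section
/- Fix α ∈ ℝ and consider the planar ODE system κ̇₁ = 1 − κ₁κ₂, κ̇₂ = 1 − κ₁κ₂ on the nonnegative quadrant. Let κ₁* = (−α + √(α² + 4))/2 and κ₂* = (α + √(α² + 4))/2. Then (i) (κ₁*, κ₂*) is the unique point (a, b) with a, b ≥ 0, b − a = α and a·b = 1 (i.e., the unique equilibrium on the invariant set {κ₂ − κ₁ = α}); and (ii) for every differentiable solution κ : [0,∞) → ℝ² with κ₁(t), κ₂(t) ≥ 0 for all t, κ₁'(t) = 1 − κ₁(t)κ₂(t), κ₂'(t) = 1 − κ₁(t)κ₂(t), and κ₂(0) − κ₁(0) = α, there exist constants C > 0 and λ > 0 such that |κ₁(t) − κ₁*| + |κ₂(t) − κ₂*| ≤ C e^{−λ t} for all t ≥ 0. In other words,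 the equilibrium (κ₁*, κ₂*) is globally exponentially stable. -/
/-- The deterministic model of the network `∅ → X₁`, `∅ → X₂`, `X₁ + X₂ → ∅`:
the equilibrium `(κ₁*, κ₂*)` is the unique equilibrium on the invariant set
`{κ₂ - κ₁ = α}` and it is globally exponentially stable. -/
theorem integrator_network_deterministic_global_exponential_stability (α : ℝ) :
    let κ₁s : ℝ := (-α + Real.sqrt (α ^ 2 + 4)) / 2
    let κ₂s : ℝ := (α + Real.sqrt (α ^ 2 + 4)) / 2
    -- (i) (κ₁*, κ₂*) is the unique point (a, b) with a, b ≥ 0, b - a = α and a * b = 1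
    (0 ≤ κ₁s ∧ 0 ≤ κ₂s ∧ κ₂s - κ₁s = α ∧ κ₁s * κ₂s = 1) ∧
    (∀ a b : ℝ, 0 ≤ a → 0 ≤ b → b - a = α → a * b = 1 → a = κ₁s ∧ b = κ₂s) ∧
    -- (ii) global exponential stability
    (∀ κ₁ κ₂ : ℝ → ℝ,
      (∀ t ∈ Set.Ici (0 : ℝ), 0 ≤ κ₁ t ∧ 0 ≤ κ₂ t) →
      (∀ t ∈ Set.Ici (0 : ℝ),
        HasDerivWithinAt κ₁ (1 - κ₁ t * κ₂ t) (Set.Ici (0 : ℝ)) t) →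
      (∀ t ∈ Set.Ici (0 : ℝ),
        HasDerivWithinAt κ₂ (1 - κ₁ t * κ₂ t) (Set.Ici (0 : ℝ)) t) →
      κ₂ 0 - κ₁ 0 = α →
      ∃ C > (0 : ℝ), ∃ lam > (0 : ℝ), ∀ t ∈ Set.Ici (0 : ℝ),
        |κ₁ t - κ₁s| + |κ₂ t - κ₂s| ≤ C * Real.exp (-lam * t)) := by
  intro κ₁s κ₂s
  have hs0 : 0 ≤ Real.sqrt (α ^ 2 + 4) := Real.sqrt_nonneg _
  have hs2 : Real.sqrt (α ^ 2 + 4) ^ 2 = α ^ 2 + 4 := Real.sq_sqrt (by positivity)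
  set s : ℝ := Real.sqrt (α ^ 2 + 4) with hsdef
  have hαs : α < s := by nlinarith
  have hαs' : -α < s := by nlinarith
  have hκ₁s : κ₁s = (-α + s) / 2 := rfl
  have hκ₂s : κ₂s = (α + s) / 2 := rfl
  have h1pos : 0 < κ₁s := by rw [hκ₁s]; linarith
  have h2pos : 0 < κ₂s := by rw [hκ₂s]; linarith
  have hsub : κ₂s - κ₁s = α := by rw [hκ₁s, hκ₂s]; ring
  have hmul : κ₁s * κ₂s = 1 := by rw [hκ₁s, hκ₂s]; nlinarith
  refine ⟨⟨h1pos.le, h2pos.le, hsub, hmul⟩, ?_, ?_⟩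
  · intro a b ha hb hba hab
    have ha' : a = κ₁s := by
      have key : (a - κ₁s) * (a + κ₂s) = 0 := by nlinarith
      rcases mul_eq_zero.mp key with h | h
      · linarith
      · linarith
    exact ⟨ha', by linarith⟩
  · intro κ₁ κ₂ hnn h₁ h₂ h0
    have hc₁ : ContinuousOn κ₁ (Set.Ici 0) := fun x hx => (h₁ x hx).continuousWithinAt
    have hc₂ : ContinuousOn κ₂ (Set.Ici 0) := fun x hx => (h₂ x hx).continuousWithinAt
    -- conservation of κ₂ - κ₁
    have hconst : ∀ t ∈ Set.Ici (0 : ℝ), κ₂ t - κ₁ t = α := by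
      intro t ht
      have key := constant_of_has_deriv_right_zero
        (f := fun x => κ₂ x - κ₁ x) (a := 0) (b := t)
        ((hc₂.sub hc₁).mono (Set.Icc_subset_Ici_self))
        (fun x hx => by
          have h := ((h₂ x hx.1).sub (h₁ x hx.1)).mono (Set.Ici_subset_Ici.2 hx.1)
          rw [sub_self] at h; exact h)
        t ⟨ht, le_refl t⟩
      linarith [h0, key]
    have hκ₂eq : ∀ t ∈ Set.Ici (0 : ℝ), κ₂ t = κ₁ t + α := by
      intro t ht; linarith [hconst t ht]
    -- the Lyapunov-type function
    set g : ℝ → ℝ := fun x => (κ₁ x - κ₁s) ^ 2 * Real.exp (2 * κ₂s * x) with hg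
    have hD : ∀ x : ℝ, 0 < x → HasDerivAt g
        ((2 * (κ₁ x - κ₁s) ^ 1 * (1 - κ₁ x * κ₂ x)) * Real.exp (2 * κ₂s * x)
          + (κ₁ x - κ₁s) ^ 2 * (Real.exp (2 * κ₂s * x) * (2 * κ₂s * 1))) x := by
      intro x hx
      have h1 : HasDerivAt κ₁ (1 - κ₁ x * κ₂ x) x :=
        (h₁ x hx.le).hasDerivAt (Ici_mem_nhds hx)
      have hE : HasDerivAt (fun y => Real.exp (2 * κ₂s * y))
          (Real.exp (2 * κ₂s * x) * (2 * κ₂s * 1)) x :=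
        ((hasDerivAt_id x).const_mul (2 * κ₂s)).exp
      exact ((h1.sub_const κ₁s).pow 2).mul hE
    have hDval : ∀ x : ℝ, 0 < x →
        (2 * (κ₁ x - κ₁s) ^ 1 * (1 - κ₁ x * κ₂ x)) * Real.exp (2 * κ₂s * x)
          + (κ₁ x - κ₁s) ^ 2 * (Real.exp (2 * κ₂s * x) * (2 * κ₂s * 1))
        = -2 * Real.exp (2 * κ₂s * x) * (κ₁ x - κ₁s) ^ 2 * κ₁ x := by
      intro x hx
      have h2 : κ₂ x = κ₁ x + α := hκ₂eq x hx.le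
      rw [h2]
      linear_combination (-(2 * Real.exp (2 * κ₂s * x) * (κ₁ x - κ₁s))) * hmul
        + (2 * Real.exp (2 * κ₂s * x) * (κ₁ x - κ₁s) * (κ₁ x)) * hsub
    have hanti : AntitoneOn g (Set.Ici 0) := by
      apply antitoneOn_of_deriv_nonpos (convex_Ici 0)
      · exact ((hc₁.sub continuousOn_const).pow 2).mul
          (Real.continuous_exp.comp (continuous_const.mul continuous_id)).continuousOn
      · intro x hx
        rw [interior_Ici] at hx
        exact (hD x hx).differentiableAt.differentiableWithinAt
      · intro x hx
        rw [interior_Ici] at hx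
        rw [(hD x hx).deriv, hDval x hx]
        have hE := (Real.exp_pos (2 * κ₂s * x)).le
        have hκ := (hnn x (Set.mem_Ici.2 hx.le)).1
        nlinarith [mul_nonneg (mul_nonneg hE (sq_nonneg (κ₁ x - κ₁s))) hκ]
    -- conclusion
    refine ⟨2 * |κ₁ 0 - κ₁s| + 1, by positivity, κ₂s, h2pos, ?_⟩
    intro t ht
    have hgle : g t ≤ g 0 := hanti (Set.self_mem_Ici) ht ht
    have hg0 : g 0 = (κ₁ 0 - κ₁s) ^ 2 := by simp [hg]
    have hexp2 : Real.exp (2 * κ₂s * t) = Real.exp (κ₂s * t) * Real.exp (κ₂s * t) := by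
      rw [← Real.exp_add]; ring_nf
    have key : (κ₁ t - κ₁s) ^ 2 * (Real.exp (κ₂s * t) * Real.exp (κ₂s * t))
        ≤ (κ₁ 0 - κ₁s) ^ 2 := by
      rw [← hexp2]; rw [hg0] at hgle; exact hgle
    have h3 : |κ₁ t - κ₁s| * Real.exp (κ₂s * t) ≤ |κ₁ 0 - κ₁s| := by
      nlinarith [abs_nonneg (κ₁ t - κ₁s), abs_nonneg (κ₁ 0 - κ₁s),
        (Real.exp_pos (κ₂s * t)).le, sq_abs (κ₁ t - κ₁s), sq_abs (κ₁ 0 - κ₁s),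
        Real.exp_pos (κ₂s * t)]
    have h2t : κ₂ t - κ₂s = κ₁ t - κ₁s := by
      have := hconst t ht; linarith
    rw [h2t, show -κ₂s * t = -(κ₂s * t) by ring, Real.exp_neg, ← div_eq_mul_inv,
      le_div_iff₀ (Real.exp_pos _)]
    nlinarith [abs_nonneg (κ₁ t - κ₁s), Real.exp_pos (κ₂s * t), h3]
end

section
/- Consider the reaction network ∅ → X₁ (propensity 1), ∅ → X₂ (propensity 1), X₁ + X₂ → ∅ (propensity x₁x₂ in state x = (x₁,x₂)). Its Chemical Master Equation for a family p : [0,∞) → (ℕ² → ℝ) reads, for each y = (y₁,y₂) ∈ ℕ²: dp(t,y)/dt = p(t,(y₁−1,y₂)) + p(t,(y₁,y₂−1)) + (y₁+1)(y₂+1)·p(t,(y₁+1,y₂+1)) − (2 + y₁y₂)·p(t,y), where terms with a negative coordinate are taken to be zero. Suppose p(t,y) ≥ 0 for all t, y; Σ_y p(t,y) = 1 for all t; t ↦ p(t,y) is differentiable and satisfies the above equation for every y; the sums g(t) = Σ_y (y₁ − y₂) p(t,y) and h(t) = Σ_y (y₁ − y₂)² p(t,y) converge absolutely for each t, are differentiable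 in t, and their derivatives are obtained by term-wise differentiation. If g(0) = α and h(0) = α², then g(t) = α and h(t) = α² + 2t for all t ≥ 0. In particular, the second moments of the solution of this Chemical Master Equation grow unboundedly with time. -/
open Filter Set MeasureTheory Topology

namespace CMEaux

/-- signed difference of coordinates -/
def dd (y : ℕ × ℕ) : ℝ := (y.1 : ℝ) - (y.2 : ℝ)

/-- boxes -/
def BB (N : ℕ) : Finset (ℕ × ℕ) := Finset.range (N+1) ×ˢ Finset.range (N+1)
def box1 (N : ℕ) : Finset (ℕ × ℕ) := Finset.range N ×ˢ Finset.range (N+1)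
def box2 (N : ℕ) : Finset (ℕ × ℕ) := Finset.range (N+1) ×ˢ Finset.range N

lemma BB_mono : Monotone BB := fun a b hab => by
  refine Finset.product_subset_product ?_ ?_ <;> exact Finset.range_subset_range.2 (by omega)

lemma box1_mono : Monotone box1 := fun a b hab => by
  refine Finset.product_subset_product ?_ ?_ <;> exact Finset.range_subset_range.2 (by omega)

lemma box2_mono : Monotone box2 := fun a b hab => by
  refine Finset.product_subset_product ?_ ?_ <;> exact Finset.range_subset_range.2 (by omega)

lemma BB_exh (x : ℕ × ℕ) : ∃ N, x ∈ BB N :=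
  ⟨x.1 + x.2, by simp only [BB, Finset.mem_product, Finset.mem_range]; omega⟩

lemma box1_exh (x : ℕ × ℕ) : ∃ N, x ∈ box1 N :=
  ⟨x.1 + x.2 + 1, by simp only [box1, Finset.mem_product, Finset.mem_range]; omega⟩

lemma box2_exh (x : ℕ × ℕ) : ∃ N, x ∈ box2 N :=
  ⟨x.1 + x.2 + 1, by simp only [box2, Finset.mem_product, Finset.mem_range]; omega⟩

lemma box1_subset (N : ℕ) : box1 N ⊆ BB N :=
  Finset.product_subset_product (Finset.range_subset_range.2 (by omega)) subset_rfl

lemma box2_subset (N : ℕ) : box2 N ⊆ BB N :=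
  Finset.product_subset_product subset_rfl (Finset.range_subset_range.2 (by omega))

lemma tendsto_sum_box {v : ℕ × ℕ → ℝ} (hv : Summable v) {A : ℕ → Finset (ℕ × ℕ)}
    (hA : Monotone A) (hA2 : ∀ x, ∃ N, x ∈ A N) :
    Tendsto (fun N => ∑ y ∈ A N, v y) atTop (𝓝 (∑' y, v y)) :=
  hv.hasSum.comp (tendsto_atTop_finset_of_monotone hA hA2)

/-- partial sums with weight -/
noncomputable def WS (p : ℝ → ℕ × ℕ → ℝ) (w : ℕ × ℕ → ℝ) (N : ℕ) (s : ℝ) : ℝ :=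
  ∑ y ∈ BB N, w y * p s y

noncomputable def T1 (p : ℝ → ℕ × ℕ → ℝ) (w : ℕ × ℕ → ℝ) (N : ℕ) (s : ℝ) : ℝ :=
  ∑ z ∈ box1 N, w (z.1 + 1, z.2) * p s z

noncomputable def T2 (p : ℝ → ℕ × ℕ → ℝ) (w : ℕ × ℕ → ℝ) (N : ℕ) (s : ℝ) : ℝ :=
  ∑ z ∈ box2 N, w (z.1, z.2 + 1) * p s z

noncomputable def VS (p : ℝ → ℕ × ℕ → ℝ) (w : ℕ × ℕ → ℝ) (N : ℕ) (s : ℝ) : ℝ :=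
  ∑ z ∈ BB N, w z * ((z.1 : ℝ) * (z.2 : ℝ)) * p s z

noncomputable def US (p : ℝ → ℕ × ℕ → ℝ) (w : ℕ × ℕ → ℝ) (N : ℕ) (s : ℝ) : ℝ :=
  T1 p w N s + T2 p w N s - 2 * WS p w N s

/-- the key finite-box identity -/
lemma box_identity (p : ℝ → ℕ × ℕ → ℝ) (w : ℕ × ℕ → ℝ)
    (hwd : ∀ a b : ℕ, w (a + 1, b + 1) = w (a, b)) (s : ℝ) (N : ℕ)
    (dpv : ℕ × ℕ → ℝ)
    (hdpv : ∀ y : ℕ × ℕ, dpv y =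
        (if y.1 = 0 then 0 else p s (y.1 - 1, y.2)) +
        (if y.2 = 0 then 0 else p s (y.1, y.2 - 1)) +
        ((y.1 : ℝ) + 1) * ((y.2 : ℝ) + 1) * p s (y.1 + 1, y.2 + 1) -
        (2 + (y.1 : ℝ) * (y.2 : ℝ)) * p s y) :
    ∑ y ∈ BB N, w y * dpv y = US p w N s + (VS p w (N+1) s - VS p w N s) := by
  have claimA : ∑ y ∈ BB N, w y * (if y.1 = 0 then 0 else p s (y.1 - 1, y.2)) = T1 p w N s := by
    simp only [BB, T1, box1]
    rw [Finset.sum_product, Finset.sum_product, Finset.sum_range_succ']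
    simp [Nat.succ_sub_one]
  have claimB : ∑ y ∈ BB N, w y * (if y.2 = 0 then 0 else p s (y.1, y.2 - 1)) = T2 p w N s := by
    simp only [BB, T2, box2]
    rw [Finset.sum_product, Finset.sum_product]
    refine Finset.sum_congr rfl fun i _ => ?_
    rw [Finset.sum_range_succ']
    simp [Nat.succ_sub_one]
  have claimC : ∑ y ∈ BB N, w y * (((y.1 : ℝ) + 1) * ((y.2 : ℝ) + 1) * p s (y.1 + 1, y.2 + 1))
      = VS p w (N+1) s := by
    have inner : ∀ i : ℕ, ∑ j ∈ Finset.range (N + 2),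
        w (i + 1, j) * (((i + 1 : ℕ) : ℝ) * (j : ℝ)) * p s (i + 1, j)
        = ∑ j ∈ Finset.range (N + 1),
          w (i + 1, j + 1) * (((i + 1 : ℕ) : ℝ) * ((j + 1 : ℕ) : ℝ)) * p s (i + 1, j + 1) := by
      intro i
      rw [Finset.sum_range_succ']
      simp
    have outer : VS p w (N+1) s = ∑ i ∈ Finset.range (N + 1), ∑ j ∈ Finset.range (N + 2),
        w (i + 1, j) * (((i + 1 : ℕ) : ℝ) * (j : ℝ)) * p s (i + 1, j) := by
      simp only [VS, BB]
      rw [Finset.sum_product, Finset.sum_range_succ']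
      simp
    rw [outer]
    simp only [inner, hwd]
    simp only [BB]
    rw [Finset.sum_product]
    refine Finset.sum_congr rfl fun i _ => Finset.sum_congr rfl fun j _ => ?_
    push_cast
    ring
  have claimD : ∑ y ∈ BB N, w y * ((2 + (y.1 : ℝ) * (y.2 : ℝ)) * p s y)
      = 2 * WS p w N s + VS p w N s := by
    simp only [WS, VS, Finset.mul_sum, ← Finset.sum_add_distrib]
    refine Finset.sum_congr rfl fun y _ => by ring
  calc ∑ y ∈ BB N, w y * dpv y
      = ∑ y ∈ BB N, (w y * (if y.1 = 0 then 0 else p s (y.1 - 1, y.2))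
        + w y * (if y.2 = 0 then 0 else p s (y.1, y.2 - 1))
        + w y * (((y.1 : ℝ) + 1) * ((y.2 : ℝ) + 1) * p s (y.1 + 1, y.2 + 1))
        - w y * ((2 + (y.1 : ℝ) * (y.2 : ℝ)) * p s y)) := by
        refine Finset.sum_congr rfl fun y _ => ?_
        rw [hdpv y]; ring
    _ = T1 p w N s + T2 p w N s + VS p w (N+1) s - (2 * WS p w N s + VS p w N s) := by
        rw [← claimA, ← claimB, ← claimC, ← claimD]
        rw [Finset.sum_sub_distrib, Finset.sum_add_distrib, Finset.sum_add_distrib]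
    _ = US p w N s + (VS p w (N+1) s - VS p w N s) := by rw [US]; ring


section Dynamics

variable {p dp : ℝ → ℕ × ℕ → ℝ}
variable (hnonneg : ∀ t ∈ Set.Ici (0 : ℝ), ∀ y : ℕ × ℕ, 0 ≤ p t y)
variable (hnorm : ∀ t ∈ Set.Ici (0 : ℝ), HasSum (p t) 1)
variable (hderiv : ∀ y : ℕ × ℕ, ∀ t ∈ Set.Ici (0 : ℝ),
      HasDerivWithinAt (fun s => p s y) (dp t y) (Set.Ici (0 : ℝ)) t)
variable (hCME : ∀ t ∈ Set.Ici (0 : ℝ), ∀ y : ℕ × ℕ,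
      dp t y =
        (if y.1 = 0 then 0 else p t (y.1 - 1, y.2)) +
        (if y.2 = 0 then 0 else p t (y.1, y.2 - 1)) +
        ((y.1 : ℝ) + 1) * ((y.2 : ℝ) + 1) * p t (y.1 + 1, y.2 + 1) -
        (2 + (y.1 : ℝ) * (y.2 : ℝ)) * p t y)

include hderiv in
lemma p_contOn (y : ℕ × ℕ) : ContinuousOn (fun s => p s y) (Set.Ici 0) :=
  fun x hx => (hderiv y x hx).continuousWithinAt

include hderiv hCME in
lemma dp_contOn (y : ℕ × ℕ) : ContinuousOn (fun s => dp s y) (Set.Ici 0) := by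
  have : EqOn (fun s => dp s y)
      (fun s => (if y.1 = 0 then 0 else p s (y.1 - 1, y.2)) +
        (if y.2 = 0 then 0 else p s (y.1, y.2 - 1)) +
        ((y.1 : ℝ) + 1) * ((y.2 : ℝ) + 1) * p s (y.1 + 1, y.2 + 1) -
        (2 + (y.1 : ℝ) * (y.2 : ℝ)) * p s y) (Set.Ici 0) := fun s hs => hCME s hs y
  refine ContinuousOn.congr ?_ this
  have hc : ∀ z : ℕ × ℕ, ContinuousOn (fun s => p s z) (Set.Ici (0:ℝ)) := p_contOn hderiv
  refine ContinuousOn.sub (ContinuousOn.add (ContinuousOn.add ?_ ?_) ?_) ?_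
  · split_ifs
    · exact continuousOn_const
    · exact hc _
  · split_ifs
    · exact continuousOn_const
    · exact hc _
  · exact continuousOn_const.mul (hc _)
  · exact continuousOn_const.mul (hc _)

include hderiv in
lemma WS_contOn (w : ℕ × ℕ → ℝ) (N : ℕ) : ContinuousOn (fun s => WS p w N s) (Set.Ici 0) := by
  apply continuousOn_finset_sum
  exact fun y _ => continuousOn_const.mul (p_contOn hderiv y)

include hderiv in
lemma VS_contOn (w : ℕ × ℕ → ℝ) (N : ℕ) : ContinuousOn (fun s => VS p w N s) (Set.Ici 0) := by
  apply continuousOn_finset_sum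
  exact fun y _ => continuousOn_const.mul (p_contOn hderiv y)

include hderiv in
lemma T1_contOn (w : ℕ × ℕ → ℝ) (N : ℕ) : ContinuousOn (fun s => T1 p w N s) (Set.Ici 0) := by
  apply continuousOn_finset_sum
  exact fun y _ => continuousOn_const.mul (p_contOn hderiv y)

include hderiv in
lemma T2_contOn (w : ℕ × ℕ → ℝ) (N : ℕ) : ContinuousOn (fun s => T2 p w N s) (Set.Ici 0) := by
  apply continuousOn_finset_sum
  exact fun y _ => continuousOn_const.mul (p_contOn hderiv y)

include hderiv in
lemma US_contOn (w : ℕ × ℕ → ℝ) (N : ℕ) : ContinuousOn (fun s => US p w N s) (Set.Ici 0) := by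
  simp only [US]
  exact ((T1_contOn hderiv w N).add (T2_contOn hderiv w N)).sub
    (continuousOn_const.mul (WS_contOn hderiv w N))

/-- interval integrability of anything continuous on `Ici 0` -/
lemma ii_of_contOn {F : ℝ → ℝ} {t : ℝ} (ht : 0 ≤ t) (hF : ContinuousOn F (Set.Ici 0)) :
    IntervalIntegrable F volume 0 t :=
  (hF.mono (by rw [Set.uIcc_of_le ht]; exact fun x hx => hx.1)).intervalIntegrable

include hderiv hCME in
/-- fundamental theorem of calculus for box sums, combined with the box identity -/
lemma ftc_box (w : ℕ × ℕ → ℝ) (hwd : ∀ a b : ℕ, w (a + 1, b + 1) = w (a, b))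
    {t : ℝ} (ht : 0 ≤ t) (N : ℕ) :
    WS p w N t - WS p w N 0 = (∫ s in (0:ℝ)..t, US p w N s)
      + ((∫ s in (0:ℝ)..t, VS p w (N+1) s) - ∫ s in (0:ℝ)..t, VS p w N s) := by
  have key : ∫ s in (0:ℝ)..t, (∑ y ∈ BB N, w y * dp s y) = WS p w N t - WS p w N 0 := by
    apply intervalIntegral.integral_eq_sub_of_hasDeriv_right_of_le ht
    · exact (WS_contOn hderiv w N).mono (fun x hx => hx.1)
    · intro x hx
      have hx0 : x ∈ Set.Ici (0:ℝ) := le_of_lt hx.1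
      have := HasDerivWithinAt.fun_sum (u := BB N)
        (fun y _ => ((hderiv y x hx0).const_mul (w y)))
      exact this.mono (fun z hz => le_of_lt (lt_trans hx.1 hz))
    · apply ii_of_contOn ht
      apply continuousOn_finset_sum
      exact fun y _ => continuousOn_const.mul (dp_contOn hderiv hCME y)
  have congr1 : ∫ s in (0:ℝ)..t, (∑ y ∈ BB N, w y * dp s y)
      = ∫ s in (0:ℝ)..t, (US p w N s + (VS p w (N+1) s - VS p w N s)) := by
    apply intervalIntegral.integral_congr
    intro s hs
    rw [Set.uIcc_of_le ht] at hs
    exact box_identity p w hwd s N (dp s) (fun y => hCME s hs.1 y)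
  rw [congr1] at key
  rw [← key]
  rw [intervalIntegral.integral_add (ii_of_contOn ht (US_contOn hderiv w N))
      (ii_of_contOn ht ((VS_contOn hderiv w (N+1)).fun_sub (VS_contOn hderiv w N))),
    intervalIntegral.integral_sub (ii_of_contOn ht (VS_contOn hderiv w (N+1)))
      (ii_of_contOn ht (VS_contOn hderiv w N))]

/-- dominated convergence wrapper for our setting -/
lemma dct_box {t : ℝ} (ht : 0 ≤ t) (F : ℕ → ℝ → ℝ) (φ : ℝ → ℝ) (M : ℝ)
    (hFc : ∀ N, ContinuousOn (F N) (Set.Ici 0))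
    (hFb : ∀ N, ∀ s ∈ Set.Ioc 0 t, |F N s| ≤ M)
    (hlim : ∀ s ∈ Set.Ioc 0 t, Tendsto (fun N => F N s) atTop (𝓝 (φ s))) :
    Tendsto (fun N => ∫ s in (0:ℝ)..t, F N s) atTop (𝓝 (∫ s in (0:ℝ)..t, φ s)) := by
  have huIoc : Set.uIoc (0:ℝ) t = Set.Ioc 0 t := Set.uIoc_of_le ht
  apply intervalIntegral.tendsto_integral_filter_of_dominated_convergence (bound := fun _ => M)
  · filter_upwards with N
    apply ContinuousOn.aestronglyMeasurable _ measurableSet_uIoc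
    refine (hFc N).mono ?_
    rw [huIoc]
    exact fun x hx => le_of_lt hx.1
  · filter_upwards with N
    filter_upwards with x
    intro hx
    rw [huIoc] at hx
    simpa [Real.norm_eq_abs] using hFb N x hx
  · exact intervalIntegrable_const
  · filter_upwards with x
    intro hx
    rw [huIoc] at hx
    exact hlim x hx

include hnonneg hnorm in
lemma sum_box_le_one {s : ℝ} (hs : s ∈ Set.Ici (0:ℝ)) (A : Finset (ℕ × ℕ)) :
    ∑ y ∈ A, p s y ≤ 1 := by
  have := Summable.sum_le_tsum A (fun y _ => hnonneg s hs y) (hnorm s hs).summable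
  rwa [(hnorm s hs).tsum_eq] at this

include hnonneg hnorm hderiv hCME in
/-- the integrals of the `V`-differences tend to `0` (no annihilation flux from infinity) -/
lemma Vdiff_tendsto {t : ℝ} (ht : 0 ≤ t) :
    Tendsto (fun N => (∫ s in (0:ℝ)..t, VS p (fun _ => 1) (N+1) s)
      - ∫ s in (0:ℝ)..t, VS p (fun _ => 1) N s) atTop (𝓝 0) := by
  have hwd : ∀ a b : ℕ, (fun (_ : ℕ × ℕ) => (1:ℝ)) (a+1, b+1) = 1 := fun _ _ => rfl
  have hkey : ∀ N, (∫ s in (0:ℝ)..t, VS p (fun _ => 1) (N+1) s)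
      - ∫ s in (0:ℝ)..t, VS p (fun _ => 1) N s
      = (WS p (fun _ => 1) N t - WS p (fun _ => 1) N 0) - ∫ s in (0:ℝ)..t, US p (fun _ => 1) N s := by
    intro N
    have := ftc_box hderiv hCME (fun _ => 1) hwd ht N
    linarith [this]
  simp only [hkey]
  have h1 : Tendsto (fun N => WS p (fun _ => 1) N t) atTop (𝓝 1) := by
    have := tendsto_sum_box (hnorm t (le_refl 0 |>.trans ht)).summable BB_mono BB_exh
    rw [(hnorm t ht).tsum_eq] at this
    simpa [WS] using this
  have h0 : Tendsto (fun N => WS p (fun _ => 1) N 0) atTop (𝓝 1) := by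
    have := tendsto_sum_box (hnorm 0 (Set.mem_Ici.mpr le_rfl)).summable BB_mono BB_exh
    rw [(hnorm 0 (Set.mem_Ici.mpr le_rfl)).tsum_eq] at this
    simpa [WS] using this
  have hU : Tendsto (fun N => ∫ s in (0:ℝ)..t, US p (fun _ => 1) N s) atTop
      (𝓝 (∫ s in (0:ℝ)..t, (0:ℝ))) := by
    apply dct_box ht _ _ 4
    · exact fun N => US_contOn hderiv (fun _ => 1) N
    · intro N s hs
      have hs' : s ∈ Set.Ici (0:ℝ) := le_of_lt hs.1
      have b1 : 0 ≤ T1 p (fun _ => 1) N s := Finset.sum_nonneg fun y _ => by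
        simpa using hnonneg s hs' y
      have b1' : T1 p (fun _ => 1) N s ≤ 1 := by
        simpa [T1] using sum_box_le_one hnonneg hnorm hs' (box1 N)
      have b2 : 0 ≤ T2 p (fun _ => 1) N s := Finset.sum_nonneg fun y _ => by
        simpa using hnonneg s hs' y
      have b2' : T2 p (fun _ => 1) N s ≤ 1 := by
        simpa [T2] using sum_box_le_one hnonneg hnorm hs' (box2 N)
      have b3 : 0 ≤ WS p (fun _ => 1) N s := Finset.sum_nonneg fun y _ => by
        simpa using hnonneg s hs' y
      have b3' : WS p (fun _ => 1) N s ≤ 1 := by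
        simpa [WS] using sum_box_le_one hnonneg hnorm hs' (BB N)
      rw [US, abs_le]
      constructor <;> nlinarith
    · intro s hs
      have hs' : s ∈ Set.Ici (0:ℝ) := le_of_lt hs.1
      have hsummable := (hnorm s hs').summable
      have e1 : Tendsto (fun N => T1 p (fun _ => 1) N s) atTop (𝓝 1) := by
        have := tendsto_sum_box hsummable box1_mono box1_exh
        rw [(hnorm s hs').tsum_eq] at this
        simpa [T1] using this
      have e2 : Tendsto (fun N => T2 p (fun _ => 1) N s) atTop (𝓝 1) := by
        have := tendsto_sum_box hsummable box2_mono box2_exh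
        rw [(hnorm s hs').tsum_eq] at this
        simpa [T2] using this
      have e3 : Tendsto (fun N => WS p (fun _ => 1) N s) atTop (𝓝 1) := by
        have := tendsto_sum_box hsummable BB_mono BB_exh
        rw [(hnorm s hs').tsum_eq] at this
        simpa [WS] using this
      have : Tendsto (fun N => US p (fun _ => 1) N s) atTop (𝓝 (1 + 1 - 2 * 1)) := by
        simp only [US]
        exact (e1.add e2).sub (e3.const_mul 2)
      have h0 : (1:ℝ) + 1 - 2 * 1 = 0 := by norm_num
      rwa [h0] at this
  rw [intervalIntegral.integral_zero] at hU
  have := (h1.sub h0).sub hU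
  simpa using this

include hnonneg hnorm in
lemma w_summable {s : ℝ} (hs : s ∈ Set.Ici (0:ℝ)) (w : ℕ × ℕ → ℝ) (C : ℝ)
    (hwb : ∀ y, |w y| ≤ C) : Summable (fun y => w y * p s y) := by
  refine Summable.of_norm_bounded ((hnorm s hs).summable.mul_left C) ?_
  intro y
  rw [Real.norm_eq_abs, abs_mul, abs_of_nonneg (hnonneg s hs y)]
  exact mul_le_mul_of_nonneg_right (hwb y) (hnonneg s hs y)

include hnonneg hnorm hderiv hCME in
/-- THE CORE LEMMA: the integral of `US` converges to the change of the `w`-moment. -/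
lemma core (w : ℕ × ℕ → ℝ) (C : ℝ) (hwb : ∀ y, |w y| ≤ C)
    (hwd : ∀ a b : ℕ, w (a+1, b+1) = w (a, b)) {t : ℝ} (ht : 0 ≤ t) :
    Tendsto (fun N => ∫ s in (0:ℝ)..t, US p w N s) atTop
      (𝓝 ((∑' y, w y * p t y) - (∑' y, w y * p 0 y))) := by
  have ht' : t ∈ Set.Ici (0:ℝ) := ht
  have h0' : (0:ℝ) ∈ Set.Ici (0:ℝ) := Set.mem_Ici.mpr le_rfl
  have hWt : Tendsto (fun N => WS p w N t) atTop (𝓝 (∑' y, w y * p t y)) :=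
    tendsto_sum_box (w_summable hnonneg hnorm ht' w C hwb) BB_mono BB_exh
  have hW0 : Tendsto (fun N => WS p w N 0) atTop (𝓝 (∑' y, w y * p 0 y)) :=
    tendsto_sum_box (w_summable hnonneg hnorm h0' w C hwb) BB_mono BB_exh
  -- the V-difference integrals tend to 0
  have hqr : Tendsto (fun N => (∫ s in (0:ℝ)..t, VS p w (N+1) s)
      - ∫ s in (0:ℝ)..t, VS p w N s) atTop (𝓝 0) := by
    have habs : ∀ N, |(∫ s in (0:ℝ)..t, VS p w (N+1) s) - ∫ s in (0:ℝ)..t, VS p w N s|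
        ≤ C * ((∫ s in (0:ℝ)..t, VS p (fun _ => 1) (N+1) s)
          - ∫ s in (0:ℝ)..t, VS p (fun _ => 1) N s) := by
      intro N
      have hptw : ∀ s ∈ Set.Icc (0:ℝ) t,
          |VS p w (N+1) s - VS p w N s|
            ≤ C * (VS p (fun _ => 1) (N+1) s - VS p (fun _ => 1) N s) := by
        intro s hs
        have hs' : s ∈ Set.Ici (0:ℝ) := hs.1
        have hsub : BB N ⊆ BB (N+1) := BB_mono (Nat.le_succ N)
        have e1 : VS p w (N+1) s - VS p w N s
            = ∑ z ∈ BB (N+1) \ BB N, w z * ((z.1:ℝ) * (z.2:ℝ)) * p s z := by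
          have := Finset.sum_sdiff (f := fun z => w z * ((z.1:ℝ) * (z.2:ℝ)) * p s z) hsub
          simp only [VS]
          linarith [this]
        have e2 : VS p (fun _ => 1) (N+1) s - VS p (fun _ => 1) N s
            = ∑ z ∈ BB (N+1) \ BB N, ((z.1:ℝ) * (z.2:ℝ)) * p s z := by
          have := Finset.sum_sdiff (f := fun z => (1:ℝ) * ((z.1:ℝ) * (z.2:ℝ)) * p s z) hsub
          simp only [VS, one_mul] at this ⊢
          linarith [this]
        rw [e1, e2, Finset.mul_sum]
        refine (Finset.abs_sum_le_sum_abs _ _).trans (Finset.sum_le_sum ?_)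
        intro z _
        have hz : (0:ℝ) ≤ (z.1:ℝ) * (z.2:ℝ) := by positivity
        have hp := hnonneg s hs' z
        calc |w z * ((z.1:ℝ) * (z.2:ℝ)) * p s z|
            = |w z| * ((z.1:ℝ) * (z.2:ℝ) * p s z) := by
              rw [abs_mul, abs_mul, abs_of_nonneg hz, abs_of_nonneg hp]; ring
          _ ≤ C * ((z.1:ℝ) * (z.2:ℝ) * p s z) :=
              mul_le_mul_of_nonneg_right (hwb z) (by positivity)
      have hii1 : IntervalIntegrable (fun s => VS p w (N+1) s - VS p w N s) volume 0 t :=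
        ii_of_contOn ht ((VS_contOn hderiv w (N+1)).sub (VS_contOn hderiv w N))
      calc |(∫ s in (0:ℝ)..t, VS p w (N+1) s) - ∫ s in (0:ℝ)..t, VS p w N s|
          = |∫ s in (0:ℝ)..t, (VS p w (N+1) s - VS p w N s)| := by
            rw [intervalIntegral.integral_sub (ii_of_contOn ht (VS_contOn hderiv w (N+1)))
              (ii_of_contOn ht (VS_contOn hderiv w N))]
        _ ≤ ∫ s in (0:ℝ)..t, |VS p w (N+1) s - VS p w N s| :=
            intervalIntegral.abs_integral_le_integral_abs ht
        _ ≤ ∫ s in (0:ℝ)..t, C * (VS p (fun _ => 1) (N+1) s - VS p (fun _ => 1) N s) := by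
            apply intervalIntegral.integral_mono_on ht
            · exact (ii_of_contOn ht
                (((VS_contOn hderiv w (N+1)).sub (VS_contOn hderiv w N)).abs))
            · exact ii_of_contOn ht (continuousOn_const.mul
                ((VS_contOn hderiv (fun _ => 1) (N+1)).sub (VS_contOn hderiv (fun _ => 1) N)))
            · exact hptw
        _ = C * ((∫ s in (0:ℝ)..t, VS p (fun _ => 1) (N+1) s)
            - ∫ s in (0:ℝ)..t, VS p (fun _ => 1) N s) := by
            rw [intervalIntegral.integral_const_mul,
              intervalIntegral.integral_sub (ii_of_contOn ht (VS_contOn hderiv (fun _ => 1) (N+1)))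
              (ii_of_contOn ht (VS_contOn hderiv (fun _ => 1) N))]
    have hC : Tendsto (fun N => C * ((∫ s in (0:ℝ)..t, VS p (fun _ => 1) (N+1) s)
        - ∫ s in (0:ℝ)..t, VS p (fun _ => 1) N s)) atTop (𝓝 0) := by
      have := (Vdiff_tendsto hnonneg hnorm hderiv hCME ht).const_mul C
      simpa using this
    have habs' : Tendsto (fun N => |(∫ s in (0:ℝ)..t, VS p w (N+1) s)
        - ∫ s in (0:ℝ)..t, VS p w N s|) atTop (𝓝 0) :=
      squeeze_zero (fun N => abs_nonneg _) habs hC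
    exact (tendsto_zero_iff_abs_tendsto_zero _).mpr habs'
  have hrepr : ∀ N, ∫ s in (0:ℝ)..t, US p w N s
      = (WS p w N t - WS p w N 0) - ((∫ s in (0:ℝ)..t, VS p w (N+1) s)
        - ∫ s in (0:ℝ)..t, VS p w N s) := by
    intro N
    have := ftc_box hderiv hCME w hwd ht N
    linarith [this]
  simp only [hrepr]
  have := (hWt.sub hW0).sub hqr
  simpa using this

end Dynamics

lemma US_decomp (p : ℝ → ℕ × ℕ → ℝ) (w : ℕ × ℕ → ℝ) (N : ℕ) (s : ℝ) :
    US p w N s = (∑ z ∈ BB N, (w (z.1+1, z.2) + w (z.1, z.2+1) - 2 * w z) * p s z)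
      - (∑ z ∈ BB N \ box1 N, w (z.1+1, z.2) * p s z)
      - (∑ z ∈ BB N \ box2 N, w (z.1, z.2+1) * p s z) := by
  have h1 := Finset.sum_sdiff (f := fun z : ℕ × ℕ => w (z.1+1, z.2) * p s z) (box1_subset N)
  have h2 := Finset.sum_sdiff (f := fun z : ℕ × ℕ => w (z.1, z.2+1) * p s z) (box2_subset N)
  have expand : ∑ z ∈ BB N, (w (z.1+1, z.2) + w (z.1, z.2+1) - 2 * w z) * p s z
      = (∑ z ∈ BB N, w (z.1+1, z.2) * p s z) + (∑ z ∈ BB N, w (z.1, z.2+1) * p s z)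
        - 2 * ∑ z ∈ BB N, w z * p s z := by
    rw [Finset.mul_sum, ← Finset.sum_add_distrib, ← Finset.sum_sub_distrib]
    exact Finset.sum_congr rfl fun z _ => by ring
  simp only [US, T1, T2, WS]
  rw [expand]
  linarith [h1, h2]

/-- difference as an integer cast -/
lemma dd_int (y : ℕ × ℕ) : dd y = (((y.1 : ℤ) - (y.2 : ℤ) : ℤ) : ℝ) := by
  simp [dd]

lemma dd_shift1 (y : ℕ × ℕ) : dd (y.1 + 1, y.2) = dd y + 1 := by simp [dd]; try ring
lemma dd_shift2 (y : ℕ × ℕ) : dd (y.1, y.2 + 1) = dd y - 1 := by simp [dd]; try ring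
lemma dd_diag (a b : ℕ) : dd (a + 1, b + 1) = dd (a, b) := by simp [dd]; try ring

/-- the truncated square weight -/
noncomputable def wq (R : ℕ) (y : ℕ × ℕ) : ℝ := min (dd y ^ 2) ((R:ℝ)^2)
/-- the truncated linear weight -/
noncomputable def wl (R : ℕ) (y : ℕ × ℕ) : ℝ := max (-(R:ℝ)) (min (dd y) ((R:ℝ)))

lemma wq_nonneg (R : ℕ) (y : ℕ × ℕ) : 0 ≤ wq R y := le_min (by positivity) (by positivity)
lemma wq_bound (R : ℕ) (y : ℕ × ℕ) : |wq R y| ≤ (R:ℝ)^2 := by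
  rw [abs_of_nonneg (wq_nonneg R y)]; exact min_le_right _ _
lemma wq_le_sq (R : ℕ) (y : ℕ × ℕ) : wq R y ≤ dd y ^ 2 := min_le_left _ _
lemma wq_diag (R : ℕ) (a b : ℕ) : wq R (a+1, b+1) = wq R (a, b) := by
  simp [wq, dd_diag]
lemma wl_bound (R : ℕ) (y : ℕ × ℕ) : |wl R y| ≤ (R:ℝ) := by
  rw [abs_le]
  constructor
  · exact le_max_left _ _
  · exact max_le (neg_le_self (by positivity)) (min_le_right _ _)
lemma wl_diag (R : ℕ) (a b : ℕ) : wl R (a+1, b+1) = wl R (a, b) := by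
  simp [wl, dd_diag]

/-- bracket bounds for the truncated square weight -/
lemma bq_real (R : ℕ) (hR : 1 ≤ R) (m : ℤ) :
    (2:ℝ) - (2*(R:ℝ)+1) * (if (R:ℝ) ≤ |(m:ℝ)| then 1 else 0)
      ≤ min (((m:ℝ)+1)^2) ((R:ℝ)^2) + min (((m:ℝ)-1)^2) ((R:ℝ)^2) - 2 * min (((m:ℝ))^2) ((R:ℝ)^2)
    ∧ min (((m:ℝ)+1)^2) ((R:ℝ)^2) + min (((m:ℝ)-1)^2) ((R:ℝ)^2) - 2 * min (((m:ℝ))^2) ((R:ℝ)^2)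
      ≤ 2 := by
  have hRr : (1:ℝ) ≤ (R:ℝ) := by exact_mod_cast hR
  by_cases h1 : |m| ≤ (R:ℤ) - 1
  · have hm : |(m:ℝ)| ≤ (R:ℝ) - 1 := by
      have : ((|m|:ℤ):ℝ) ≤ (((R:ℤ) - 1 : ℤ):ℝ) := by exact_mod_cast h1
      rw [Int.cast_abs] at this
      push_cast at this
      linarith
    have hm1 := abs_le.mp hm
    have e1 : min (((m:ℝ)+1)^2) ((R:ℝ)^2) = ((m:ℝ)+1)^2 := min_eq_left (by nlinarith)
    have e2 : min (((m:ℝ)-1)^2) ((R:ℝ)^2) = ((m:ℝ)-1)^2 := min_eq_left (by nlinarith)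
    have e3 : min (((m:ℝ))^2) ((R:ℝ)^2) = ((m:ℝ))^2 := min_eq_left (by nlinarith)
    have hneg : ¬ ((R:ℝ) ≤ |(m:ℝ)|) := by push_neg; linarith
    rw [e1, e2, e3, if_neg hneg]
    constructor <;> ring_nf <;> nlinarith
  · have h2 : (R:ℤ) ≤ |m| := by omega
    have hind : ((R:ℝ) ≤ |(m:ℝ)|) := by
      have : (((R:ℤ)):ℝ) ≤ ((|m|:ℤ):ℝ) := by exact_mod_cast h2
      rw [Int.cast_abs] at this
      exact_mod_cast this
    rw [if_pos hind]
    by_cases h3 : |m| = (R:ℤ)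
    · rcases abs_eq (by positivity : (0:ℤ) ≤ (R:ℤ)) |>.mp h3 with hm | hm
      · subst hm
        push_cast
        have e1 : min (((R:ℝ)+1)^2) ((R:ℝ)^2) = ((R:ℝ))^2 := min_eq_right (by nlinarith)
        have e2 : min (((R:ℝ)-1)^2) ((R:ℝ)^2) = ((R:ℝ)-1)^2 := min_eq_left (by nlinarith)
        have e3 : min (((R:ℝ))^2) ((R:ℝ)^2) = ((R:ℝ))^2 := min_self _
        rw [e1, e2, e3]
        constructor <;> nlinarith
      · subst hm
        push_cast
        have e1 : min ((-(R:ℝ)+1)^2) ((R:ℝ)^2) = (-(R:ℝ)+1)^2 := min_eq_left (by nlinarith)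
        have e2 : min ((-(R:ℝ)-1)^2) ((R:ℝ)^2) = ((R:ℝ))^2 := min_eq_right (by nlinarith)
        have e3 : min ((-(R:ℝ))^2) ((R:ℝ)^2) = ((R:ℝ))^2 := by
          rw [neg_pow]; simp [min_self]
        rw [e1, e2, e3]
        constructor <;> nlinarith
    · have h4 : (R:ℤ) + 1 ≤ |m| := by omega
      have hm : (R:ℝ) + 1 ≤ |(m:ℝ)| := by
        have : (((R:ℤ)+1 : ℤ):ℝ) ≤ ((|m|:ℤ):ℝ) := by exact_mod_cast h4
        rw [Int.cast_abs] at this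
        push_cast at this
        linarith
      rcases le_abs.mp hm with hm' | hm'
      · have e1 : min (((m:ℝ)+1)^2) ((R:ℝ)^2) = ((R:ℝ))^2 := min_eq_right (by nlinarith)
        have e2 : min (((m:ℝ)-1)^2) ((R:ℝ)^2) = ((R:ℝ))^2 := min_eq_right (by nlinarith)
        have e3 : min (((m:ℝ))^2) ((R:ℝ)^2) = ((R:ℝ))^2 := min_eq_right (by nlinarith)
        rw [e1, e2, e3]
        constructor <;> linarith
      · have e1 : min (((m:ℝ)+1)^2) ((R:ℝ)^2) = ((R:ℝ))^2 := min_eq_right (by nlinarith)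
        have e2 : min (((m:ℝ)-1)^2) ((R:ℝ)^2) = ((R:ℝ))^2 := min_eq_right (by nlinarith)
        have e3 : min (((m:ℝ))^2) ((R:ℝ)^2) = ((R:ℝ))^2 := min_eq_right (by nlinarith)
        rw [e1, e2, e3]
        constructor <;> linarith

/-- bracket bounds for the truncated square weight, in terms of `wq` -/
lemma bq (R : ℕ) (hR : 1 ≤ R) (y : ℕ × ℕ) :
    (2:ℝ) - (2*(R:ℝ)+1) * (if (R:ℝ) ≤ |dd y| then 1 else 0)
      ≤ wq R (y.1+1, y.2) + wq R (y.1, y.2+1) - 2 * wq R y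
    ∧ wq R (y.1+1, y.2) + wq R (y.1, y.2+1) - 2 * wq R y ≤ 2 := by
  have h := bq_real R hR ((y.1 : ℤ) - (y.2 : ℤ))
  simp only [wq, dd_shift1, dd_shift2]
  rw [dd_int y]
  exact h

/-- bracket bound for the clamp weight -/
lemma bl_real (R : ℕ) (hR : 1 ≤ R) (m : ℤ) :
    |max (-(R:ℝ)) (min ((m:ℝ)+1) ((R:ℝ))) + max (-(R:ℝ)) (min ((m:ℝ)-1) ((R:ℝ)))
      - 2 * max (-(R:ℝ)) (min ((m:ℝ)) ((R:ℝ)))|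
    ≤ (if (R:ℝ) ≤ |(m:ℝ)| then 1 else 0) := by
  have hRr : (1:ℝ) ≤ (R:ℝ) := by exact_mod_cast hR
  by_cases h1 : |m| ≤ (R:ℤ) - 1
  · have hm : |(m:ℝ)| ≤ (R:ℝ) - 1 := by
      have : ((|m|:ℤ):ℝ) ≤ (((R:ℤ) - 1 : ℤ):ℝ) := by exact_mod_cast h1
      rw [Int.cast_abs] at this
      push_cast at this
      linarith
    have hm1 := abs_le.mp hm
    have e1 : min ((m:ℝ)+1) ((R:ℝ)) = (m:ℝ)+1 := min_eq_left (by linarith)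
    have e2 : min ((m:ℝ)-1) ((R:ℝ)) = (m:ℝ)-1 := min_eq_left (by linarith)
    have e3 : min ((m:ℝ)) ((R:ℝ)) = (m:ℝ) := min_eq_left (by linarith)
    rw [e1, e2, e3]
    have f1 : max (-(R:ℝ)) ((m:ℝ)+1) = (m:ℝ)+1 := max_eq_right (by linarith)
    have f2 : max (-(R:ℝ)) ((m:ℝ)-1) = (m:ℝ)-1 := max_eq_right (by linarith)
    have f3 : max (-(R:ℝ)) ((m:ℝ)) = (m:ℝ) := max_eq_right (by linarith)
    rw [f1, f2, f3]
    have hneg : ¬ ((R:ℝ) ≤ |(m:ℝ)|) := by push_neg; linarith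
    rw [if_neg hneg]
    simp [abs_le]
    constructor <;> linarith
  · have h2 : (R:ℤ) ≤ |m| := by omega
    have hind : ((R:ℝ) ≤ |(m:ℝ)|) := by
      have : (((R:ℤ)):ℝ) ≤ ((|m|:ℤ):ℝ) := by exact_mod_cast h2
      rw [Int.cast_abs] at this
      exact_mod_cast this
    rw [if_pos hind]
    rcases le_abs.mp (le_of_eq (rfl : |(m:ℝ)| = |(m:ℝ)|)) with _ | _
    all_goals {
      rcases le_abs.mp hind with hm' | hm'
      · -- R ≤ m
        have e1 : min ((m:ℝ)+1) ((R:ℝ)) = (R:ℝ) := min_eq_right (by linarith)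
        have e3 : min ((m:ℝ)) ((R:ℝ)) = (R:ℝ) := min_eq_right (by linarith)
        have f1 : max (-(R:ℝ)) ((R:ℝ)) = (R:ℝ) := max_eq_right (by linarith)
        rw [e1, e3, f1]
        rcases le_total ((m:ℝ)-1) ((R:ℝ)) with h5 | h5
        · have e2 : min ((m:ℝ)-1) ((R:ℝ)) = (m:ℝ)-1 := min_eq_left h5
          have f2 : max (-(R:ℝ)) ((m:ℝ)-1) = (m:ℝ)-1 := max_eq_right (by linarith)
          rw [e2, f2, abs_le]
          constructor <;> linarith
        · have e2 : min ((m:ℝ)-1) ((R:ℝ)) = (R:ℝ) := min_eq_right h5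
          have f2 : max (-(R:ℝ)) ((R:ℝ)) = (R:ℝ) := max_eq_right (by linarith)
          rw [e2, f2, abs_le]
          constructor <;> linarith
      · -- m ≤ -R
        have e2 : min ((m:ℝ)-1) ((R:ℝ)) = (m:ℝ)-1 := min_eq_left (by linarith)
        have f2 : max (-(R:ℝ)) ((m:ℝ)-1) = -(R:ℝ) := max_eq_left (by linarith)
        have e3 : min ((m:ℝ)) ((R:ℝ)) = (m:ℝ) := min_eq_left (by linarith)
        have f3 : max (-(R:ℝ)) ((m:ℝ)) = -(R:ℝ) := max_eq_left (by linarith)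
        rw [e2, f2, e3, f3]
        rcases le_total ((m:ℝ)+1) (-(R:ℝ)) with h5 | h5
        · have e1 : min ((m:ℝ)+1) ((R:ℝ)) = (m:ℝ)+1 := min_eq_left (by linarith)
          have f1 : max (-(R:ℝ)) ((m:ℝ)+1) = -(R:ℝ) := max_eq_left h5
          rw [e1, f1, abs_le]
          constructor <;> linarith
        · have e1 : min ((m:ℝ)+1) ((R:ℝ)) = (m:ℝ)+1 := min_eq_left (by linarith)
          have f1 : max (-(R:ℝ)) ((m:ℝ)+1) = (m:ℝ)+1 := max_eq_right h5
          rw [e1, f1, abs_le]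
          constructor <;> linarith
    }

lemma bl (R : ℕ) (hR : 1 ≤ R) (y : ℕ × ℕ) :
    |wl R (y.1+1, y.2) + wl R (y.1, y.2+1) - 2 * wl R y|
      ≤ (if (R:ℝ) ≤ |dd y| then 1 else 0) := by
  have h := bl_real R hR ((y.1 : ℤ) - (y.2 : ℤ))
  simp only [wl, dd_shift1, dd_shift2]
  rw [dd_int y]
  exact h

lemma abs_dd_le (y : ℕ × ℕ) : |dd y| ≤ (y.1:ℝ) + (y.2:ℝ) := by
  refine (abs_sub _ _).trans ?_
  simp [abs_of_nonneg]

/-- tails of a summable nonneg family over `{|dd| ≥ R}` tend to 0 -/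
lemma tail_tendsto {S : ℕ × ℕ → ℝ} (hS : Summable S) (hS0 : ∀ y, 0 ≤ S y) :
    Tendsto (fun R : ℕ => ∑' y, if (R:ℝ) ≤ |dd y| then S y else 0) atTop (𝓝 0) := by
  have hsummite : ∀ R : ℕ, Summable (fun y => if (R:ℝ) ≤ |dd y| then S y else 0) := by
    intro R
    refine Summable.of_nonneg_of_le (fun y => ?_) (fun y => ?_) hS
    · split <;> simp [hS0]
    · split <;> simp [hS0]
  rw [Metric.tendsto_atTop]
  intro ε hε
  have hcompl := tendsto_tsum_compl_atTop_zero S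
  have hev : ∀ᶠ F : Finset (ℕ × ℕ) in atTop, ∑' (x : {x // x ∉ F}), S x < ε :=
    (tendsto_order.1 hcompl).2 ε hε
  obtain ⟨F₀, hF₀⟩ := eventually_atTop.mp hev
  have hF := hF₀ F₀ le_rfl
  refine ⟨(F₀.sup fun y => y.1 + y.2) + 1, fun R hR => ?_⟩
  have hnn : 0 ≤ ∑' y, if (R:ℝ) ≤ |dd y| then S y else 0 :=
    tsum_nonneg fun y => by split <;> simp [hS0]
  rw [Real.dist_eq, sub_zero, abs_of_nonneg hnn]
  have hle : (∑' y, if (R:ℝ) ≤ |dd y| then S y else 0)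
      ≤ ∑' y, Set.indicator {x | x ∉ F₀} S y := by
    refine Summable.tsum_le_tsum (fun y => ?_) (hsummite R) ?_
    · by_cases hy : (R:ℝ) ≤ |dd y|
      · rw [if_pos hy]
        have hy' : y ∉ F₀ := by
          intro hmem
          have h1 : y.1 + y.2 ≤ F₀.sup (fun y => y.1 + y.2) :=
            Finset.le_sup (f := fun y : ℕ × ℕ => y.1 + y.2) hmem
          have h2 : ((y.1 + y.2 : ℕ):ℝ) < (R:ℝ) := by
            have : y.1 + y.2 < R := by omega
            exact_mod_cast this
          have h3 := abs_dd_le y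
          push_cast at h2
          linarith
        rw [Set.indicator_of_mem (by simpa using hy') S]
      · rw [if_neg hy]
        exact Set.indicator_apply_nonneg (fun _ => hS0 y)
    · exact hS.indicator _
  rw [← tsum_subtype {x | x ∉ F₀} S] at hle
  exact lt_of_le_of_lt hle hF

lemma PR_bound {p : ℝ → ℕ × ℕ → ℝ} (hnonneg : ∀ t ∈ Set.Ici (0 : ℝ), ∀ y : ℕ × ℕ, 0 ≤ p t y)
    (hnorm : ∀ t ∈ Set.Ici (0 : ℝ), HasSum (p t) 1)
    {s : ℝ} (hs : s ∈ Set.Ici (0:ℝ)) (hsq : Summable (fun y => dd y ^ 2 * p s y)) (R : ℕ) :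
    ((R:ℝ))^2 * (∑' y, if (R:ℝ) ≤ |dd y| then p s y else 0) ≤ ∑' y, dd y ^ 2 * p s y := by
  rw [← tsum_mul_left]
  refine Summable.tsum_le_tsum (fun y => ?_) ?_ hsq
  · by_cases hy : (R:ℝ) ≤ |dd y|
    · rw [if_pos hy]
      refine mul_le_mul_of_nonneg_right ?_ (hnonneg s hs y)
      calc ((R:ℝ))^2 ≤ |dd y|^2 := by
            refine pow_le_pow_left₀ (by positivity) hy 2
        _ = dd y ^ 2 := sq_abs _
    · rw [if_neg hy, mul_zero]
      have := hnonneg s hs y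
      positivity
  · apply Summable.mul_left
    refine Summable.of_nonneg_of_le (fun y => ?_) (fun y => ?_) (hnorm s hs).summable
    · split <;> simp [hnonneg s hs y]
    · split <;> simp [hnonneg s hs y]

/-- convergence of the truncated square moments -/
lemma tendsto_wq {p : ℝ → ℕ × ℕ → ℝ} (hnonneg : ∀ t ∈ Set.Ici (0 : ℝ), ∀ y : ℕ × ℕ, 0 ≤ p t y)
    {s : ℝ} (hs : s ∈ Set.Ici (0:ℝ)) (hsq : Summable (fun y => dd y ^ 2 * p s y)) :
    Tendsto (fun R : ℕ => ∑' y, wq R y * p s y) atTop (𝓝 (∑' y, dd y ^ 2 * p s y)) := by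
  have hsummwq : ∀ R : ℕ, Summable (fun y => wq R y * p s y) := by
    intro R
    refine Summable.of_nonneg_of_le
      (fun y => mul_nonneg (wq_nonneg R y) (hnonneg s hs y))
      (fun y => mul_le_mul_of_nonneg_right (wq_le_sq R y) (hnonneg s hs y)) hsq
  have hdiff : ∀ R : ℕ, (∑' y, dd y ^ 2 * p s y) - (∑' y, wq R y * p s y)
      = ∑' y, (dd y ^ 2 - wq R y) * p s y := by
    intro R
    rw [← Summable.tsum_sub hsq (hsummwq R)]
    congr 1
    funext y
    ring
  have hbd : ∀ R : ℕ, (∑' y, (dd y ^ 2 - wq R y) * p s y)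
      ≤ ∑' y, if (R:ℝ) ≤ |dd y| then dd y ^ 2 * p s y else 0 := by
    intro R
    refine Summable.tsum_le_tsum (fun y => ?_) ((hsq.sub (hsummwq R)).congr (fun y => by ring)) ?_
    · by_cases hy : (R:ℝ) ≤ |dd y|
      · rw [if_pos hy]
        refine mul_le_mul_of_nonneg_right ?_ (hnonneg s hs y)
        have := wq_nonneg R y
        linarith
      · rw [if_neg hy]
        push_neg at hy
        have : dd y ^ 2 ≤ (R:ℝ)^2 := by
          calc dd y ^2 = |dd y|^2 := (sq_abs _).symm
            _ ≤ (R:ℝ)^2 := pow_le_pow_left₀ (abs_nonneg _) (le_of_lt hy) 2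
        have hwq : wq R y = dd y ^ 2 := min_eq_left this
        rw [hwq]
        simp
    · refine Summable.of_nonneg_of_le (fun y => ?_) (fun y => ?_) hsq
      · split
        · exact mul_nonneg (by positivity) (hnonneg s hs y)
        · exact le_rfl
      · split
        · exact le_rfl
        · exact mul_nonneg (by positivity) (hnonneg s hs y)
  have hnn : ∀ R : ℕ, 0 ≤ (∑' y, dd y ^ 2 * p s y) - (∑' y, wq R y * p s y) := by
    intro R
    rw [hdiff R]
    refine tsum_nonneg fun y => mul_nonneg ?_ (hnonneg s hs y)
    have := wq_le_sq R y
    linarith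
  have htail := tail_tendsto (S := fun y => dd y ^ 2 * p s y) hsq
    (fun y => mul_nonneg (by positivity) (hnonneg s hs y))
  have hzero : Tendsto (fun R : ℕ => (∑' y, dd y ^ 2 * p s y) - (∑' y, wq R y * p s y))
      atTop (𝓝 0) := by
    refine squeeze_zero hnn (fun R => ?_) htail
    rw [hdiff R]
    exact hbd R
  have := tendsto_const_nhds (x := ∑' y, dd y ^ 2 * p s y) (f := atTop (α := ℕ)) |>.sub hzero
  simpa using this

/-- convergence of the clamped first moments -/
lemma tendsto_wl {p : ℝ → ℕ × ℕ → ℝ} (hnonneg : ∀ t ∈ Set.Ici (0 : ℝ), ∀ y : ℕ × ℕ, 0 ≤ p t y)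
    {s : ℝ} (hs : s ∈ Set.Ici (0:ℝ)) (hp : Summable (fun y => p s y))
    (habs : Summable (fun y => |dd y| * p s y)) :
    Tendsto (fun R : ℕ => ∑' y, wl R y * p s y) atTop (𝓝 (∑' y, dd y * p s y)) := by
  have hsumdd : Summable (fun y => dd y * p s y) := by
    refine Summable.of_norm_bounded habs (fun y => ?_)
    rw [Real.norm_eq_abs, abs_mul, abs_of_nonneg (hnonneg s hs y)]
  have hsummwl : ∀ R : ℕ, Summable (fun y => wl R y * p s y) := by
    intro R
    refine Summable.of_norm_bounded (hp.mul_left (R:ℝ)) (fun y => ?_)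
    rw [Real.norm_eq_abs, abs_mul, abs_of_nonneg (hnonneg s hs y)]
    exact mul_le_mul_of_nonneg_right (wl_bound R y) (hnonneg s hs y)
  have hptw : ∀ (R : ℕ) (y : ℕ × ℕ), |(dd y - wl R y) * p s y|
      ≤ (if (R:ℝ) ≤ |dd y| then |dd y| * p s y else 0) := by
    intro R y
    have hR0 : (0:ℝ) ≤ (R:ℝ) := by positivity
    have hp0 := hnonneg s hs y
    rw [abs_mul, abs_of_nonneg hp0]
    by_cases hy : (R:ℝ) ≤ |dd y|
    · rw [if_pos hy]
      refine mul_le_mul_of_nonneg_right ?_ hp0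
      rcases le_abs.mp hy with hy' | hy'
      · have e1 : min (dd y) ((R:ℝ)) = (R:ℝ) := min_eq_right (by linarith)
        have e2 : max (-(R:ℝ)) ((R:ℝ)) = (R:ℝ) := max_eq_right (by linarith)
        have ea : |dd y| = dd y := abs_of_nonneg (by linarith)
        rw [wl, e1, e2, ea, abs_of_nonneg (by linarith : (0:ℝ) ≤ dd y - (R:ℝ))]
        linarith
      · have e1 : min (dd y) ((R:ℝ)) = dd y := min_eq_left (by linarith)
        have e2 : max (-(R:ℝ)) (dd y) = -(R:ℝ) := max_eq_left (by linarith)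
        have ea : |dd y| = -dd y := abs_of_nonpos (by linarith)
        rw [wl, e1, e2, ea, abs_of_nonpos (by linarith : dd y - (-(R:ℝ)) ≤ 0)]
        linarith
    · rw [if_neg hy]
      push_neg at hy
      have h1 := abs_le.mp (le_of_lt hy)
      have e1 : min (dd y) ((R:ℝ)) = dd y := min_eq_left (by linarith)
      have e2 : max (-(R:ℝ)) (dd y) = dd y := max_eq_right (by linarith)
      rw [wl, e1, e2]
      simp
  have hsumite : ∀ R : ℕ, Summable (fun y => if (R:ℝ) ≤ |dd y| then |dd y| * p s y else 0) := by
    intro R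
    refine Summable.of_nonneg_of_le (fun y => ?_) (fun y => ?_) habs
    · split
      · exact mul_nonneg (abs_nonneg _) (hnonneg s hs y)
      · exact le_rfl
    · split
      · exact le_rfl
      · exact mul_nonneg (abs_nonneg _) (hnonneg s hs y)
  have hbound : ∀ R : ℕ, |(∑' y, dd y * p s y) - (∑' y, wl R y * p s y)|
      ≤ ∑' y, if (R:ℝ) ≤ |dd y| then |dd y| * p s y else 0 := by
    intro R
    rw [← Summable.tsum_sub hsumdd (hsummwl R)]
    have hdsum : Summable (fun y => (dd y - wl R y) * p s y) :=
      (hsumdd.sub (hsummwl R)).congr (fun y => by ring)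
    have hnorm_sum : Summable (fun y => ‖(dd y - wl R y) * p s y‖) := by
      refine Summable.of_nonneg_of_le (fun y => norm_nonneg _) (fun y => ?_) (hsumite R)
      rw [Real.norm_eq_abs]
      exact hptw R y
    calc |∑' y, (dd y * p s y - wl R y * p s y)|
        = |∑' y, (dd y - wl R y) * p s y| := by
          congr 1
          exact tsum_congr (fun y => by ring)
      _ ≤ ∑' y, ‖(dd y - wl R y) * p s y‖ := by
          rw [← Real.norm_eq_abs]
          exact norm_tsum_le_tsum_norm hnorm_sum
      _ ≤ ∑' y, if (R:ℝ) ≤ |dd y| then |dd y| * p s y else 0 := by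
          refine Summable.tsum_le_tsum (fun y => ?_) hnorm_sum (hsumite R)
          rw [Real.norm_eq_abs]
          exact hptw R y
  have htail := tail_tendsto (S := fun y => |dd y| * p s y) habs
    (fun y => mul_nonneg (abs_nonneg _) (hnonneg s hs y))
  have hzero : Tendsto (fun R : ℕ => (∑' y, dd y * p s y) - (∑' y, wl R y * p s y))
      atTop (𝓝 0) := by
    refine (tendsto_zero_iff_abs_tendsto_zero _).mpr ?_
    exact squeeze_zero (fun R => abs_nonneg _) hbound htail
  have := tendsto_const_nhds (x := ∑' y, dd y * p s y) (f := atTop (α := ℕ)) |>.sub hzero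
  simpa using this

section Main

variable {p dp : ℝ → ℕ × ℕ → ℝ}
variable (hnonneg : ∀ t ∈ Set.Ici (0 : ℝ), ∀ y : ℕ × ℕ, 0 ≤ p t y)
variable (hnorm : ∀ t ∈ Set.Ici (0 : ℝ), HasSum (p t) 1)
variable (hderiv : ∀ y : ℕ × ℕ, ∀ t ∈ Set.Ici (0 : ℝ),
      HasDerivWithinAt (fun s => p s y) (dp t y) (Set.Ici (0 : ℝ)) t)
variable (hCME : ∀ t ∈ Set.Ici (0 : ℝ), ∀ y : ℕ × ℕ,
      dp t y =
        (if y.1 = 0 then 0 else p t (y.1 - 1, y.2)) +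
        (if y.2 = 0 then 0 else p t (y.1, y.2 - 1)) +
        ((y.1 : ℝ) + 1) * ((y.2 : ℝ) + 1) * p t (y.1 + 1, y.2 + 1) -
        (2 + (y.1 : ℝ) * (y.2 : ℝ)) * p t y)

include hnonneg hnorm hderiv in
lemma sdiff_int_tendsto {t : ℝ} (ht : 0 ≤ t) (A B : ℕ → Finset (ℕ × ℕ))
    (hsub : ∀ N, B N ⊆ A N) (hAmono : Monotone A) (hAexh : ∀ x, ∃ N, x ∈ A N)
    (hBmono : Monotone B) (hBexh : ∀ x, ∃ N, x ∈ B N) :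
    Tendsto (fun N => ∫ s in (0:ℝ)..t, (∑ z ∈ A N \ B N, p s z)) atTop (𝓝 0) := by
  have hdct := dct_box ht (fun N s => ∑ z ∈ A N \ B N, p s z) (fun _ => 0) 1
    (fun N => continuousOn_finset_sum _ (fun z _ => p_contOn hderiv z))
    (fun N s hs => ?_) (fun s hs => ?_)
  · simpa using hdct
  · have hs' : s ∈ Set.Ici (0:ℝ) := le_of_lt hs.1
    rw [abs_of_nonneg (Finset.sum_nonneg fun z _ => hnonneg s hs' z)]
    calc ∑ z ∈ A N \ B N, p s z ≤ ∑ z ∈ A N, p s z :=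
        Finset.sum_le_sum_of_subset_of_nonneg (Finset.sdiff_subset)
          (fun z _ _ => hnonneg s hs' z)
      _ ≤ 1 := sum_box_le_one hnonneg hnorm hs' (A N)
  · have hs' : s ∈ Set.Ici (0:ℝ) := le_of_lt hs.1
    have heq : ∀ N, ∑ z ∈ A N \ B N, p s z = (∑ z ∈ A N, p s z) - ∑ z ∈ B N, p s z := by
      intro N
      have := Finset.sum_sdiff (f := fun z => p s z) (hsub N)
      linarith
    simp only [heq]
    have h1 := tendsto_sum_box (hnorm s hs').summable hAmono hAexh
    have h2 := tendsto_sum_box (hnorm s hs').summable hBmono hBexh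
    rw [(hnorm s hs').tsum_eq] at h1 h2
    simpa using h1.sub h2

include hnonneg hnorm hderiv in
lemma WS1_int_tendsto {t : ℝ} (ht : 0 ≤ t) :
    Tendsto (fun N => ∫ s in (0:ℝ)..t, (∑ z ∈ BB N, p s z)) atTop (𝓝 t) := by
  have hdct := dct_box ht (fun N s => ∑ z ∈ BB N, p s z) (fun _ => 1) 1
    (fun N => continuousOn_finset_sum _ (fun z _ => p_contOn hderiv z))
    (fun N s hs => ?_) (fun s hs => ?_)
  · simpa using hdct
  · have hs' : s ∈ Set.Ici (0:ℝ) := le_of_lt hs.1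
    rw [abs_of_nonneg (Finset.sum_nonneg fun z _ => hnonneg s hs' z)]
    exact sum_box_le_one hnonneg hnorm hs' (BB N)
  · have hs' : s ∈ Set.Ici (0:ℝ) := le_of_lt hs.1
    have h1 := tendsto_sum_box (hnorm s hs').summable BB_mono BB_exh
    rw [(hnorm s hs').tsum_eq] at h1
    exact h1

include hnonneg hnorm hderiv hCME in
lemma h_upper {t : ℝ} (ht : 0 ≤ t) (R : ℕ) (hR : 1 ≤ R) :
    (∑' y, wq R y * p t y) - (∑' y, wq R y * p 0 y) ≤ 2 * t := by
  refine le_of_tendsto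
    (core hnonneg hnorm hderiv hCME (wq R) ((R:ℝ)^2) (wq_bound R) (wq_diag R) ht) ?_
  filter_upwards with N
  have hptw : ∀ s ∈ Set.Icc (0:ℝ) t, US p (wq R) N s ≤ 2 := by
    intro s hs
    have hs' : s ∈ Set.Ici (0:ℝ) := hs.1
    rw [US_decomp]
    have d1 : 0 ≤ ∑ z ∈ BB N \ box1 N, wq R (z.1+1, z.2) * p s z :=
      Finset.sum_nonneg fun z _ => mul_nonneg (wq_nonneg _ _) (hnonneg s hs' z)
    have d2 : 0 ≤ ∑ z ∈ BB N \ box2 N, wq R (z.1, z.2+1) * p s z :=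
      Finset.sum_nonneg fun z _ => mul_nonneg (wq_nonneg _ _) (hnonneg s hs' z)
    have hmain : ∑ z ∈ BB N, (wq R (z.1+1,z.2) + wq R (z.1,z.2+1) - 2 * wq R z) * p s z ≤ 2 := by
      have hsb := sum_box_le_one hnonneg hnorm hs' (BB N)
      calc ∑ z ∈ BB N, (wq R (z.1+1,z.2) + wq R (z.1,z.2+1) - 2 * wq R z) * p s z
          ≤ ∑ z ∈ BB N, 2 * p s z :=
            Finset.sum_le_sum fun z _ => mul_le_mul_of_nonneg_right (bq R hR z).2 (hnonneg s hs' z)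
        _ = 2 * ∑ z ∈ BB N, p s z := by rw [Finset.mul_sum]
        _ ≤ 2 := by linarith
    linarith
  calc ∫ s in (0:ℝ)..t, US p (wq R) N s ≤ ∫ s in (0:ℝ)..t, (2:ℝ) :=
      intervalIntegral.integral_mono_on ht (ii_of_contOn ht (US_contOn hderiv _ N))
        intervalIntegrable_const hptw
    _ = 2 * t := by simp [mul_comm]

include hnonneg hnorm hderiv hCME in
lemma h_lower {t : ℝ} (ht : 0 ≤ t) (R : ℕ) (hR : 1 ≤ R) (K : ℝ) (hK0 : 0 ≤ K)
    (hKb : ∀ s ∈ Set.Icc (0:ℝ) t,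
      ((R:ℝ))^2 * (∑' y, if (R:ℝ) ≤ |dd y| then p s y else 0) ≤ K) :
    2 * t - t * ((2*(R:ℝ)+1) * K / (R:ℝ)^2)
      ≤ (∑' y, wq R y * p t y) - (∑' y, wq R y * p 0 y) := by
  have hRpos : (0:ℝ) < (R:ℝ) := by exact_mod_cast hR
  have hR2pos : (0:ℝ) < (R:ℝ)^2 := by positivity
  set c : ℝ := (2*(R:ℝ)+1) * K / (R:ℝ)^2 with hc
  have hc0 : 0 ≤ c := by positivity
  -- pointwise lower bound on US
  have hptw : ∀ N, ∀ s ∈ Set.Icc (0:ℝ) t,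
      2 * (∑ z ∈ BB N, p s z) - c
        - (R:ℝ)^2 * ((∑ z ∈ BB N \ box1 N, p s z) + (∑ z ∈ BB N \ box2 N, p s z))
      ≤ US p (wq R) N s := by
    intro N s hs
    have hs' : s ∈ Set.Ici (0:ℝ) := hs.1
    rw [US_decomp]
    have d1 : ∑ z ∈ BB N \ box1 N, wq R (z.1+1, z.2) * p s z
        ≤ (R:ℝ)^2 * ∑ z ∈ BB N \ box1 N, p s z := by
      rw [Finset.mul_sum]
      refine Finset.sum_le_sum fun z _ => mul_le_mul_of_nonneg_right ?_ (hnonneg s hs' z)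
      have := wq_bound R (z.1+1, z.2)
      have := abs_nonneg (wq R (z.1+1, z.2))
      calc wq R (z.1+1,z.2) ≤ |wq R (z.1+1,z.2)| := le_abs_self _
        _ ≤ (R:ℝ)^2 := wq_bound R _
    have d2 : ∑ z ∈ BB N \ box2 N, wq R (z.1, z.2+1) * p s z
        ≤ (R:ℝ)^2 * ∑ z ∈ BB N \ box2 N, p s z := by
      rw [Finset.mul_sum]
      refine Finset.sum_le_sum fun z _ => mul_le_mul_of_nonneg_right ?_ (hnonneg s hs' z)
      calc wq R (z.1,z.2+1) ≤ |wq R (z.1,z.2+1)| := le_abs_self _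
        _ ≤ (R:ℝ)^2 := wq_bound R _
    have hite_sum : ∑ z ∈ BB N, (if (R:ℝ) ≤ |dd z| then p s z else 0)
        ≤ ∑' y, (if (R:ℝ) ≤ |dd y| then p s y else 0) := by
      refine Summable.sum_le_tsum _ (fun y _ => ?_) ?_
      · split <;> simp [hnonneg s hs' y]
      · refine Summable.of_nonneg_of_le (fun y => ?_) (fun y => ?_) (hnorm s hs').summable
        · split <;> simp [hnonneg s hs' y]
        · split <;> simp [hnonneg s hs' y]
    have hitebd : (∑' y, (if (R:ℝ) ≤ |dd y| then p s y else 0)) ≤ K / (R:ℝ)^2 := by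
      rw [le_div_iff₀ hR2pos, mul_comm]
      exact hKb s hs
    have hmain : 2 * (∑ z ∈ BB N, p s z) - c
        ≤ ∑ z ∈ BB N, (wq R (z.1+1,z.2) + wq R (z.1,z.2+1) - 2 * wq R z) * p s z := by
      have step1 : ∑ z ∈ BB N, (2 - (2*(R:ℝ)+1) * (if (R:ℝ) ≤ |dd z| then 1 else 0)) * p s z
          ≤ ∑ z ∈ BB N, (wq R (z.1+1,z.2) + wq R (z.1,z.2+1) - 2 * wq R z) * p s z :=
        Finset.sum_le_sum fun z _ => mul_le_mul_of_nonneg_right (bq R hR z).1 (hnonneg s hs' z)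
      have step2 : ∑ z ∈ BB N, (2 - (2*(R:ℝ)+1) * (if (R:ℝ) ≤ |dd z| then 1 else 0)) * p s z
          = 2 * (∑ z ∈ BB N, p s z)
            - (2*(R:ℝ)+1) * ∑ z ∈ BB N, (if (R:ℝ) ≤ |dd z| then p s z else 0) := by
        rw [Finset.mul_sum, Finset.mul_sum, ← Finset.sum_sub_distrib]
        refine Finset.sum_congr rfl fun z _ => ?_
        split <;> ring
      have step3 : (2*(R:ℝ)+1) * ∑ z ∈ BB N, (if (R:ℝ) ≤ |dd z| then p s z else 0) ≤ c := by
        rw [hc]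
        calc (2*(R:ℝ)+1) * ∑ z ∈ BB N, (if (R:ℝ) ≤ |dd z| then p s z else 0)
            ≤ (2*(R:ℝ)+1) * (K / (R:ℝ)^2) := by
              refine mul_le_mul_of_nonneg_left (hite_sum.trans hitebd) (by positivity)
          _ = (2*(R:ℝ)+1) * K / (R:ℝ)^2 := by ring
      linarith
    linarith
  -- integrate the pointwise bound
  have hIb : ∀ N,
      2 * (∫ s in (0:ℝ)..t, (∑ z ∈ BB N, p s z)) - c * t
        - (R:ℝ)^2 * ((∫ s in (0:ℝ)..t, (∑ z ∈ BB N \ box1 N, p s z))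
          + (∫ s in (0:ℝ)..t, (∑ z ∈ BB N \ box2 N, p s z)))
      ≤ ∫ s in (0:ℝ)..t, US p (wq R) N s := by
    intro N
    have c1 : ContinuousOn (fun s => ∑ z ∈ BB N, p s z) (Set.Ici 0) :=
      continuousOn_finset_sum _ (fun z _ => p_contOn hderiv z)
    have c2 : ContinuousOn (fun s => ∑ z ∈ BB N \ box1 N, p s z) (Set.Ici 0) :=
      continuousOn_finset_sum _ (fun z _ => p_contOn hderiv z)
    have c3 : ContinuousOn (fun s => ∑ z ∈ BB N \ box2 N, p s z) (Set.Ici 0) :=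
      continuousOn_finset_sum _ (fun z _ => p_contOn hderiv z)
    have hmono := intervalIntegral.integral_mono_on ht
      (ii_of_contOn ht (((continuousOn_const.fun_mul c1).fun_sub continuousOn_const).fun_sub
        (continuousOn_const.fun_mul (c2.fun_add c3))))
      (ii_of_contOn ht (US_contOn hderiv _ N)) (hptw N)
    have heval : (∫ s in (0:ℝ)..t, (2 * (∑ z ∈ BB N, p s z) - c
        - (R:ℝ)^2 * ((∑ z ∈ BB N \ box1 N, p s z) + (∑ z ∈ BB N \ box2 N, p s z))))
        = 2 * (∫ s in (0:ℝ)..t, (∑ z ∈ BB N, p s z)) - c * t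
        - (R:ℝ)^2 * ((∫ s in (0:ℝ)..t, (∑ z ∈ BB N \ box1 N, p s z))
          + (∫ s in (0:ℝ)..t, (∑ z ∈ BB N \ box2 N, p s z))) := by
      rw [intervalIntegral.integral_sub, intervalIntegral.integral_sub,
        intervalIntegral.integral_const_mul, intervalIntegral.integral_const_mul,
        intervalIntegral.integral_add (ii_of_contOn ht c2) (ii_of_contOn ht c3),
        intervalIntegral.integral_const]
      · simp [smul_eq_mul, mul_comm]
      · exact ii_of_contOn ht (continuousOn_const.mul c1)
      · exact intervalIntegrable_const
      · exact ii_of_contOn ht ((continuousOn_const.mul c1).sub continuousOn_const)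
      · exact ii_of_contOn ht (continuousOn_const.mul (c2.add c3))
    rw [heval] at hmono
    exact hmono
  -- pass to the limit
  have hlhs : Tendsto (fun N =>
      2 * (∫ s in (0:ℝ)..t, (∑ z ∈ BB N, p s z)) - c * t
        - (R:ℝ)^2 * ((∫ s in (0:ℝ)..t, (∑ z ∈ BB N \ box1 N, p s z))
          + (∫ s in (0:ℝ)..t, (∑ z ∈ BB N \ box2 N, p s z)))) atTop
      (𝓝 (2 * t - c * t - (R:ℝ)^2 * (0 + 0))) := by
    refine Tendsto.sub (Tendsto.sub ?_ tendsto_const_nhds) ?_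
    · exact (WS1_int_tendsto hnonneg hnorm hderiv ht).const_mul 2
    · refine Tendsto.const_mul _ (Tendsto.add ?_ ?_)
      · exact sdiff_int_tendsto hnonneg hnorm hderiv ht BB box1 box1_subset
          BB_mono BB_exh box1_mono box1_exh
      · exact sdiff_int_tendsto hnonneg hnorm hderiv ht BB box2 box2_subset
          BB_mono BB_exh box2_mono box2_exh
  have hfinal := le_of_tendsto_of_tendsto hlhs
    (core hnonneg hnorm hderiv hCME (wq R) ((R:ℝ)^2) (wq_bound R) (wq_diag R) ht)
    (Filter.Eventually.of_forall hIb)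
  calc 2 * t - t * c = 2 * t - c * t - (R:ℝ)^2 * (0 + 0) := by ring
    _ ≤ _ := hfinal

include hnonneg hnorm hderiv hCME in
lemma g_change {t : ℝ} (ht : 0 ≤ t) (R : ℕ) (hR : 1 ≤ R) (K : ℝ) (hK0 : 0 ≤ K)
    (hKb : ∀ s ∈ Set.Icc (0:ℝ) t,
      ((R:ℝ))^2 * (∑' y, if (R:ℝ) ≤ |dd y| then p s y else 0) ≤ K) :
    |(∑' y, wl R y * p t y) - (∑' y, wl R y * p 0 y)|
      ≤ t * (K / (R:ℝ)^2) + (R:ℝ) * (0 + 0) + 1 * 0 := by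
  have hRpos : (0:ℝ) < (R:ℝ) := by exact_mod_cast hR
  have hR2pos : (0:ℝ) < (R:ℝ)^2 := by positivity
  -- pointwise bound on |US|
  have hptw : ∀ N, ∀ s ∈ Set.Icc (0:ℝ) t,
      |US p (wl R) N s| ≤ K / (R:ℝ)^2
        + (R:ℝ) * ((∑ z ∈ BB N \ box1 N, p s z) + (∑ z ∈ BB N \ box2 N, p s z)) := by
    intro N s hs
    have hs' : s ∈ Set.Ici (0:ℝ) := hs.1
    rw [US_decomp]
    have hd1 : |∑ z ∈ BB N \ box1 N, wl R (z.1+1, z.2) * p s z|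
        ≤ (R:ℝ) * ∑ z ∈ BB N \ box1 N, p s z := by
      rw [Finset.mul_sum]
      refine (Finset.abs_sum_le_sum_abs _ _).trans (Finset.sum_le_sum fun z _ => ?_)
      rw [abs_mul, abs_of_nonneg (hnonneg s hs' z)]
      exact mul_le_mul_of_nonneg_right (wl_bound R _) (hnonneg s hs' z)
    have hd2 : |∑ z ∈ BB N \ box2 N, wl R (z.1, z.2+1) * p s z|
        ≤ (R:ℝ) * ∑ z ∈ BB N \ box2 N, p s z := by
      rw [Finset.mul_sum]
      refine (Finset.abs_sum_le_sum_abs _ _).trans (Finset.sum_le_sum fun z _ => ?_)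
      rw [abs_mul, abs_of_nonneg (hnonneg s hs' z)]
      exact mul_le_mul_of_nonneg_right (wl_bound R _) (hnonneg s hs' z)
    have hite_sum : ∑ z ∈ BB N, (if (R:ℝ) ≤ |dd z| then p s z else 0)
        ≤ ∑' y, (if (R:ℝ) ≤ |dd y| then p s y else 0) := by
      refine Summable.sum_le_tsum _ (fun y _ => ?_) ?_
      · split <;> simp [hnonneg s hs' y]
      · refine Summable.of_nonneg_of_le (fun y => ?_) (fun y => ?_) (hnorm s hs').summable
        · split <;> simp [hnonneg s hs' y]
        · split <;> simp [hnonneg s hs' y]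
    have hitebd : (∑' y, (if (R:ℝ) ≤ |dd y| then p s y else 0)) ≤ K / (R:ℝ)^2 := by
      rw [le_div_iff₀ hR2pos, mul_comm]
      exact hKb s hs
    have hmain : |∑ z ∈ BB N, (wl R (z.1+1,z.2) + wl R (z.1,z.2+1) - 2 * wl R z) * p s z|
        ≤ K / (R:ℝ)^2 := by
      refine le_trans (Finset.abs_sum_le_sum_abs _ _) (le_trans ?_ (hite_sum.trans hitebd))
      refine Finset.sum_le_sum fun z _ => ?_
      rw [abs_mul, abs_of_nonneg (hnonneg s hs' z)]
      have hb := bl R hR z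
      by_cases hz : (R:ℝ) ≤ |dd z|
      · rw [if_pos hz] at hb ⊢
        exact mul_le_mul_of_nonneg_right hb (hnonneg s hs' z) |>.trans (by simp)
      · rw [if_neg hz] at hb ⊢
        have h0 : |wl R (z.1+1,z.2) + wl R (z.1,z.2+1) - 2 * wl R z| = 0 :=
          le_antisymm hb (abs_nonneg _)
        rw [h0, zero_mul]
    calc |∑ z ∈ BB N, (wl R (z.1+1,z.2) + wl R (z.1,z.2+1) - 2 * wl R z) * p s z
          - ∑ z ∈ BB N \ box1 N, wl R (z.1+1, z.2) * p s z
          - ∑ z ∈ BB N \ box2 N, wl R (z.1, z.2+1) * p s z|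
        ≤ |∑ z ∈ BB N, (wl R (z.1+1,z.2) + wl R (z.1,z.2+1) - 2 * wl R z) * p s z|
          + |∑ z ∈ BB N \ box1 N, wl R (z.1+1, z.2) * p s z|
          + |∑ z ∈ BB N \ box2 N, wl R (z.1, z.2+1) * p s z| := by
          refine (abs_sub _ _).trans ?_
          have := abs_sub (∑ z ∈ BB N, (wl R (z.1+1,z.2) + wl R (z.1,z.2+1) - 2 * wl R z) * p s z)
            (∑ z ∈ BB N \ box1 N, wl R (z.1+1, z.2) * p s z)
          linarith
      _ ≤ K / (R:ℝ)^2 + (R:ℝ) * ((∑ z ∈ BB N \ box1 N, p s z)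
          + (∑ z ∈ BB N \ box2 N, p s z)) := by
          rw [mul_add]
          linarith
  -- per-N integral bound
  have hIb : ∀ N, |∫ s in (0:ℝ)..t, US p (wl R) N s|
      ≤ t * (K / (R:ℝ)^2)
        + (R:ℝ) * ((∫ s in (0:ℝ)..t, (∑ z ∈ BB N \ box1 N, p s z))
          + (∫ s in (0:ℝ)..t, (∑ z ∈ BB N \ box2 N, p s z))) + 1 * 0 := by
    intro N
    have c2 : ContinuousOn (fun s => ∑ z ∈ BB N \ box1 N, p s z) (Set.Ici 0) :=
      continuousOn_finset_sum _ (fun z _ => p_contOn hderiv z)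
    have c3 : ContinuousOn (fun s => ∑ z ∈ BB N \ box2 N, p s z) (Set.Ici 0) :=
      continuousOn_finset_sum _ (fun z _ => p_contOn hderiv z)
    have habs := intervalIntegral.abs_integral_le_integral_abs
      (f := fun s => US p (wl R) N s) (a := 0) (b := t) (μ := volume) ht
    have hmono := intervalIntegral.integral_mono_on ht
      (ii_of_contOn ht (US_contOn hderiv _ N).abs)
      (ii_of_contOn ht (continuousOn_const.fun_add (continuousOn_const.fun_mul (c2.fun_add c3))))
      (fun s hs => hptw N s hs)
    have heval : (∫ s in (0:ℝ)..t, (K / (R:ℝ)^2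
        + (R:ℝ) * ((∑ z ∈ BB N \ box1 N, p s z) + (∑ z ∈ BB N \ box2 N, p s z))))
        = t * (K / (R:ℝ)^2)
          + (R:ℝ) * ((∫ s in (0:ℝ)..t, (∑ z ∈ BB N \ box1 N, p s z))
            + (∫ s in (0:ℝ)..t, (∑ z ∈ BB N \ box2 N, p s z))) := by
      rw [intervalIntegral.integral_add intervalIntegrable_const
          (ii_of_contOn ht (continuousOn_const.fun_mul (c2.fun_add c3))),
        intervalIntegral.integral_const_mul,
        intervalIntegral.integral_add (ii_of_contOn ht c2) (ii_of_contOn ht c3),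
        intervalIntegral.integral_const]
      simp [smul_eq_mul, mul_comm]
    rw [heval] at hmono
    have := le_trans habs hmono
    linarith
  -- pass to the limit in N
  have hrhs : Tendsto (fun N => t * (K / (R:ℝ)^2)
      + (R:ℝ) * ((∫ s in (0:ℝ)..t, (∑ z ∈ BB N \ box1 N, p s z))
        + (∫ s in (0:ℝ)..t, (∑ z ∈ BB N \ box2 N, p s z))) + 1 * 0) atTop
      (𝓝 (t * (K / (R:ℝ)^2) + (R:ℝ) * (0 + 0) + 1 * 0)) := by
    refine Tendsto.add (Tendsto.add tendsto_const_nhds ?_) tendsto_const_nhds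
    refine Tendsto.const_mul _ (Tendsto.add ?_ ?_)
    · exact sdiff_int_tendsto hnonneg hnorm hderiv ht BB box1 box1_subset
        BB_mono BB_exh box1_mono box1_exh
    · exact sdiff_int_tendsto hnonneg hnorm hderiv ht BB box2 box2_subset
        BB_mono BB_exh box2_mono box2_exh
  have hlhs : Tendsto (fun N => |∫ s in (0:ℝ)..t, US p (wl R) N s|) atTop
      (𝓝 |(∑' y, wl R y * p t y) - (∑' y, wl R y * p 0 y)|) :=
    (core hnonneg hnorm hderiv hCME (wl R) ((R:ℝ)) (wl_bound R) (wl_diag R) ht).abs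
  exact le_of_tendsto_of_tendsto hlhs hrhs (Filter.Eventually.of_forall hIb)

end Main

/-- auxiliary rate limit -/
lemma rate_tendsto (t K : ℝ) (ht : 0 ≤ t) (hK : 0 ≤ K) :
    Tendsto (fun R : ℕ => t * ((2*(R:ℝ)+1) * K / (R:ℝ)^2)) atTop (𝓝 0) := by
  refine squeeze_zero' ?_ ?_ (tendsto_const_div_atTop_nhds_zero_nat (3*K*t))
  · filter_upwards [eventually_ge_atTop 1] with R hR
    have hRpos : (0:ℝ) < (R:ℝ) := by exact_mod_cast hR
    positivity
  · filter_upwards [eventually_ge_atTop 1] with R hR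
    have hRpos : (0:ℝ) < (R:ℝ) := by exact_mod_cast hR
    have h1 : t * ((2*(R:ℝ)+1) * K / (R:ℝ)^2) = (t*(2*(R:ℝ)+1)*K) / (R:ℝ)^2 := by ring
    rw [h1, div_le_div_iff₀ (by positivity) hRpos]
    have hR1 : (1:ℝ) ≤ (R:ℝ) := by exact_mod_cast hR
    have hkt : 0 ≤ K * t := mul_nonneg hK ht
    have h2 : (R:ℝ) ≤ (R:ℝ)^2 := by nlinarith
    nlinarith [mul_le_mul_of_nonneg_left h2 hkt]

lemma rate_tendsto' (t K : ℝ) (ht : 0 ≤ t) (hK : 0 ≤ K) :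
    Tendsto (fun R : ℕ => t * (K / (R:ℝ)^2) + (R:ℝ) * (0 + 0) + 1 * 0) atTop (𝓝 0) := by
  have : ∀ R : ℕ, t * (K / (R:ℝ)^2) + (R:ℝ) * (0 + 0) + 1 * 0 = t * (K / (R:ℝ)^2) := by
    intro R; ring
  simp only [this]
  refine squeeze_zero' ?_ ?_ (tendsto_const_div_atTop_nhds_zero_nat (K*t))
  · filter_upwards [eventually_ge_atTop 1] with R hR
    have hRpos : (0:ℝ) < (R:ℝ) := by exact_mod_cast hR
    positivity
  · filter_upwards [eventually_ge_atTop 1] with R hR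
    have hRpos : (0:ℝ) < (R:ℝ) := by exact_mod_cast hR
    have h1 : t * (K / (R:ℝ)^2) = (t*K) / (R:ℝ)^2 := by ring
    rw [h1, div_le_div_iff₀ (by positivity) hRpos]
    have hR1 : (1:ℝ) ≤ (R:ℝ) := by exact_mod_cast hR
    have hkt : 0 ≤ K * t := mul_nonneg hK ht
    have h2 : (R:ℝ) ≤ (R:ℝ)^2 := by nlinarith
    nlinarith [mul_le_mul_of_nonneg_left h2 hkt]

end CMEaux



/-- For the Chemical Master Equation of the network `∅ → X₁` (propensity 1),
`∅ → X₂` (propensity 1), `X₁ + X₂ → ∅` (propensity `x₁ x₂`), the first moment of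
`X₁ - X₂` is conserved while the second moment of `X₁ - X₂` grows linearly, hence
unboundedly, with time. -/
theorem integrator_network_CME_moments_grow_unboundedly
    (α : ℝ) (p dp : ℝ → ℕ × ℕ → ℝ) (g h : ℝ → ℝ)
    -- p(t,·) is a probability distribution for each t ≥ 0
    (hnonneg : ∀ t ∈ Set.Ici (0 : ℝ), ∀ y : ℕ × ℕ, 0 ≤ p t y)
    (hnorm : ∀ t ∈ Set.Ici (0 : ℝ), HasSum (p t) 1)
    -- t ↦ p(t,y) is differentiable with derivative dp(t,y)
    (hderiv : ∀ y : ℕ × ℕ, ∀ t ∈ Set.Ici (0 : ℝ),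
      HasDerivWithinAt (fun s => p s y) (dp t y) (Set.Ici (0 : ℝ)) t)
    -- the Chemical Master Equation (terms with a negative coordinate are zero)
    (hCME : ∀ t ∈ Set.Ici (0 : ℝ), ∀ y : ℕ × ℕ,
      dp t y =
        (if y.1 = 0 then 0 else p t (y.1 - 1, y.2)) +
        (if y.2 = 0 then 0 else p t (y.1, y.2 - 1)) +
        ((y.1 : ℝ) + 1) * ((y.2 : ℝ) + 1) * p t (y.1 + 1, y.2 + 1) -
        (2 + (y.1 : ℝ) * (y.2 : ℝ)) * p t y)
    -- g(t) = Σ_y (y₁ - y₂) p(t,y), absolutely convergent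
    (hg : ∀ t ∈ Set.Ici (0 : ℝ),
      HasSum (fun y : ℕ × ℕ => ((y.1 : ℝ) - (y.2 : ℝ)) * p t y) (g t))
    (hgabs : ∀ t ∈ Set.Ici (0 : ℝ),
      Summable (fun y : ℕ × ℕ => |((y.1 : ℝ) - (y.2 : ℝ)) * p t y|))
    -- h(t) = Σ_y (y₁ - y₂)² p(t,y), absolutely convergent
    (hh : ∀ t ∈ Set.Ici (0 : ℝ),
      HasSum (fun y : ℕ × ℕ => ((y.1 : ℝ) - (y.2 : ℝ)) ^ 2 * p t y) (h t))
    (hhabs : ∀ t ∈ Set.Ici (0 : ℝ),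
      Summable (fun y : ℕ × ℕ => ((y.1 : ℝ) - (y.2 : ℝ)) ^ 2 * p t y))
    -- g and h are differentiable, with derivative given by term-wise differentiation
    (hgderiv : ∀ t ∈ Set.Ici (0 : ℝ),
      HasDerivWithinAt g (∑' y : ℕ × ℕ, ((y.1 : ℝ) - (y.2 : ℝ)) * dp t y)
        (Set.Ici (0 : ℝ)) t)
    (hhderiv : ∀ t ∈ Set.Ici (0 : ℝ),
      HasDerivWithinAt h (∑' y : ℕ × ℕ, ((y.1 : ℝ) - (y.2 : ℝ)) ^ 2 * dp t y)
        (Set.Ici (0 : ℝ)) t)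
    -- initial moments
    (hg0 : g 0 = α) (hh0 : h 0 = α ^ 2) :
    ∀ t ∈ Set.Ici (0 : ℝ), g t = α ∧ h t = α ^ 2 + 2 * t := by
  intro t ht
  have h0' : (0:ℝ) ∈ Set.Ici (0:ℝ) := Set.mem_Ici.mpr le_rfl
  -- summability facts
  have hsq : ∀ s ∈ Set.Ici (0:ℝ), Summable (fun y => CMEaux.dd y ^ 2 * p s y) := fun s hs =>
    hhabs s hs
  have hab : ∀ s ∈ Set.Ici (0:ℝ), Summable (fun y => |CMEaux.dd y| * p s y) := by
    intro s hs
    refine (hgabs s hs).congr (fun y => ?_)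
    rw [abs_mul, abs_of_nonneg (hnonneg s hs y)]
    rfl
  -- identification of moments
  have hhts : ∀ s ∈ Set.Ici (0:ℝ), (∑' y, CMEaux.dd y ^ 2 * p s y) = h s := fun s hs =>
    (hh s hs).tsum_eq
  have hgts : ∀ s ∈ Set.Ici (0:ℝ), (∑' y, CMEaux.dd y * p s y) = g s := fun s hs =>
    (hg s hs).tsum_eq
  -- growth bound for the second moment
  have hgrow : ∀ s ∈ Set.Ici (0:ℝ),
      (∑' y, CMEaux.dd y ^ 2 * p s y) - (∑' y, CMEaux.dd y ^ 2 * p 0 y) ≤ 2 * s := by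
    intro s hs
    have hd : Tendsto (fun R : ℕ => (∑' y, CMEaux.wq R y * p s y) - (∑' y, CMEaux.wq R y * p 0 y)) atTop
        (𝓝 ((∑' y, CMEaux.dd y ^ 2 * p s y) - (∑' y, CMEaux.dd y ^ 2 * p 0 y))) :=
      (CMEaux.tendsto_wq hnonneg hs (hsq s hs)).sub (CMEaux.tendsto_wq hnonneg h0' (hsq 0 h0'))
    refine le_of_tendsto hd ?_
    filter_upwards [eventually_ge_atTop 1] with R hR
    exact CMEaux.h_upper hnonneg hnorm hderiv hCME hs R hR
  -- the constant K
  set K : ℝ := (∑' y, CMEaux.dd y ^ 2 * p 0 y) + 2 * t with hKdef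
  have hSig0 : 0 ≤ (∑' y, CMEaux.dd y ^ 2 * p 0 y) :=
    tsum_nonneg fun y => mul_nonneg (by positivity) (hnonneg 0 h0' y)
  have hK0 : 0 ≤ K := by
    rw [hKdef]; have := Set.mem_Ici.mp ht; linarith
  have hKb : ∀ R : ℕ, ∀ s ∈ Set.Icc (0:ℝ) t,
      ((R:ℝ))^2 * (∑' y, if (R:ℝ) ≤ |CMEaux.dd y| then p s y else 0) ≤ K := by
    intro R s hs
    have hs' : s ∈ Set.Ici (0:ℝ) := hs.1
    calc ((R:ℝ))^2 * (∑' y, if (R:ℝ) ≤ |CMEaux.dd y| then p s y else 0)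
        ≤ ∑' y, CMEaux.dd y ^ 2 * p s y := CMEaux.PR_bound hnonneg hnorm hs' (hsq s hs') R
      _ ≤ (∑' y, CMEaux.dd y ^ 2 * p 0 y) + 2 * s := by linarith [hgrow s hs']
      _ ≤ K := by rw [hKdef]; linarith [hs.2]
  -- second moment: exact identity
  have hdT : Tendsto (fun R : ℕ => (∑' y, CMEaux.wq R y * p t y) - (∑' y, CMEaux.wq R y * p 0 y)) atTop
      (𝓝 ((∑' y, CMEaux.dd y ^ 2 * p t y) - (∑' y, CMEaux.dd y ^ 2 * p 0 y))) :=
    (CMEaux.tendsto_wq hnonneg ht (hsq t ht)).sub (CMEaux.tendsto_wq hnonneg h0' (hsq 0 h0'))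
  have hup : (∑' y, CMEaux.dd y ^ 2 * p t y) - (∑' y, CMEaux.dd y ^ 2 * p 0 y) ≤ 2 * t := by
    refine le_of_tendsto hdT ?_
    filter_upwards [eventually_ge_atTop 1] with R hR
    exact CMEaux.h_upper hnonneg hnorm hderiv hCME ht R hR
  have hlow : 2 * t ≤ (∑' y, CMEaux.dd y ^ 2 * p t y) - (∑' y, CMEaux.dd y ^ 2 * p 0 y) := by
    have hlhsT : Tendsto (fun R : ℕ => 2 * t - t * ((2*(R:ℝ)+1) * K / (R:ℝ)^2)) atTop
        (𝓝 (2 * t)) := by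
      have := (CMEaux.rate_tendsto t K (Set.mem_Ici.mp ht) hK0)
      have h2 := tendsto_const_nhds (x := 2*t) (f := atTop (α := ℕ)) |>.sub this
      simpa using h2
    refine le_of_tendsto_of_tendsto hlhsT hdT ?_
    filter_upwards [eventually_ge_atTop 1] with R hR
    exact CMEaux.h_lower hnonneg hnorm hderiv hCME (Set.mem_Ici.mp ht) R hR K hK0 (hKb R)
  -- first moment: conserved
  have hgd : Tendsto (fun R : ℕ => |(∑' y, CMEaux.wl R y * p t y) - (∑' y, CMEaux.wl R y * p 0 y)|) atTop
      (𝓝 (|(∑' y, CMEaux.dd y * p t y) - (∑' y, CMEaux.dd y * p 0 y)|)) :=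
    ((CMEaux.tendsto_wl hnonneg ht (hnorm t ht).summable (hab t ht)).sub
      (CMEaux.tendsto_wl hnonneg h0' (hnorm 0 h0').summable (hab 0 h0'))).abs
  have hgzero : |(∑' y, CMEaux.dd y * p t y) - (∑' y, CMEaux.dd y * p 0 y)| ≤ 0 := by
    refine le_of_tendsto_of_tendsto hgd
      (CMEaux.rate_tendsto' t K (Set.mem_Ici.mp ht) hK0) ?_
    filter_upwards [eventually_ge_atTop 1] with R hR
    exact CMEaux.g_change hnonneg hnorm hderiv hCME (Set.mem_Ici.mp ht) R hR K hK0 (hKb R)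
  have hgeq : (∑' y, CMEaux.dd y * p t y) = (∑' y, CMEaux.dd y * p 0 y) := by
    have := abs_nonneg ((∑' y, CMEaux.dd y * p t y) - (∑' y, CMEaux.dd y * p 0 y))
    have h0 : |(∑' y, CMEaux.dd y * p t y) - (∑' y, CMEaux.dd y * p 0 y)| = 0 := le_antisymm hgzero this
    have := abs_eq_zero.mp h0
    linarith
  constructor
  · rw [← hgts t ht, hgeq, hgts 0 h0', hg0]
  · have : (∑' y, CMEaux.dd y ^ 2 * p t y) - (∑' y, CMEaux.dd y ^ 2 * p 0 y) = 2 * t :=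
      le_antisymm hup hlow
    rw [← hhts t ht] at *
    rw [hhts 0 h0', hh0] at this
    linarith
end

section
/- Consider the stochastic Lotka–Volterra network with n species, propensities α_i for ∅ → X_i (stoichiometric change +e_i), β_i x_i for X_i → 2X_i (change +e_i), δ_i x_i for X_i → ∅ (change −e_i), and for competition X_i + X_j → X_j (change −e_i) the propensity γ_{ij} x_i x_j if i ≠ j and γ_{ii} x_i (x_i − 1) if i = j, where α_i, β_i, δ_i > 0 and γ_{ij} ≥ 0. Let v ∈ ℝⁿ with v_i > 0 for all i, and let Γ(v) be the matrix with entries Γ(v)_{ij} = v_i γ_{ij}. If the symmetric matrix Γ(v) + Γ(v)ᵀ is positive definite, then there exist constants c₁ > 0 and c₂ > 0 such that for every x ∈ ℕⁿ: Σ_i v_i α_i + Σ_i v_i (β_i − δ_i + γ_{ii}) x_i − Σ_{i,j} v_i γ_{ij} x_i x_j ≤ c₁ − c₂ ⟨v, x⟩, where ⟨v, x⟩ = Σ_i v_i x_i. (The left-hand side equals the drift Σ_k λ_k(x)⟨v, ζ_k⟩ of this network; this is condition DD1, from which ergodicity follows.) -/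
open Matrix

lemma quad_lower_aux {n : ℕ} (v : Fin n → ℝ) (γ : Fin n → Fin n → ℝ)
    (hpos : (Matrix.of fun i j => v i * γ i j + v j * γ j i).PosDef) :
    ∃ m > (0:ℝ), ∀ y : Fin n → ℝ,
      m * (∑ i, (y i)^2) ≤ ∑ i, ∑ j, v i * γ i j * y i * y j := by
  set g : (Fin n → ℝ) → ℝ := fun y => ∑ i, ∑ j, v i * γ i j * y i * y j with hg
  have hgpos : ∀ y : Fin n → ℝ, y ≠ 0 → 0 < g y := by
    intro y hy
    have h2 := hpos.dotProduct_mulVec_pos hy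
    simp [dotProduct, Matrix.mulVec] at h2
    have key : (∑ i, y i * ∑ j, (v i * γ i j + v j * γ j i) * y j) = 2 * g y := by
      have hswap : (∑ i, ∑ j, v j * γ j i * y i * y j)
          = ∑ i, ∑ j, v i * γ i j * y i * y j := by
        rw [Finset.sum_comm]
        refine Finset.sum_congr rfl fun i _ => Finset.sum_congr rfl fun j _ => by ring
      calc (∑ i, y i * ∑ j, (v i * γ i j + v j * γ j i) * y j)
          = (∑ i, ∑ j, v i * γ i j * y i * y j)
            + ∑ i, ∑ j, v j * γ j i * y i * y j := by
            rw [← Finset.sum_add_distrib]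
            refine Finset.sum_congr rfl fun i _ => ?_
            rw [Finset.mul_sum, ← Finset.sum_add_distrib]
            refine Finset.sum_congr rfl fun j _ => by ring
        _ = 2 * g y := by rw [hswap, hg]; ring
    have : (0:ℝ) < 2 * g y := by rw [← key]; exact h2
    linarith
  rcases Nat.eq_zero_or_pos n with hn | hn
  · subst hn
    exact ⟨1, one_pos, fun y => by simp⟩
  · haveI : Nonempty (Fin n) := ⟨⟨0, hn⟩⟩
    have hgcont : Continuous g := by fun_prop
    have hne : (Metric.sphere (0 : Fin n → ℝ) 1).Nonempty := by
      exact NormedSpace.sphere_nonempty.mpr zero_le_one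
    obtain ⟨y₀, hy₀S, hmin⟩ :=
      (isCompact_sphere (0 : Fin n → ℝ) 1).exists_isMinOn hne hgcont.continuousOn
    have hy₀norm : ‖y₀‖ = 1 := by simpa using hy₀S
    have hy₀ne : y₀ ≠ 0 := by
      intro h; rw [h, norm_zero] at hy₀norm; norm_num at hy₀norm
    set m := g y₀ with hm
    have hmpos : 0 < m := hgpos y₀ hy₀ne
    have hscale : ∀ (c : ℝ) (y : Fin n → ℝ), g (c • y) = c^2 * g y := by
      intro c y
      rw [hg]
      simp only
      rw [Finset.mul_sum]
      refine Finset.sum_congr rfl fun i _ => ?_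
      rw [Finset.mul_sum]
      refine Finset.sum_congr rfl fun j _ => ?_
      simp only [Pi.smul_apply, smul_eq_mul]; ring
    refine ⟨m / n, div_pos hmpos (by exact_mod_cast hn), fun y => ?_⟩
    rcases eq_or_ne y 0 with rfl | hy
    · simp
    · have hny : 0 < ‖y‖ := norm_pos_iff.mpr hy
      set u : Fin n → ℝ := ‖y‖⁻¹ • y with hu
      have huS : u ∈ Metric.sphere (0 : Fin n → ℝ) 1 := by
        simp [hu, norm_smul, abs_of_pos (inv_pos.mpr hny), inv_mul_cancel₀ hny.ne']
      have hgy : g y = ‖y‖^2 * g u := by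
        rw [hu, hscale, ← mul_assoc]
        rw [show (‖y‖^2 * (‖y‖⁻¹)^2 : ℝ) = 1 by
          field_simp]
        ring
      have hmu : m ≤ g u := hmin huS
      -- ∑ y i ^2 ≤ n * ‖y‖^2
      have hsum : (∑ i, (y i)^2) ≤ n * ‖y‖^2 := by
        calc (∑ i, (y i)^2) ≤ ∑ _i : Fin n, ‖y‖^2 := by
              refine Finset.sum_le_sum fun i _ => ?_
              have := norm_le_pi_norm y i
              have h0 : |y i| ≤ ‖y‖ := by simpa using this
              calc (y i)^2 = |y i|^2 := (sq_abs _).symm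
                _ ≤ ‖y‖^2 := by
                    exact pow_le_pow_left₀ (abs_nonneg _) h0 2
          _ = n * ‖y‖^2 := by simp [Finset.sum_const, nsmul_eq_mul]
      have hnpos : (0:ℝ) < n := by exact_mod_cast hn
      calc m / n * (∑ i, (y i)^2) ≤ m / n * (n * ‖y‖^2) := by
            exact mul_le_mul_of_nonneg_left hsum (le_of_lt (div_pos hmpos hnpos))
        _ = m * ‖y‖^2 := by field_simp
        _ ≤ g u * ‖y‖^2 := by nlinarith [sq_nonneg ‖y‖]
        _ = g y := by rw [hgy]; ring

/-- Drift condition **DD1** for the stochastic Lotka–Volterra network when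
`Γ(v) + Γ(v)ᵀ` is positive definite, where `Γ(v)_{ij} = v_i γ_{ij}`. -/
theorem lotka_volterra_drift_condition_posdef {n : ℕ}
    (α β δ : Fin n → ℝ) (γ : Fin n → Fin n → ℝ)
    (hα : ∀ i, 0 < α i) (hβ : ∀ i, 0 < β i) (hδ : ∀ i, 0 < δ i)
    (hγ : ∀ i j, 0 ≤ γ i j)
    (v : Fin n → ℝ) (hv : ∀ i, 0 < v i)
    (hpos : (Matrix.of fun i j => v i * γ i j + v j * γ j i).PosDef) :
    ∃ c₁ > (0 : ℝ), ∃ c₂ > (0 : ℝ), ∀ x : Fin n → ℕ,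
      (∑ i, v i * α i) + (∑ i, v i * (β i - δ i + γ i i) * (x i : ℝ))
        - (∑ i, ∑ j, v i * γ i j * (x i : ℝ) * (x j : ℝ))
        ≤ c₁ - c₂ * ∑ i, v i * (x i : ℝ) := by
  obtain ⟨m, hm, hquad⟩ := quad_lower_aux v γ hpos
  set W : ℝ := 1 + ∑ i, (v i)^2 with hW
  have hWpos : 0 < W := by positivity
  set μ : ℝ := m / W with hμdef
  have hμ : 0 < μ := div_pos hm hWpos
  set A : ℝ := ∑ i, v i * α i with hA
  have hA0 : 0 ≤ A := Finset.sum_nonneg fun i _ => le_of_lt (mul_pos (hv i) (hα i))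
  set B : ℝ := ∑ i, |β i - δ i + γ i i| with hB
  have hB0 : 0 ≤ B := Finset.sum_nonneg fun i _ => abs_nonneg _
  set K : ℝ := B + 1 with hK
  have hKpos : 0 < K := by positivity
  refine ⟨A + 1 + K^2/(4*μ), by positivity, 1, one_pos, fun x => ?_⟩
  set s : ℝ := ∑ i, v i * (x i : ℝ) with hs
  have hs0 : 0 ≤ s :=
    Finset.sum_nonneg fun i _ => mul_nonneg (hv i).le (Nat.cast_nonneg _)
  -- linear bound
  have hL : (∑ i, v i * (β i - δ i + γ i i) * (x i : ℝ)) ≤ B * s := by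
    rw [hs, Finset.mul_sum]
    refine Finset.sum_le_sum fun i _ => ?_
    have hcoef : β i - δ i + γ i i ≤ B := by
      refine le_trans (le_abs_self _) ?_
      exact Finset.single_le_sum (f := fun j => |β j - δ j + γ j j|) (fun j _ => abs_nonneg _) (Finset.mem_univ i)
    have hvx : (0:ℝ) ≤ v i * (x i : ℝ) :=
      mul_nonneg (hv i).le (Nat.cast_nonneg _)
    calc v i * (β i - δ i + γ i i) * (x i : ℝ)
        = (β i - δ i + γ i i) * (v i * (x i : ℝ)) := by ring
      _ ≤ B * (v i * (x i : ℝ)) := mul_le_mul_of_nonneg_right hcoef hvx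
  -- quadratic bound
  have hCS : s^2 ≤ W * ∑ i, ((x i : ℝ))^2 := by
    have h1 := Finset.sum_mul_sq_le_sq_mul_sq Finset.univ v (fun i => (x i : ℝ))
    have h2 : (0:ℝ) ≤ ∑ i, ((x i : ℝ))^2 :=
      Finset.sum_nonneg fun i _ => sq_nonneg _
    have h3 : (∑ i, (v i)^2) * (∑ i, ((x i : ℝ))^2) ≤ W * ∑ i, ((x i : ℝ))^2 := by
      apply mul_le_mul_of_nonneg_right _ h2
      rw [hW]; linarith
    calc s^2 ≤ (∑ i, (v i)^2) * (∑ i, ((x i : ℝ))^2) := h1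
      _ ≤ _ := h3
  have hQ : μ * s^2 ≤ ∑ i, ∑ j, v i * γ i j * (x i : ℝ) * (x j : ℝ) := by
    have h4 := hquad (fun i => (x i : ℝ))
    have h5 : μ * s^2 ≤ m * ∑ i, ((x i : ℝ))^2 := by
      rw [hμdef]
      calc m / W * s^2 ≤ m / W * (W * ∑ i, ((x i : ℝ))^2) :=
            mul_le_mul_of_nonneg_left hCS (le_of_lt (div_pos hm hWpos))
        _ = m * ∑ i, ((x i : ℝ))^2 := by field_simp
    exact le_trans h5 h4
  have hdiv : 4 * μ * (K^2/(4*μ)) = K^2 := by field_simp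
  have hKey : K*s - μ*s^2 ≤ K^2/(4*μ) := by
    rw [le_div_iff₀ (by positivity : (0:ℝ) < 4*μ)]
    nlinarith [sq_nonneg (2*μ*s - K)]
  linarith [hL, hQ, hKey, hμ, hs0]
end

section
/- Consider the stochastic Lotka–Volterra network with n species, propensities α_i for ∅ → X_i (stoichiometric change +e_i), β_i x_i for X_i → 2X_i (change +e_i), δ_i x_i for X_i → ∅ (change −e_i), and for competition X_i + X_j → X_j (change −e_i) the propensity γ_{ij} x_i x_j if i ≠ j and γ_{ii} x_i (x_i − 1) if i = j, where α_i, β_i, δ_i > 0 and γ_{ij} ≥ 0. Let v ∈ ℝⁿ with v_i > 0 for all i, and let Γ(v) be the matrix with entries Γ(v)_{ij} = v_i γ_{ij}. If Γ(v) + Γ(v)ᵀ is copositive (i.e., xᵀ(Γ(v) + Γ(v)ᵀ)x ≥ 0 for all x ∈ ℝⁿ with x_i ≥ 0 for all i) and β_i − δ_i < 0 for every i, then there exist constants c₁ > 0 and c₂ > 0 such that for every x ∈ ℕⁿ: Σ_i v_i α_i + Σ_i v_i (β_i − δ_i + γ_{ii}) x_i − Σ_{i,j} v_i γ_{ij} x_i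 x_j ≤ c₁ − c₂ ⟨v, x⟩, where ⟨v, x⟩ = Σ_i v_i x_i. -/
open Matrix

/-- Drift condition **DD1** for the stochastic Lotka–Volterra network when
`Γ(v) + Γ(v)ᵀ` is copositive and `β_i < δ_i` for all `i`,
where `Γ(v)_{ij} = v_i γ_{ij}`. -/
theorem lotka_volterra_drift_condition_copositive {n : ℕ}
    (α β δ : Fin n → ℝ) (γ : Fin n → Fin n → ℝ)
    (hα : ∀ i, 0 < α i) (hβ : ∀ i, 0 < β i) (hδ : ∀ i, 0 < δ i)
    (hγ : ∀ i j, 0 ≤ γ i j)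
    (v : Fin n → ℝ) (hv : ∀ i, 0 < v i)
    (hcopos : ∀ x : Fin n → ℝ, (∀ i, 0 ≤ x i) →
      0 ≤ x ⬝ᵥ (Matrix.of fun i j => v i * γ i j + v j * γ j i).mulVec x)
    (hβδ : ∀ i, β i - δ i < 0) :
    ∃ c₁ > (0 : ℝ), ∃ c₂ > (0 : ℝ), ∀ x : Fin n → ℕ,
      (∑ i, v i * α i) + (∑ i, v i * (β i - δ i + γ i i) * (x i : ℝ))
        - (∑ i, ∑ j, v i * γ i j * (x i : ℝ) * (x j : ℝ))
        ≤ c₁ - c₂ * ∑ i, v i * (x i : ℝ) := by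
  rcases Nat.eq_zero_or_pos n with hn | hn
  · subst hn
    exact ⟨1, one_pos, 1, one_pos, fun x => by simp⟩
  have hne : (Finset.univ : Finset (Fin n)).Nonempty :=
    ⟨⟨0, hn⟩, Finset.mem_univ _⟩
  set c₂ := Finset.univ.inf' hne (fun i => δ i - β i) with hc2
  have hc₂pos : 0 < c₂ := by
    rw [hc2, Finset.lt_inf'_iff]
    exact fun i _ => by linarith [hβδ i]
  have hαnn : 0 ≤ ∑ i, v i * α i :=
    Finset.sum_nonneg fun i _ => mul_nonneg (hv i).le (hα i).le
  refine ⟨(∑ i, v i * α i) + 1, by linarith, c₂, hc₂pos, fun x => ?_⟩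
  have hxnn : ∀ i : Fin n, (0:ℝ) ≤ (x i : ℝ) := fun i => Nat.cast_nonneg _
  have h1 : ∀ i : Fin n, v i * γ i i * (x i : ℝ) ≤
      ∑ j, v i * γ i j * (x i : ℝ) * (x j : ℝ) := by
    intro i
    have hstep : v i * γ i i * (x i : ℝ) ≤ v i * γ i i * (x i : ℝ) * (x i : ℝ) := by
      rcases Nat.eq_zero_or_pos (x i) with h0 | h0
      · simp [h0]
      · have h1' : (1:ℝ) ≤ (x i : ℝ) := by exact_mod_cast h0
        nlinarith [mul_nonneg (mul_nonneg (mul_nonneg (hv i).le (hγ i i)) (hxnn i)) (sub_nonneg.mpr h1')]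
    refine hstep.trans ?_
    exact Finset.single_le_sum (f := fun j => v i * γ i j * (x i : ℝ) * (x j : ℝ))
      (fun j _ => mul_nonneg (mul_nonneg (mul_nonneg (hv i).le (hγ i j)) (hxnn i)) (hxnn j))
      (Finset.mem_univ i)
  have hinf : ∀ i : Fin n, c₂ ≤ δ i - β i := fun i =>
    Finset.inf'_le _ (Finset.mem_univ i)
  have h4 : ∑ i, (v i * (β i - δ i + γ i i) * (x i : ℝ)
        - ∑ j, v i * γ i j * (x i : ℝ) * (x j : ℝ))
      ≤ ∑ i, (-c₂) * (v i * (x i : ℝ)) := by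
    refine Finset.sum_le_sum fun i _ => ?_
    have hvx : (0:ℝ) ≤ v i * (x i : ℝ) := mul_nonneg (hv i).le (hxnn i)
    nlinarith [h1 i, hinf i, hvx]
  rw [Finset.sum_sub_distrib, ← Finset.mul_sum] at h4
  linarith
end

section
/- Consider the stochastic feedback loop with dimerization, with state x = (x₁, x₂, x₃) ∈ ℕ³ (mRNA, protein, dimer) and reactions ∅ → X₁ (propensity f(x₃), change (1,0,0)), X₁ → X₁ + X₂ (propensity k₂ x₁, change (0,1,0)), X₂ + X₂ → X₃ (propensity k₂₃ x₂(x₂−1), change (0,−2,1)), X₃ → X₂ + X₂ (propensity k₃₂ x₃, change (0,2,−1)), and X_i → ∅ (propensity γ_i x_i, change −e_i) for i = 1,2,3, where k₂, k₂₃, k₃₂, γ₁, γ₂, γ₃ are arbitrary positive constants and f : ℕ → ℝ is an arbitrary bounded nonnegative function. Then there exist a vector v ∈ ℝ³ with v_i > 0 for all i and v₃ = 2 v₂ (so that ⟨v, ζ⟩ = 0 for the dimerization and dissociation reactions) and constants c₁ > 0, c₂ > 0 such that for all x ∈ ℕ³: v₁ f(x₃) + v₂ k₂ x₁ − γ₁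 v₁ x₁ − γ₂ v₂ x₂ − γ₃ v₃ x₃ ≤ c₁ − c₂ ⟨v, x⟩. (This is condition DD1 for the feedback loop, from which its ergodicity for any positive rates and any bounded nonnegative feedback follows.) -/
/-- Drift condition **DD1** for the stochastic feedback loop with dimerization:
for any positive rates and any bounded nonnegative feedback function `f`, there is a
positive vector `v` with `v₃ = 2 v₂` and constants `c₁, c₂ > 0` bounding the drift. -/
theorem feedback_loop_drift_condition (k₂ k₂₃ k₃₂ γ₁ γ₂ γ₃ : ℝ)
    (hk₂ : 0 < k₂) (hk₂₃ : 0 < k₂₃) (hk₃₂ : 0 < k₃₂)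
    (hγ₁ : 0 < γ₁) (hγ₂ : 0 < γ₂) (hγ₃ : 0 < γ₃)
    (f : ℕ → ℝ) (hf_nonneg : ∀ x, 0 ≤ f x) (hf_bdd : ∃ B : ℝ, ∀ x, f x ≤ B) :
    ∃ v₁ v₂ v₃ : ℝ, 0 < v₁ ∧ 0 < v₂ ∧ 0 < v₃ ∧ v₃ = 2 * v₂ ∧
      ∃ c₁ > (0 : ℝ), ∃ c₂ > (0 : ℝ), ∀ x₁ x₂ x₃ : ℕ,
        v₁ * f x₃ + v₂ * k₂ * (x₁ : ℝ) - γ₁ * v₁ * (x₁ : ℝ)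
            - γ₂ * v₂ * (x₂ : ℝ) - γ₃ * v₃ * (x₃ : ℝ)
          ≤ c₁ - c₂ * (v₁ * (x₁ : ℝ) + v₂ * (x₂ : ℝ) + v₃ * (x₃ : ℝ)) := by
  obtain ⟨B, hB⟩ := hf_bdd
  set v₁ : ℝ := 2 * k₂ / γ₁ with hv₁
  have hv₁pos : 0 < v₁ := by positivity
  refine ⟨v₁, 1, 2, hv₁pos, one_pos, two_pos, by norm_num, v₁ * max B 1, by positivity,
    min (γ₁ / 2) (min γ₂ γ₃), by positivity, ?_⟩
  intro x₁ x₂ x₃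
  have hc₂₁ : min (γ₁ / 2) (min γ₂ γ₃) ≤ γ₁ / 2 := min_le_left _ _
  have hc₂₂ : min (γ₁ / 2) (min γ₂ γ₃) ≤ γ₂ := le_trans (min_le_right _ _) (min_le_left _ _)
  have hc₂₃ : min (γ₁ / 2) (min γ₂ γ₃) ≤ γ₃ := le_trans (min_le_right _ _) (min_le_right _ _)
  have hf : f x₃ ≤ max B 1 := le_trans (hB x₃) (le_max_left _ _)
  have h1 : (0:ℝ) ≤ (x₁ : ℝ) := Nat.cast_nonneg _
  have h2 : (0:ℝ) ≤ (x₂ : ℝ) := Nat.cast_nonneg _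
  have h3 : (0:ℝ) ≤ (x₃ : ℝ) := Nat.cast_nonneg _
  have hk₂eq : k₂ = γ₁ / 2 * v₁ := by field_simp [hv₁]; rw [hv₁]; field_simp
  nlinarith [mul_le_mul_of_nonneg_right hc₂₁ (mul_nonneg hv₁pos.le h1),
    mul_le_mul_of_nonneg_right hc₂₂ h2,
    mul_le_mul_of_nonneg_right hc₂₃ h3,
    mul_le_mul_of_nonneg_left hf hv₁pos.le]
end

section
/- Consider the stochastic switch with state x = (m₁, p₁, m₂, p₂) ∈ ℕ⁴ (mRNA and protein of genes 1 and 2) and reactions ∅ → M₁ (propensity f₁(p₂), change +e₁), M₁ → M₁ + P₁ (propensity k₁ m₁, change +e₂), ∅ → M₂ (propensity f₂(p₁), change +e₃), M₂ → M₂ + P₂ (propensity k₂ m₂, change +e₄), and degradation of each species X_i with propensity γ_i x_i (change −e_i), where k₁, k₂ and all γ_i are arbitrary positive constants and f₁, f₂ : ℕ → ℝ are arbitrary bounded nonnegative functions. Then there exist a vector v ∈ ℝ⁴ with v_i > 0 for all i and constants c₁ > 0, c₂ > 0 such that for all x ∈ ℕ⁴: v₁ f₁(p₂) + v₂ k₁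 m₁ + v₃ f₂(p₁) + v₄ k₂ m₂ − Σ_{i=1}^{4} γ_i v_i x_i ≤ c₁ − c₂ ⟨v, x⟩. (This is condition DD1 for the stochastic switch, from which its ergodicity for any positive rates and any bounded nonnegative functions f₁, f₂ follows.) -/
/-- Drift condition **DD1** for the stochastic switch: for any positive rates and
any bounded nonnegative functions `f₁, f₂`, there are a positive vector `v` and
constants `c₁, c₂ > 0` bounding the drift. The state is `x = (m₁, p₁, m₂, p₂)`. -/
theorem stochastic_switch_drift_condition (k₁ k₂ γ₁ γ₂ γ₃ γ₄ : ℝ)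
    (hk₁ : 0 < k₁) (hk₂ : 0 < k₂)
    (hγ₁ : 0 < γ₁) (hγ₂ : 0 < γ₂) (hγ₃ : 0 < γ₃) (hγ₄ : 0 < γ₄)
    (f₁ f₂ : ℕ → ℝ)
    (hf₁_nonneg : ∀ x, 0 ≤ f₁ x) (hf₁_bdd : ∃ B : ℝ, ∀ x, f₁ x ≤ B)
    (hf₂_nonneg : ∀ x, 0 ≤ f₂ x) (hf₂_bdd : ∃ B : ℝ, ∀ x, f₂ x ≤ B) :
    ∃ v₁ v₂ v₃ v₄ : ℝ, 0 < v₁ ∧ 0 < v₂ ∧ 0 < v₃ ∧ 0 < v₄ ∧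
      ∃ c₁ > (0 : ℝ), ∃ c₂ > (0 : ℝ), ∀ m₁ p₁ m₂ p₂ : ℕ,
        v₁ * f₁ p₂ + v₂ * k₁ * (m₁ : ℝ) + v₃ * f₂ p₁ + v₄ * k₂ * (m₂ : ℝ)
            - (γ₁ * v₁ * (m₁ : ℝ) + γ₂ * v₂ * (p₁ : ℝ)
               + γ₃ * v₃ * (m₂ : ℝ) + γ₄ * v₄ * (p₂ : ℝ))
          ≤ c₁ - c₂ * (v₁ * (m₁ : ℝ) + v₂ * (p₁ : ℝ)
               + v₃ * (m₂ : ℝ) + v₄ * (p₂ : ℝ)) := by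
  obtain ⟨B₁, hB₁⟩ := hf₁_bdd
  obtain ⟨B₂, hB₂⟩ := hf₂_bdd
  have hB₁0 : 0 ≤ B₁ := le_trans (hf₁_nonneg 0) (hB₁ 0)
  have hB₂0 : 0 ≤ B₂ := le_trans (hf₂_nonneg 0) (hB₂ 0)
  refine ⟨1, γ₁ / (2 * k₁), 1, γ₃ / (2 * k₂), one_pos,
    div_pos hγ₁ (by linarith), one_pos, div_pos hγ₃ (by linarith),
    B₁ + B₂ + 1, by linarith, min (min (γ₁ / 2) γ₂) (min (γ₃ / 2) γ₄),
    lt_min (lt_min (by linarith) hγ₂) (lt_min (by linarith) hγ₄), ?_⟩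
  intro m₁ p₁ m₂ p₂
  set c₂ := min (min (γ₁ / 2) γ₂) (min (γ₃ / 2) γ₄) with hc₂
  have h1 : c₂ ≤ γ₁ / 2 := le_trans (min_le_left _ _) (min_le_left _ _)
  have h2 : c₂ ≤ γ₂ := le_trans (min_le_left _ _) (min_le_right _ _)
  have h3 : c₂ ≤ γ₃ / 2 := le_trans (min_le_right _ _) (min_le_left _ _)
  have h4 : c₂ ≤ γ₄ := le_trans (min_le_right _ _) (min_le_right _ _)
  have hv₂ : γ₁ / (2 * k₁) * k₁ = γ₁ / 2 := by field_simp
  have hv₄ : γ₃ / (2 * k₂) * k₂ = γ₃ / 2 := by field_simp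
  have hm₁ : (0:ℝ) ≤ m₁ := Nat.cast_nonneg _
  have hp₁ : (0:ℝ) ≤ p₁ := Nat.cast_nonneg _
  have hm₂ : (0:ℝ) ≤ m₂ := Nat.cast_nonneg _
  have hp₂ : (0:ℝ) ≤ p₂ := Nat.cast_nonneg _
  have hv2pos : 0 < γ₁ / (2 * k₁) := div_pos hγ₁ (by linarith)
  have hv4pos : 0 < γ₃ / (2 * k₂) := div_pos hγ₃ (by linarith)
  have e1 : c₂ * (1 * (m₁:ℝ)) ≤ γ₁ / 2 * m₁ := by
    rw [one_mul]; exact mul_le_mul_of_nonneg_right h1 hm₁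
  have e2 : c₂ * (γ₁ / (2 * k₁) * (p₁:ℝ)) ≤ γ₂ * (γ₁ / (2 * k₁) * p₁) :=
    mul_le_mul_of_nonneg_right h2 (by positivity)
  have e3 : c₂ * (1 * (m₂:ℝ)) ≤ γ₃ / 2 * m₂ := by
    rw [one_mul]; exact mul_le_mul_of_nonneg_right h3 hm₂
  have e4 : c₂ * (γ₃ / (2 * k₂) * (p₂:ℝ)) ≤ γ₄ * (γ₃ / (2 * k₂) * p₂) :=
    mul_le_mul_of_nonneg_right h4 (by positivity)
  have hf1 := hB₁ p₂
  have hf2 := hB₂ p₁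
  have hk1m : γ₁ / (2 * k₁) * k₁ * (m₁:ℝ) = γ₁ / 2 * m₁ := by rw [hv₂]
  have hk2m : γ₃ / (2 * k₂) * k₂ * (m₂:ℝ) = γ₃ / 2 * m₂ := by rw [hv₄]
  nlinarith [e1, e2, e3, e4, hk1m, hk2m]
end

section
/- Consider the stochastic N-gene repressilator with state x = (m₁, …, m_N, p₁, …, p_N) ∈ ℕ^{2N} (mRNA m_i and protein p_i of gene i) and reactions ∅ → M_i with propensity f_i(p_{i−1}) (indices taken cyclically, so p₀ = p_N; change +e_i in the mRNA coordinate), M_i → M_i + P_i with propensity k_i m_i (change +1 in the p_i coordinate), M_i → ∅ with propensity γ_i m_i, and P_i → ∅ with propensity δ_i p_i, where f_i(x) = α_i + β_i/(1 + x^n) with α_i, β_i > 0 and n > 0. Then for any positive values of all rate parameters k_i, γ_i, δ_i, α_i, β_i and n, there exist a vector v ∈ ℝ^{2N} with all components positive and constants c₁ > 0, c₂ > 0 such that for all x ∈ ℕ^{2N}: Σ_{i=1}^{N} v_i^{(m)} f_i(p_{i−1}) + Σ_{i=1}^{N} v_i^{(p)} k_i m_i − Σ_{i=1}^{N} γ_i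 v_i^{(m)} m_i − Σ_{i=1}^{N} δ_i v_i^{(p)} p_i ≤ c₁ − c₂ ⟨v, x⟩, where v_i^{(m)} and v_i^{(p)} denote the components of v corresponding to m_i and p_i. (This is condition DD1 for the repressilator, from which its ergodicity follows.) -/
/-- Drift condition **DD1** for the stochastic `N`-gene repressilator, where
`f_i(x) = α_i + β_i/(1 + x^n)` with Hill-type repression and indices taken
cyclically (`p₀ = p_N`): for any positive rate parameters there exist a positive
vector `v = (v^(m), v^(p))` and constants `c₁, c₂ > 0` bounding the drift. -/
theorem repressilator_drift_condition (N : ℕ) [NeZero N]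
    (k γ δ α β : Fin N → ℝ) (n : ℝ)
    (hk : ∀ i, 0 < k i) (hγ : ∀ i, 0 < γ i) (hδ : ∀ i, 0 < δ i)
    (hα : ∀ i, 0 < α i) (hβ : ∀ i, 0 < β i) (hn : 0 < n) :
    ∃ vm vp : Fin N → ℝ, (∀ i, 0 < vm i) ∧ (∀ i, 0 < vp i) ∧
      ∃ c₁ > (0 : ℝ), ∃ c₂ > (0 : ℝ), ∀ m p : Fin N → ℕ,
        (∑ i, vm i * (α i + β i / (1 + ((p (i - 1) : ℕ) : ℝ) ^ n)))
            + (∑ i, vp i * k i * ((m i : ℕ) : ℝ))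
            - (∑ i, γ i * vm i * ((m i : ℕ) : ℝ))
            - (∑ i, δ i * vp i * ((p i : ℕ) : ℝ))
          ≤ c₁ - c₂ * ((∑ i, vm i * ((m i : ℕ) : ℝ))
                        + (∑ i, vp i * ((p i : ℕ) : ℝ))) := by
  have hN : (Finset.univ : Finset (Fin N)).Nonempty := Finset.univ_nonempty
  set vm : Fin N → ℝ := fun i => 2 * k i / γ i with hvm
  have hvmpos : ∀ i, 0 < vm i := fun i => div_pos (by linarith [hk i]) (hγ i)
  refine ⟨vm, fun _ => 1, hvmpos, fun _ => one_pos, ?_⟩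
  set c₂ : ℝ := Finset.univ.inf' hN (fun i => min (γ i / 2) (δ i)) with hc₂
  have hc₂pos : 0 < c₂ := by
    rw [hc₂, Finset.lt_inf'_iff]
    exact fun i _ => lt_min (by linarith [hγ i]) (hδ i)
  have hc₂le : ∀ i, c₂ ≤ min (γ i / 2) (δ i) := fun i =>
    Finset.inf'_le _ (Finset.mem_univ i)
  refine ⟨∑ i, vm i * (α i + β i), ?_, c₂, hc₂pos, ?_⟩
  · exact Finset.sum_pos (fun i _ => mul_pos (hvmpos i)
      (by linarith [hα i, hβ i])) hN
  intro m p
  have key : ∀ i : Fin N,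
      vm i * (α i + β i / (1 + ((p (i - 1) : ℕ) : ℝ) ^ n))
        + 1 * k i * ((m i : ℕ) : ℝ) - γ i * vm i * ((m i : ℕ) : ℝ)
        - δ i * 1 * ((p i : ℕ) : ℝ)
      ≤ vm i * (α i + β i)
        - c₂ * (vm i * ((m i : ℕ) : ℝ) + 1 * ((p i : ℕ) : ℝ)) := by
    intro i
    have hq : (0:ℝ) ≤ ((p (i - 1) : ℕ) : ℝ) ^ n :=
      Real.rpow_nonneg (Nat.cast_nonneg _) n
    have hdiv : β i / (1 + ((p (i - 1) : ℕ) : ℝ) ^ n) ≤ β i :=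
      div_le_self (le_of_lt (hβ i)) (by linarith)
    have hγvm : γ i * vm i = 2 * k i := by
      show γ i * (2 * k i / γ i) = 2 * k i
      rw [mul_comm, div_mul_cancel₀ _ (ne_of_gt (hγ i))]
    have h1 : c₂ * vm i ≤ k i := by
      show c₂ * (2 * k i / γ i) ≤ k i
      calc c₂ * (2 * k i / γ i) ≤ (γ i / 2) * (2 * k i / γ i) := by
            exact mul_le_mul_of_nonneg_right ((hc₂le i).trans (min_le_left _ _))
              (le_of_lt (hvmpos i))
        _ = k i := by
            field_simp [ne_of_gt (hγ i)]
    have h2 : c₂ ≤ δ i := (hc₂le i).trans (min_le_right _ _)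
    have hm : (0:ℝ) ≤ ((m i : ℕ) : ℝ) := Nat.cast_nonneg _
    have hp : (0:ℝ) ≤ ((p i : ℕ) : ℝ) := Nat.cast_nonneg _
    nlinarith [mul_le_mul_of_nonneg_left hdiv (le_of_lt (hvmpos i)),
      mul_le_mul_of_nonneg_right h1 hm, mul_le_mul_of_nonneg_right h2 hp]
  calc (∑ i, vm i * (α i + β i / (1 + ((p (i - 1) : ℕ) : ℝ) ^ n)))
            + (∑ i, 1 * k i * ((m i : ℕ) : ℝ))
            - (∑ i, γ i * vm i * ((m i : ℕ) : ℝ))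
            - (∑ i, δ i * 1 * ((p i : ℕ) : ℝ))
      = ∑ i, (vm i * (α i + β i / (1 + ((p (i - 1) : ℕ) : ℝ) ^ n))
          + 1 * k i * ((m i : ℕ) : ℝ) - γ i * vm i * ((m i : ℕ) : ℝ)
          - δ i * 1 * ((p i : ℕ) : ℝ)) := by
        rw [← Finset.sum_add_distrib, ← Finset.sum_sub_distrib,
          ← Finset.sum_sub_distrib]
    _ ≤ ∑ i, (vm i * (α i + β i)
          - c₂ * (vm i * ((m i : ℕ) : ℝ) + 1 * ((p i : ℕ) : ℝ))) :=
        Finset.sum_le_sum (fun i _ => key i)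
    _ = (∑ i, vm i * (α i + β i))
          - c₂ * ((∑ i, vm i * ((m i : ℕ) : ℝ))
            + (∑ i, 1 * ((p i : ℕ) : ℝ))) := by
        rw [Finset.sum_sub_distrib, ← Finset.mul_sum, Finset.sum_add_distrib]
end

section
/- Consider the stochastic oscillatory p53 model with state x = (x₁, x₂, x₃) ∈ ℕ³ (p53, precursor of Mdm2, Mdm2) and reactions ∅ → X₁ (propensity k₁, change +e₁), X₁ → ∅ (propensity k₂ x₁, change −e₁), X₁ → ∅ (propensity x₁ · k₃ x₃/(x₁ + k₇), change −e₁), X₃ → ∅ (propensity k₆ x₃, change −e₃), X₂ → X₃ (propensity k₅ x₂, change −e₂ + e₃), X₁ → X₁ + X₂ (propensity k₄ x₁, change +e₂), where k₁, …, k₇ are arbitrary positive constants. Then there exist a vector v ∈ ℝ³ with v_i > 0 for all i and constants c₁ > 0, c₂ > 0 such that for all x ∈ ℕ³: k₁ v₁ − k₂ v₁ x₁ − v₁ k₃ x₁ x₃/(x₁ + k₇) + k₄ v₂ x₁ − k₅ v₂ x₂ + k₅ v₃ x₂ − k₆ v₃ x₃ ≤ c₁ − c₂ ⟨v, x⟩.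 (This is condition DD1 for the p53 model, from which its ergodicity for any positive values of the rate parameters follows.) -/
/-- Drift condition **DD1** for the stochastic oscillatory p53 model: for any
positive rate parameters `k₁, …, k₇` there exist a positive vector `v` and
constants `c₁, c₂ > 0` bounding the drift. The state is `x = (x₁, x₂, x₃)`
(p53, precursor of Mdm2, Mdm2). -/
theorem p53_drift_condition (k₁ k₂ k₃ k₄ k₅ k₆ k₇ : ℝ)
    (hk₁ : 0 < k₁) (hk₂ : 0 < k₂) (hk₃ : 0 < k₃) (hk₄ : 0 < k₄)
    (hk₅ : 0 < k₅) (hk₆ : 0 < k₆) (hk₇ : 0 < k₇) :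
    ∃ v₁ v₂ v₃ : ℝ, 0 < v₁ ∧ 0 < v₂ ∧ 0 < v₃ ∧
      ∃ c₁ > (0 : ℝ), ∃ c₂ > (0 : ℝ), ∀ x₁ x₂ x₃ : ℕ,
        k₁ * v₁ - k₂ * v₁ * (x₁ : ℝ)
            - v₁ * k₃ * (x₁ : ℝ) * (x₃ : ℝ) / ((x₁ : ℝ) + k₇)
            + k₄ * v₂ * (x₁ : ℝ) - k₅ * v₂ * (x₂ : ℝ)
            + k₅ * v₃ * (x₂ : ℝ) - k₆ * v₃ * (x₃ : ℝ)
          ≤ c₁ - c₂ * (v₁ * (x₁ : ℝ) + v₂ * (x₂ : ℝ) + v₃ * (x₃ : ℝ)) := by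
  set v₂ : ℝ := k₂ / (2 * k₄) with hv₂def
  have hv₂ : 0 < v₂ := by positivity
  set c₂ : ℝ := min (min (k₂ / 2) (k₅ / 2)) k₆ with hc₂def
  have hc₂ : 0 < c₂ := by
    simp only [hc₂def, lt_min_iff]
    refine ⟨⟨by linarith, by linarith⟩, hk₆⟩
  refine ⟨1, v₂, v₂ / 2, one_pos, hv₂, by linarith, k₁, hk₁, c₂, hc₂, ?_⟩
  intro x₁ x₂ x₃
  have h1 : (0 : ℝ) ≤ (x₁ : ℝ) := Nat.cast_nonneg _
  have h2 : (0 : ℝ) ≤ (x₂ : ℝ) := Nat.cast_nonneg _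
  have h3 : (0 : ℝ) ≤ (x₃ : ℝ) := Nat.cast_nonneg _
  have hD : 0 ≤ 1 * k₃ * (x₁ : ℝ) * (x₃ : ℝ) / ((x₁ : ℝ) + k₇) := by positivity
  have hA : c₂ ≤ k₂ / 2 := le_trans (min_le_left _ _) (min_le_left _ _)
  have hB : c₂ ≤ k₅ / 2 := le_trans (min_le_left _ _) (min_le_right _ _)
  have hC : c₂ ≤ k₆ := min_le_right _ _
  have hk₄v : k₄ * v₂ = k₂ / 2 := by
    field_simp [hv₂def]
    rw [hv₂def]; field_simp [hk₄.ne']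
  nlinarith [mul_le_mul_of_nonneg_right hA h1, mul_le_mul_of_nonneg_right hB h2,
    mul_le_mul_of_nonneg_right hC h3, mul_nonneg hv₂.le h2, mul_nonneg hv₂.le h3,
    mul_le_mul_of_nonneg_right (mul_le_mul_of_nonneg_left hB hv₂.le) h2,
    mul_le_mul_of_nonneg_right (mul_le_mul_of_nonneg_left hC hv₂.le) h3]
end
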